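/- arXiv:2104.00552 — 5 statements merged into one kernel-verified Lean document; each statement's English description precedes it below -/
import Mathlib

section
/- Let G be a finite simple graph with a dominating vertex v (a vertex adjacent to all other vertices of G), and let G − v be the graph obtained from G by deleting v and all its incident edges. Then A(G) = 1 + A(G − v). -/
open Finset SimpleGraph

/-- A coloring partition of `G`: a partition of the vertex set into (nonempty)
independent (stable) sets. -/
def IsStablePartition {V : Type*} [Fintype V] [DecidableEq V] (G : SimpleGraph V)
    (P : Finpartition (univ : Finset V)) : Prop :=
  ∀ t ∈ P.parts, ∀ u ∈ t, ∀ v ∈ t, ¬ G.Adj u v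

open scoped Classical in
/-- `colB G` : the number of coloring partitions of `G`. -/
noncomputable def colB {V : Type*} [Fintype V] [DecidableEq V] (G : SimpleGraph V) : ℕ :=
  (univ.filter (IsStablePartition G)).card

open scoped Classical in
/-- `colT G` : the total number of blocks summed over all coloring partitions of `G`. -/
noncomputable def colT {V : Type*} [Fintype V] [DecidableEq V] (G : SimpleGraph V) : ℕ :=
  ∑ P ∈ univ.filter (IsStablePartition G), P.parts.card

/-- `colA G = colT G / colB G` : the average number of blocks. -/
noncomputable def colA {V : Type*} [Fintype V] [DecidableEq V] (G : SimpleGraph V) : ℚ :=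
  (colT G : ℚ) / (colB G : ℚ)

/-- The `n`-th Bell number: the number of partitions of an `n`-element set. -/
noncomputable def bell (n : ℕ) : ℕ :=
  Fintype.card (Finpartition (univ : Finset (Fin n)))

/-- The disjoint union of `G` with `p` isolated vertices (`G ∪ pK₁`). -/
def unionIsolated {V : Type*} (G : SimpleGraph V) (p : ℕ) : SimpleGraph (V ⊕ Fin p) :=
  SimpleGraph.fromRel (fun x y => ∃ a b, x = Sum.inl a ∧ y = Sum.inl b ∧ G.Adj a b)

/-- `Hgraph n r` : the graph obtained from the disjoint union of the cycle `C_n` and the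
path `P_r` by adding an edge between one endpoint of the path (vertex `0`) and one vertex
of the cycle (vertex `0`). -/
def Hgraph (n r : ℕ) : SimpleGraph (Fin n ⊕ Fin r) :=
  SimpleGraph.fromRel (fun x y =>
    (∃ a b, x = Sum.inl a ∧ y = Sum.inl b ∧ (cycleGraph n).Adj a b) ∨
    (∃ a b, x = Sum.inr a ∧ y = Sum.inr b ∧ (pathGraph r).Adj a b) ∨
    (∃ (a : Fin n) (b : Fin r), a.val = 0 ∧ b.val = 0 ∧ x = Sum.inl a ∧ y = Sum.inr b))


section Aux

set_option linter.unusedSectionVars false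
variable {V : Type*} [Fintype V] [DecidableEq V]

open scoped Classical

noncomputable def upF (v : V) (t : Finset ↥{w : V | w ≠ v}) : Finset V :=
  t.map (Function.Embedding.subtype _)

noncomputable def downF (v : V) (t : Finset V) : Finset ↥{w : V | w ≠ v} :=
  t.subtype _

lemma mem_upF {v : V} {t : Finset ↥{w : V | w ≠ v}} {x : ↥{w : V | w ≠ v}} :
    (x : V) ∈ upF v t ↔ x ∈ t := by
  simp only [upF, Finset.mem_map, Function.Embedding.coe_subtype]
  exact ⟨fun ⟨y, hy, h⟩ => by rwa [← Subtype.coe_injective h], fun h => ⟨x, h, rfl⟩⟩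

lemma v_not_mem_upF {v : V} {t : Finset ↥{w : V | w ≠ v}} : v ∉ upF v t := by
  simp only [upF, Finset.mem_map, Function.Embedding.coe_subtype]
  rintro ⟨⟨x, hx⟩, -, h⟩
  exact hx h

lemma mem_downF {v : V} {t : Finset V} {x : ↥{w : V | w ≠ v}} :
    x ∈ downF v t ↔ (x : V) ∈ t := Finset.mem_subtype

lemma downF_upF (v : V) (t : Finset ↥{w : V | w ≠ v}) : downF v (upF v t) = t := by
  ext x; rw [mem_downF, mem_upF]

lemma upF_downF {v : V} {t : Finset V} (hv : v ∉ t) : upF v (downF v t) = t := by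
  ext x
  by_cases hx : x = v
  · subst hx
    simp only [v_not_mem_upF, hv]
  · have : x = ((⟨x, hx⟩ : ↥{w : V | w ≠ v}) : V) := rfl
    rw [this, mem_upF, mem_downF]

end Aux

section Part

variable {V : Type*} [Fintype V] [DecidableEq V]

open scoped Classical

noncomputable def liftPart (v : V) (Q : Finpartition (univ : Finset ↥{w : V | w ≠ v})) :
    Finpartition (univ : Finset V) where
  parts := insert {v} (Q.parts.image (upF v))
  supIndep := by
    rw [Finset.supIndep_iff_pairwiseDisjoint]
    intro s hs t ht hst
    simp only [coe_insert, Set.mem_insert_iff, mem_coe, mem_image] at hs ht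
    obtain rfl | ⟨a, ha, rfl⟩ := hs
    · obtain rfl | ⟨b, hb, rfl⟩ := ht
      · exact absurd rfl hst
      · exact Finset.disjoint_singleton_left.2 v_not_mem_upF
    · obtain rfl | ⟨b, hb, rfl⟩ := ht
      · exact Finset.disjoint_singleton_right.2 v_not_mem_upF
      · have hab : a ≠ b := fun h => hst (by rw [h])
        have hd : Disjoint a b := Q.supIndep.pairwiseDisjoint ha hb hab
        exact (Finset.disjoint_map (Function.Embedding.subtype _)).2 hd
  sup_parts := by
    apply Finset.eq_univ_iff_forall.2
    intro x
    rw [Finset.sup_insert]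
    by_cases hx : x = v
    · subst hx; simp
    · obtain ⟨t, ht, hxt⟩ := Q.exists_mem (Finset.mem_univ (⟨x, hx⟩ : ↥{w : V | w ≠ v}))
      have : x ∈ upF v t := mem_upF.2 hxt
      refine Finset.mem_union_right _ ?_
      exact Finset.mem_sup.2 ⟨upF v t, Finset.mem_image_of_mem _ ht, this⟩
  bot_notMem := by
    simp only [Finset.bot_eq_empty, Finset.mem_insert, Finset.mem_image]
    rintro (h | ⟨t, ht, h⟩)
    · exact Finset.singleton_ne_empty v h.symm
    · rw [upF, Finset.map_eq_empty] at h
      subst h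
      exact Q.bot_notMem ht

noncomputable def dropPart (v : V) (P : Finpartition (univ : Finset V)) :
    Finpartition (univ : Finset ↥{w : V | w ≠ v}) where
  parts := (P.parts.erase {v}).image (downF v)
  supIndep := by
    rw [Finset.supIndep_iff_pairwiseDisjoint]
    intro s hs t ht hst
    simp only [coe_image, Set.mem_image, mem_coe, Finset.mem_erase] at hs ht
    obtain ⟨a, ⟨-, ha⟩, rfl⟩ := hs
    obtain ⟨b, ⟨-, hb⟩, rfl⟩ := ht
    have hab : a ≠ b := fun h => hst (by rw [h])
    have hd : Disjoint a b := P.supIndep.pairwiseDisjoint ha hb hab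
    rw [Finset.disjoint_left] at hd
    show Disjoint (downF v a) (downF v b)
    rw [Finset.disjoint_left]
    intro x hx hx'
    exact hd (mem_downF.1 hx) (mem_downF.1 hx')
  sup_parts := by
    apply Finset.eq_univ_iff_forall.2
    rintro ⟨x, hx⟩
    obtain ⟨t, ht, hxt⟩ := P.exists_mem (Finset.mem_univ x)
    have htv : t ≠ {v} := by
      rintro rfl
      exact hx (Finset.mem_singleton.1 hxt)
    refine Finset.mem_sup.2 ⟨downF v t, Finset.mem_image_of_mem _ (Finset.mem_erase.2 ⟨htv, ht⟩), ?_⟩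
    exact mem_downF.2 hxt
  bot_notMem := by
    simp only [Finset.bot_eq_empty, Finset.mem_image]
    rintro ⟨t, ht, h⟩
    rw [Finset.mem_erase] at ht
    have : t ⊆ {v} := by
      intro x hxt
      by_contra hxv
      have : (⟨x, by simpa using hxv⟩ : ↥{w : V | w ≠ v}) ∈ downF v t := mem_downF.2 hxt
      simp [h] at this
    rcases Finset.subset_singleton_iff.1 this with rfl | rfl
    · exact P.bot_notMem ht.2
    · exact ht.1 rfl

end Part

section Main

variable {V : Type*} [Fintype V] [DecidableEq V]

open scoped Classical

lemma singleton_v_not_mem_image {v : V} (s : Finset (Finset ↥{w : V | w ≠ v})) :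
    ({v} : Finset V) ∉ s.image (upF v) := by
  simp only [Finset.mem_image]
  rintro ⟨t, ht, h⟩
  have : v ∈ upF v t := by rw [h]; exact Finset.mem_singleton_self v
  exact v_not_mem_upF this

lemma drop_lift (v : V) (Q : Finpartition (univ : Finset ↥{w : V | w ≠ v})) :
    dropPart v (liftPart v Q) = Q := by
  apply Finpartition.ext
  show ((insert {v} (Q.parts.image (upF v))).erase {v}).image (downF v) = Q.parts
  rw [Finset.erase_insert (singleton_v_not_mem_image _), Finset.image_image]
  have : ∀ t ∈ Q.parts, (downF v ∘ upF v) t = id t := fun t _ => downF_upF v t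
  rw [Finset.image_congr this, Finset.image_id]

lemma card_lift (v : V) (Q : Finpartition (univ : Finset ↥{w : V | w ≠ v})) :
    (liftPart v Q).parts.card = Q.parts.card + 1 := by
  show (insert {v} (Q.parts.image (upF v))).card = _
  have hinj : Function.Injective (upF v) := fun a b h => Finset.map_injective _ h
  rw [Finset.card_insert_of_notMem (singleton_v_not_mem_image _),
    Finset.card_image_of_injective _ hinj]

lemma part_of_dom {G : SimpleGraph V} {v : V} (hdom : ∀ w, w ≠ v → G.Adj v w)
    {P : Finpartition (univ : Finset V)} (hP : IsStablePartition G P)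
    {t : Finset V} (ht : t ∈ P.parts) (hvt : v ∈ t) : t = {v} := by
  apply Finset.eq_singleton_iff_unique_mem.2 ⟨hvt, ?_⟩
  intro x hx
  by_contra hxv
  exact hP t ht v hvt x hx (hdom x hxv)

lemma singleton_v_mem {G : SimpleGraph V} {v : V} (hdom : ∀ w, w ≠ v → G.Adj v w)
    {P : Finpartition (univ : Finset V)} (hP : IsStablePartition G P) :
    ({v} : Finset V) ∈ P.parts := by
  obtain ⟨t, ht, hvt⟩ := P.exists_mem (Finset.mem_univ v)
  rwa [part_of_dom hdom hP ht hvt] at ht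

lemma lift_drop {G : SimpleGraph V} {v : V} (hdom : ∀ w, w ≠ v → G.Adj v w)
    {P : Finpartition (univ : Finset V)} (hP : IsStablePartition G P) :
    liftPart v (dropPart v P) = P := by
  apply Finpartition.ext
  show insert {v} (((P.parts.erase {v}).image (downF v)).image (upF v)) = P.parts
  rw [Finset.image_image]
  have hv : ∀ t ∈ P.parts.erase {v}, v ∉ t := by
    intro t ht hvt
    rw [Finset.mem_erase] at ht
    exact ht.1 (part_of_dom hdom hP ht.2 hvt)
  have : ∀ t ∈ P.parts.erase {v}, (upF v ∘ downF v) t = id t := fun t ht => upF_downF (hv t ht)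
  rw [Finset.image_congr this, Finset.image_id,
    Finset.insert_erase (singleton_v_mem hdom hP)]

lemma stable_drop {G : SimpleGraph V} {v : V}
    {P : Finpartition (univ : Finset V)} (hP : IsStablePartition G P) :
    IsStablePartition (G.induce {w | w ≠ v}) (dropPart v P) := by
  intro t ht x hx y hy hadj
  have ht' : t ∈ (P.parts.erase {v}).image (downF v) := ht
  obtain ⟨s, hs, rfl⟩ := Finset.mem_image.1 ht'
  rw [Finset.mem_erase] at hs
  exact hP s hs.2 x (mem_downF.1 hx) y (mem_downF.1 hy) hadj

lemma stable_lift {G : SimpleGraph V} {v : V}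
    {Q : Finpartition (univ : Finset ↥{w : V | w ≠ v})}
    (hQ : IsStablePartition (G.induce {w | w ≠ v}) Q) :
    IsStablePartition G (liftPart v Q) := by
  intro t ht x hx y hy hadj
  rcases Finset.mem_insert.1 ht with rfl | ht'
  · rw [Finset.mem_singleton] at hx hy
    subst hx; subst hy
    exact G.loopless.irrefl _ hadj
  · obtain ⟨s, hs, rfl⟩ := Finset.mem_image.1 ht'
    obtain ⟨x', hx', rfl⟩ := Finset.mem_map.1 hx
    obtain ⟨y', hy', rfl⟩ := Finset.mem_map.1 hy
    exact hQ s hs x' hx' y' hy' hadj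

end Main

section Count

variable {V : Type*} [Fintype V] [DecidableEq V]

open scoped Classical

lemma colB_pos' {W : Type*} [Fintype W] [DecidableEq W] (G : SimpleGraph W) :
    (univ.filter (IsStablePartition G)).Nonempty := by
  refine ⟨⊥, Finset.mem_filter.2 ⟨Finset.mem_univ _, ?_⟩⟩
  intro t ht x hx y hy hadj
  rw [Finpartition.parts_bot, Finset.mem_map] at ht
  obtain ⟨a, -, rfl⟩ := ht
  rw [Function.Embedding.coeFn_mk, Finset.mem_singleton] at hx hy
  subst hx; subst hy
  exact G.loopless.irrefl _ hadj

lemma colB_eq {G : SimpleGraph V} {v : V} (hdom : ∀ w, w ≠ v → G.Adj v w) :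
    (univ.filter (IsStablePartition G)).card
      = (univ.filter (IsStablePartition (G.induce {w | w ≠ v}))).card := by
  apply Finset.card_nbij' (dropPart v) (liftPart v)
  · intro P hP
    exact Finset.mem_filter.2 ⟨Finset.mem_univ _, stable_drop (Finset.mem_filter.1 hP).2⟩
  · intro Q hQ
    exact Finset.mem_filter.2 ⟨Finset.mem_univ _, stable_lift (Finset.mem_filter.1 hQ).2⟩
  · intro P hP
    exact lift_drop hdom (Finset.mem_filter.1 hP).2
  · intro Q hQ
    exact drop_lift v Q

lemma colT_eq {G : SimpleGraph V} {v : V} (hdom : ∀ w, w ≠ v → G.Adj v w) :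
    ∑ P ∈ univ.filter (IsStablePartition G), P.parts.card
      = (∑ Q ∈ univ.filter (IsStablePartition (G.induce {w | w ≠ v})), Q.parts.card)
        + (univ.filter (IsStablePartition (G.induce {w | w ≠ v}))).card := by
  have step1 : ∑ P ∈ univ.filter (IsStablePartition G), P.parts.card
      = ∑ Q ∈ univ.filter (IsStablePartition (G.induce {w | w ≠ v})),
          (liftPart v Q).parts.card := by
    apply Finset.sum_nbij' (dropPart v) (liftPart v)
    · intro P hP
      exact Finset.mem_filter.2 ⟨Finset.mem_univ _, stable_drop (Finset.mem_filter.1 hP).2⟩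
    · intro Q hQ
      exact Finset.mem_filter.2 ⟨Finset.mem_univ _, stable_lift (Finset.mem_filter.1 hQ).2⟩
    · intro P hP
      exact lift_drop hdom (Finset.mem_filter.1 hP).2
    · intro Q hQ
      exact drop_lift v Q
    · intro P hP
      conv_lhs => rw [← lift_drop hdom (Finset.mem_filter.1 hP).2]
  rw [step1, Finset.sum_congr rfl (fun Q _ => card_lift v Q), Finset.sum_add_distrib,
    Finset.sum_const, smul_eq_mul, mul_one]

end Count

/-- If `G` has a dominating vertex `v`, then `A(G) = 1 + A(G - v)`. -/
theorem stmt_0 {V : Type*} [Fintype V] [DecidableEq V] (G : SimpleGraph V) (v : V)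
    (hdom : ∀ w, w ≠ v → G.Adj v w) :
    colA G = 1 + colA (G.induce {w | w ≠ v}) := by
  classical
  simp only [colA, colT, colB]
  rw [colT_eq hdom, colB_eq hdom]
  have hn : (((univ.filter (IsStablePartition (G.induce {w | w ≠ v}))).card : ℚ)) ≠ 0 :=
    Nat.cast_ne_zero.2 (Finset.card_pos.2 (colB_pos' _)).ne'
  push_cast
  field_simp
  ring
end

section
/- Let G be a tree of order n ≥ 1 (a connected acyclic finite simple graph on n vertices). Then B(G) = B_{n−1} and T(G) = B_n, where B_k denotes the k-th Bell number. -/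
open Finset SimpleGraph

set_option linter.unusedSectionVars false
set_option linter.unnecessarySimpa false
namespace StmtAux
open Finset

variable {α β : Type*} [DecidableEq α] [DecidableEq β]

/-- Build a `Finpartition` from elementwise facts. -/
def mkP (s : Finset α) (X : Finset (Finset α))
    (hdisj : ∀ a ∈ X, ∀ b ∈ X, a ≠ b → ∀ x, x ∈ a → x ∉ b)
    (hsub : ∀ t ∈ X, t ⊆ s)
    (hcov : ∀ x ∈ s, ∃ t ∈ X, x ∈ t)
    (hne : ∀ t ∈ X, t.Nonempty) : Finpartition s where
  parts := X
  supIndep := by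
    rw [Finset.supIndep_iff_pairwiseDisjoint]
    intro a ha b hb hab
    simp only [Finset.mem_coe] at ha hb
    simp only [id, Finset.disjoint_left]
    exact fun {x} hx => hdisj a ha b hb hab x hx
  sup_parts := by
    apply Finset.Subset.antisymm
    · exact Finset.sup_le fun t ht => hsub t ht
    · intro x hx
      obtain ⟨t, htX, hxt⟩ := hcov x hx
      exact Finset.mem_sup.2 ⟨t, htX, hxt⟩
  bot_notMem := by
    intro h
    obtain ⟨x, hx⟩ := hne ⊥ h
    exact absurd hx (by simp)

@[simp] lemma mkP_parts {s : Finset α} {X hdisj hsub hcov hne} :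
    (mkP s X hdisj hsub hcov hne).parts = X := rfl

lemma part_subset {s : Finset α} (P : Finpartition s) {t : Finset α} (ht : t ∈ P.parts) : t ⊆ s :=
  P.le ht

/-- Map a finpartition along an embedding. -/
def mapP (f : α ↪ β) {s : Finset α} (P : Finpartition s) : Finpartition (s.map f) :=
  mkP _ (P.parts.image (fun t => t.map f))
    (by
      intro a ha b hb hab x hxa hxb
      simp only [mem_image] at ha hb
      obtain ⟨ta, hta, rfl⟩ := ha
      obtain ⟨tb, htb, rfl⟩ := hb
      have htab : ta ≠ tb := by rintro rfl; exact hab rfl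
      simp only [Finset.mem_map] at hxa hxb
      obtain ⟨y, hy, rfl⟩ := hxa
      obtain ⟨z, hz, hzy⟩ := hxb
      have : z = y := f.injective hzy
      subst this
      exact (Finset.disjoint_left.1 (P.disjoint hta htb htab)) hy hz)
    (by
      intro t ht
      simp only [mem_image] at ht
      obtain ⟨ta, hta, rfl⟩ := ht
      exact Finset.map_subset_map.2 (part_subset P hta))
    (by
      intro x hx
      rw [Finset.mem_map] at hx
      obtain ⟨y, hy, rfl⟩ := hx
      obtain ⟨t, ht, hyt⟩ := P.exists_mem hy
      exact ⟨t.map f, Finset.mem_image_of_mem _ ht, Finset.mem_map_of_mem _ hyt⟩)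
    (by
      intro t ht
      simp only [mem_image] at ht
      obtain ⟨ta, hta, rfl⟩ := ht
      exact (P.nonempty_of_mem_parts hta).map)

lemma mapP_parts (f : α ↪ β) {s : Finset α} (P : Finpartition s) :
    (mapP f P).parts = P.parts.image (fun t => t.map f) := rfl

/-- The inverse: a finpartition of `s.map f` pulls back to one of `s`. -/
noncomputable def unmapP (f : α ↪ β) {s : Finset α} (Q : Finpartition (s.map f)) : Finpartition s :=
  mkP _ (Q.parts.image (fun t => t.preimage f f.injective.injOn))
    (by
      intro a ha b hb hab x hxa hxb
      simp only [mem_image] at ha hb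
      obtain ⟨ta, hta, rfl⟩ := ha
      obtain ⟨tb, htb, rfl⟩ := hb
      have htab : ta ≠ tb := by rintro rfl; exact hab rfl
      rw [Finset.mem_preimage] at hxa hxb
      exact (Finset.disjoint_left.1 (Q.disjoint hta htb htab)) hxa hxb)
    (by
      intro t ht
      simp only [mem_image] at ht
      obtain ⟨ta, hta, rfl⟩ := ht
      intro x hx
      rw [Finset.mem_preimage] at hx
      have := part_subset Q hta hx
      rw [Finset.mem_map] at this
      obtain ⟨y, hy, hyx⟩ := this
      rwa [← f.injective hyx])
    (by
      intro x hx
      obtain ⟨t, ht, hxt⟩ := Q.exists_mem (Finset.mem_map_of_mem f hx)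
      exact ⟨t.preimage f f.injective.injOn, Finset.mem_image_of_mem _ ht,
        Finset.mem_preimage.2 hxt⟩)
    (by
      intro t ht
      simp only [mem_image] at ht
      obtain ⟨ta, hta, rfl⟩ := ht
      obtain ⟨y, hy⟩ := Q.nonempty_of_mem_parts hta
      have := part_subset Q hta hy
      rw [Finset.mem_map] at this
      obtain ⟨x, hx, rfl⟩ := this
      exact ⟨x, Finset.mem_preimage.2 hy⟩)

lemma map_preimage_of_subset (f : α ↪ β) {s : Finset α} {t : Finset β} (h : t ⊆ s.map f) :
    (t.preimage f f.injective.injOn).map f = t := by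
  classical
  rw [Finset.map_eq_image, Finset.image_preimage]
  apply Finset.filter_true_of_mem
  intro x hx
  have := h hx
  rw [Finset.mem_map] at this
  obtain ⟨y, _, rfl⟩ := this
  exact Set.mem_range_self y

lemma preimage_map (f : α ↪ β) (t : Finset α) :
    (t.map f).preimage f f.injective.injOn = t := by
  ext x; simp

/-- Transport of finpartitions along an embedding, as an equivalence. -/
noncomputable def mapPEquiv (f : α ↪ β) (s : Finset α) : Finpartition s ≃ Finpartition (s.map f) where
  toFun := mapP f
  invFun := unmapP f
  left_inv P := by
    apply Finpartition.ext
    rw [unmapP, mkP_parts, mapP_parts, Finset.image_image]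
    rw [show ((fun t => Finset.preimage t f f.injective.injOn) ∘ fun t => Finset.map f t)
      = id from funext fun t => preimage_map f t, Finset.image_id]
  right_inv Q := by
    apply Finpartition.ext
    rw [mapP_parts, unmapP, mkP_parts, Finset.image_image]
    have : ∀ t ∈ Q.parts,
        ((fun t => Finset.map f t) ∘ fun t => Finset.preimage t f f.injective.injOn) t = t := by
      intro t ht
      exact map_preimage_of_subset f (part_subset Q ht)
    rw [Finset.image_congr fun t ht => this t ht]
    simp

lemma card_mapP_parts (f : α ↪ β) {s : Finset α} (P : Finpartition s) :
    (mapP f P).parts.card = P.parts.card := by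
  rw [mapP_parts]
  apply Finset.card_image_of_injOn
  intro a _ b _ h
  exact Finset.map_injective f h

/-- Equal supports give equivalent finpartitions. -/
def congrPEquiv {s t : Finset α} (h : s = t) : Finpartition s ≃ Finpartition t where
  toFun P := P.copy h
  invFun P := P.copy h.symm
  left_inv P := by apply Finpartition.ext; rfl
  right_inv P := by apply Finpartition.ext; rfl

lemma card_finpartition_eq_bell (s : Finset α) :
    Fintype.card (Finpartition s) = bell s.card := by
  have e1 : Finpartition s ≃ Finpartition (univ : Finset {x // x ∈ s}) := by
    refine Equiv.trans ?_ (mapPEquiv (Function.Embedding.subtype (· ∈ s)) univ).symm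
    apply congrPEquiv
    rw [Finset.univ_eq_attach, Finset.attach_map_val]
  have e2 : Finpartition (univ : Finset {x // x ∈ s}) ≃
      Finpartition (univ : Finset (Fin s.card)) := by
    refine Equiv.trans (mapPEquiv s.equivFin.toEmbedding univ) ?_
    apply congrPEquiv
    exact Finset.map_univ_equiv _  -- univ.map e = univ ?
  rw [bell]
  exact Fintype.card_congr (e1.trans e2)

end StmtAux
namespace StmtAux
variable {α : Type*} [DecidableEq α]

section Insertion
variable {a : α} {s : Finset α}

/-- Restrict a finpartition of `insert a s` to one of `s`, removing `a`. -/
noncomputable def restrictP (ha : a ∉ s) (Q : Finpartition (insert a s)) : Finpartition s :=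
  (Q.avoid {a}).copy (by rw [Finset.sdiff_singleton_eq_erase, Finset.erase_insert ha])

lemma restrictP_parts (ha : a ∉ s) (Q : Finpartition (insert a s)) :
    (restrictP ha Q).parts = (Q.parts.image (fun t => t.erase a)).erase ∅ := by
  have : (restrictP ha Q).parts = (Q.parts.image (fun t => t \ {a})).erase ⊥ := rfl
  rw [this]
  congr 1
  apply Finset.image_congr
  intro t _
  simp [Finset.sdiff_singleton_eq_erase]

/-- Insert `a` into the part `t` of a finpartition of `s`. -/
noncomputable def insertIntoP (ha : a ∉ s) (P : Finpartition s) (t : Finset α)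
    (ht : t ∈ P.parts) : Finpartition (insert a s) :=
  mkP _ (insert (insert a t) (P.parts.erase t))
    (by
      intro b hb c hc hbc x hxb hxc
      rw [Finset.mem_insert] at hb hc
      rcases hb with rfl | hb <;> rcases hc with rfl | hc
      · exact hbc rfl
      · have hc' := Finset.mem_of_mem_erase hc
        have hct : c ≠ t := Finset.ne_of_mem_erase hc
        rw [Finset.mem_insert] at hxb
        rcases hxb with rfl | hxb
        · exact ha (part_subset P hc' hxc)
        · exact (Finset.disjoint_left.1 (P.disjoint ht hc' (Ne.symm hct))) hxb hxc
      · have hb' := Finset.mem_of_mem_erase hb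
        have hbt : b ≠ t := Finset.ne_of_mem_erase hb
        rw [Finset.mem_insert] at hxc
        rcases hxc with rfl | hxc
        · exact ha (part_subset P hb' hxb)
        · exact (Finset.disjoint_left.1 (P.disjoint hb' ht hbt)) hxb hxc
      · exact (Finset.disjoint_left.1
          (P.disjoint (Finset.mem_of_mem_erase hb) (Finset.mem_of_mem_erase hc) hbc)) hxb hxc)
    (by
      intro b hb
      rw [Finset.mem_insert] at hb
      rcases hb with rfl | hb
      · intro x hx
        rw [Finset.mem_insert] at hx ⊢
        rcases hx with rfl | hx
        · exact Or.inl rfl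
        · exact Or.inr (part_subset P ht hx)
      · exact fun x hx =>
          Finset.mem_insert_of_mem (part_subset P (Finset.mem_of_mem_erase hb) hx))
    (by
      intro x hx
      rw [Finset.mem_insert] at hx
      rcases hx with rfl | hx
      · exact ⟨insert x t, Finset.mem_insert_self _ _, Finset.mem_insert_self _ _⟩
      · obtain ⟨u, hu, hxu⟩ := P.exists_mem hx
        by_cases hut : u = t
        · subst hut
          exact ⟨insert a u, Finset.mem_insert_self _ _, Finset.mem_insert_of_mem hxu⟩
        · exact ⟨u, Finset.mem_insert_of_mem (Finset.mem_erase.2 ⟨hut, hu⟩), hxu⟩)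
    (by
      intro b hb
      rw [Finset.mem_insert] at hb
      rcases hb with rfl | hb
      · exact ⟨a, Finset.mem_insert_self _ _⟩
      · exact P.nonempty_of_mem_parts (Finset.mem_of_mem_erase hb))

lemma insertIntoP_parts (ha : a ∉ s) (P : Finpartition s) (t : Finset α) (ht : t ∈ P.parts) :
    (insertIntoP ha P t ht).parts = insert (insert a t) (P.parts.erase t) := rfl

/-- The extension of `P` by the singleton `{a}`. -/
noncomputable def extendSingP (ha : a ∉ s) (P : Finpartition s) : Finpartition (insert a s) :=
  P.extend (by simpa using Finset.singleton_ne_empty a : ({a} : Finset α) ≠ ⊥)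
    (by simpa using ha) (by rw [Finset.sup_eq_union, Finset.union_comm]; exact Finset.insert_eq a s ▸ rfl)

lemma extendSingP_parts (ha : a ∉ s) (P : Finpartition s) :
    (extendSingP ha P).parts = insert {a} P.parts := Finpartition.extend_parts _ _ _ _

lemma mem_part_insert_self (Q : Finpartition (insert a s)) : a ∈ Q.part a :=
  Q.mem_part (Finset.mem_insert_self a s)

lemma part_mem' (Q : Finpartition (insert a s)) : Q.part a ∈ Q.parts :=
  Q.part_mem.2 (Finset.mem_insert_self a s)

/-- a appears in no part other than `Q.part a`. -/
lemma not_mem_of_ne_part {Q : Finpartition (insert a s)} {t : Finset α} (ht : t ∈ Q.parts)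
    (hne : t ≠ Q.part a) : a ∉ t := fun hat =>
  hne (Q.eq_of_mem_parts ht (part_mem' Q) hat (mem_part_insert_self Q))

/-- The option component: `none` if `a` is a singleton part. -/
noncomputable def optP (ha : a ∉ s) (Q : Finpartition (insert a s)) :
    Option {t // t ∈ (restrictP ha Q).parts} :=
  if h : Q.part a = {a} then none
  else some ⟨(Q.part a).erase a, by
    rw [restrictP_parts]
    refine Finset.mem_erase.2 ⟨?_, Finset.mem_image_of_mem _ (part_mem' Q)⟩
    intro hemp
    apply h
    have hsub : Q.part a ⊆ {a} := by
      intro x hx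
      by_contra hxa
      rw [Finset.mem_singleton] at hxa
      exact absurd (Finset.mem_erase.2 ⟨hxa, hx⟩) (by rw [hemp]; simp)
    exact Finset.Subset.antisymm hsub (Finset.singleton_subset_iff.2 (mem_part_insert_self Q))⟩

/-- Forward direction of the insertion equivalence. -/
noncomputable def insEquivFwd (ha : a ∉ s) (Q : Finpartition (insert a s)) :
    Σ P : Finpartition s, Option {t // t ∈ P.parts} :=
  ⟨restrictP ha Q, optP ha Q⟩

/-- Backward direction. -/
noncomputable def insEquivBwd (ha : a ∉ s) :
    (Σ P : Finpartition s, Option {t // t ∈ P.parts}) → Finpartition (insert a s)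
  | ⟨P, none⟩ => extendSingP ha P
  | ⟨P, some ⟨t, ht⟩⟩ => insertIntoP ha P t ht

lemma sigma_helper {P₁ P₂ : Finpartition s} (o₁ : Option {t // t ∈ P₁.parts})
    (o₂ : Option {t // t ∈ P₂.parts}) (h : P₁ = P₂)
    (ho : Option.map Subtype.val o₁ = Option.map Subtype.val o₂) :
    (⟨P₁, o₁⟩ : Σ P : Finpartition s, Option {t // t ∈ P.parts}) = ⟨P₂, o₂⟩ := by
  subst h
  congr 1
  exact Option.map_injective Subtype.val_injective ho

end Insertion
end StmtAux
namespace StmtAux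
variable {α : Type*} [DecidableEq α]
section Insertion
variable {a : α} {s : Finset α}

lemma erase_part_ne_empty {Q : Finpartition (insert a s)} (h : Q.part a ≠ {a}) :
    (Q.part a).erase a ≠ ∅ := by
  intro hemp
  apply h
  have hsub : Q.part a ⊆ {a} := by
    intro x hx
    by_contra hxa
    rw [Finset.mem_singleton] at hxa
    exact absurd (Finset.mem_erase.2 ⟨hxa, hx⟩) (by rw [hemp]; simp)
  exact Finset.Subset.antisymm hsub (Finset.singleton_subset_iff.2 (mem_part_insert_self Q))

lemma image_erase_parts (Q : Finpartition (insert a s)) :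
    Q.parts.image (fun t => t.erase a)
      = insert ((Q.part a).erase a) (Q.parts.erase (Q.part a)) := by
  conv_lhs => rw [← Finset.insert_erase (part_mem' Q)]
  rw [Finset.image_insert]
  congr 1
  have : ∀ t ∈ Q.parts.erase (Q.part a), t.erase a = t := by
    intro t ht
    exact Finset.erase_eq_of_notMem
      (not_mem_of_ne_part (Finset.mem_of_mem_erase ht) (Finset.ne_of_mem_erase ht))
  rw [Finset.image_congr fun t ht => this t ht]
  simp

lemma empty_not_mem_erase_parts (Q : Finpartition (insert a s)) :
    ∅ ∉ Q.parts.erase (Q.part a) := fun h =>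
  Q.bot_notMem (Finset.mem_of_mem_erase h)

lemma restrictP_parts_of_sing (ha : a ∉ s) {Q : Finpartition (insert a s)}
    (h : Q.part a = {a}) :
    (restrictP ha Q).parts = Q.parts.erase (Q.part a) := by
  rw [restrictP_parts, image_erase_parts, h, Finset.erase_singleton,
    Finset.erase_insert_eq_erase, ← h,
    Finset.erase_eq_of_notMem (empty_not_mem_erase_parts Q)]

lemma restrictP_parts_of_ne (ha : a ∉ s) {Q : Finpartition (insert a s)}
    (h : Q.part a ≠ {a}) :
    (restrictP ha Q).parts = insert ((Q.part a).erase a) (Q.parts.erase (Q.part a)) := by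
  rw [restrictP_parts, image_erase_parts]
  apply Finset.erase_eq_of_notMem
  rw [Finset.mem_insert]
  rintro (hc | hc)
  · exact erase_part_ne_empty h hc.symm
  · exact empty_not_mem_erase_parts Q hc

lemma erase_part_not_mem {Q : Finpartition (insert a s)} :
    (Q.part a).erase a ∉ Q.parts := by
  intro ht
  have hne : (Q.part a).erase a ≠ Q.part a := by
    intro hh
    have : a ∉ (Q.part a).erase a := Finset.notMem_erase a _
    rw [hh] at this
    exact this (mem_part_insert_self Q)
  have hdisj := Q.disjoint ht (part_mem' Q) hne
  obtain ⟨x, hx⟩ := Q.nonempty_of_mem_parts ht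
  exact (Finset.disjoint_left.1 hdisj) hx (Finset.mem_of_mem_erase hx)

/-- The insertion equivalence. -/
noncomputable def insEquiv (ha : a ∉ s) :
    Finpartition (insert a s) ≃ Σ P : Finpartition s, Option {t // t ∈ P.parts} where
  toFun := insEquivFwd ha
  invFun := insEquivBwd ha
  left_inv Q := by
    rw [insEquivFwd]
    by_cases h : Q.part a = {a}
    · rw [optP, dif_pos h, insEquivBwd]
      apply Finpartition.ext
      rw [extendSingP_parts, restrictP_parts_of_sing ha h, ← h, Finset.insert_erase (part_mem' Q)]
    · rw [optP, dif_neg h, insEquivBwd]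
      apply Finpartition.ext
      rw [insertIntoP_parts, restrictP_parts_of_ne ha h,
        Finset.insert_erase (mem_part_insert_self Q),
        Finset.erase_insert (by
          intro hc
          exact erase_part_not_mem (Finset.mem_of_mem_erase hc)),
        Finset.insert_erase (part_mem' Q)]
  right_inv := by
    rintro ⟨P, o⟩
    match o with
    | none =>
      rw [insEquivBwd, insEquivFwd]
      have hpart : (extendSingP ha P).part a = {a} :=
        (extendSingP ha P).part_eq_of_mem
          (by rw [extendSingP_parts]; exact Finset.mem_insert_self _ _) (Finset.mem_singleton_self a)
      have hP : restrictP ha (extendSingP ha P) = P := by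
        apply Finpartition.ext
        rw [restrictP_parts_of_sing ha hpart, hpart, extendSingP_parts, Finset.erase_insert]
        intro hc
        exact ha (part_subset P hc (Finset.mem_singleton_self a))
      exact sigma_helper _ _ hP (by rw [optP, dif_pos hpart]; rfl)
    | some ⟨t, ht⟩ =>
      rw [insEquivBwd, insEquivFwd]
      have hat : a ∉ t := fun hc => ha (part_subset P ht hc)
      have hmem : insert a t ∈ (insertIntoP ha P t ht).parts := by
        rw [insertIntoP_parts]; exact Finset.mem_insert_self _ _
      have hpart : (insertIntoP ha P t ht).part a = insert a t :=
        (insertIntoP ha P t ht).part_eq_of_mem hmem (Finset.mem_insert_self a t)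
      have hne : (insertIntoP ha P t ht).part a ≠ {a} := by
        rw [hpart]
        obtain ⟨x, hx⟩ := P.nonempty_of_mem_parts ht
        intro hc
        have : x ∈ ({a} : Finset α) := hc ▸ Finset.mem_insert_of_mem hx
        rw [Finset.mem_singleton] at this
        exact hat (this ▸ hx)
      have hP : restrictP ha (insertIntoP ha P t ht) = P := by
        apply Finpartition.ext
        rw [restrictP_parts_of_ne ha hne, hpart, Finset.erase_insert hat, insertIntoP_parts,
          Finset.erase_insert (by
            intro hc
            exact ha (part_subset P (Finset.mem_of_mem_erase hc) (Finset.mem_insert_self a t))),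
          Finset.insert_erase ht]
      refine sigma_helper _ _ hP ?_
      rw [optP, dif_neg hne]
      simp only [Option.map_some]
      congr 1
      rw [hpart, Finset.erase_insert hat]
  
lemma card_finpartition_insert (ha : a ∉ s) :
    Fintype.card (Finpartition (insert a s)) = ∑ P : Finpartition s, (P.parts.card + 1) := by
  rw [Fintype.card_congr (insEquiv ha), Fintype.card_sigma]
  apply Finset.sum_congr rfl
  intro P _
  rw [Fintype.card_option, Fintype.card_coe]

end Insertion
end StmtAux
namespace StmtAux
open Finset

section Stable
variable {V : Type*} [Fintype V] [DecidableEq V] (G : SimpleGraph V)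
variable (r : V) (p : V → V) (d : V → ℕ)

/-- Fuel-based recursion deciding membership in the root block. -/
def auxR (π : Finpartition ((univ : Finset V).erase r)) : ℕ → V → Bool
  | 0, _ => false
  | (k+1), v => (decide (v ≠ r)) && (decide (p v ∈ π.part v)) && !(auxR π k (p v))

variable (hd0 : ∀ v, d v = 0 ↔ v = r)
variable (hstep : ∀ v, v ≠ r → G.Adj v (p v) ∧ d (p v) + 1 = d v)

/-- `v` belongs to the root block of the reconstructed partition. -/
def inRB (π : Finpartition ((univ : Finset V).erase r)) (v : V) : Bool :=
  auxR r p π (d v) v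

include hd0 in
lemma inRB_r (π : Finpartition ((univ : Finset V).erase r)) : inRB r p d π r = false := by
  rw [inRB, (hd0 r).2 rfl, auxR]

include hd0 hstep in
lemma inRB_spec (π : Finpartition ((univ : Finset V).erase r)) (v : V) :
    inRB r p d π v = true ↔ (v ≠ r ∧ p v ∈ π.part v ∧ inRB r p d π (p v) = false) := by
  by_cases hvr : v = r
  · rw [hvr, inRB_r r p d hd0 π]
    simp
  · obtain ⟨-, hdp⟩ := hstep v hvr
    rw [inRB, ← hdp, auxR]
    simp only [Bool.and_eq_true, decide_eq_true_eq, Bool.not_eq_true']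
    rw [inRB]
    tauto

/-- The root block. -/
def Rset (π : Finpartition ((univ : Finset V).erase r)) : Finset V :=
  insert r (univ.filter (fun v => inRB r p d π v = true))

lemma mem_Rset {π : Finpartition ((univ : Finset V).erase r)} {v : V} :
    v ∈ Rset r p d π ↔ v = r ∨ inRB r p d π v = true := by
  rw [Rset, Finset.mem_insert, Finset.mem_filter]
  simp

lemma not_mem_Rset {π : Finpartition ((univ : Finset V).erase r)} {v : V} :
    v ∉ Rset r p d π ↔ v ≠ r ∧ inRB r p d π v = false := by
  rw [mem_Rset]
  simp only [not_or, Bool.not_eq_true]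

lemma r_mem_Rset {π : Finpartition ((univ : Finset V).erase r)} : r ∈ Rset r p d π :=
  mem_Rset r p d |>.2 (Or.inl rfl)

lemma part_ne_r {π : Finpartition ((univ : Finset V).erase r)} {v x : V}
    (h : x ∈ π.part v) : x ≠ r := by
  by_cases hv : v ∈ (univ : Finset V).erase r
  · have := part_subset π (π.part_mem.2 hv) h
    exact Finset.ne_of_mem_erase this
  · rw [Finpartition.part, dif_neg hv] at h
    exact absurd h (Finset.notMem_empty x)

include hd0 hstep in
/-- Every part contains an element outside the root block (one of minimal depth). -/
lemma exists_not_mem_Rset {π : Finpartition ((univ : Finset V).erase r)} {B : Finset V}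
    (hB : B ∈ π.parts) : (B \ Rset r p d π).Nonempty := by
  obtain ⟨v, hvB, hmin⟩ := Finset.exists_min_image B d (π.nonempty_of_mem_parts hB)
  refine ⟨v, Finset.mem_sdiff.2 ⟨hvB, ?_⟩⟩
  rw [not_mem_Rset]
  have hvr : v ≠ r := Finset.ne_of_mem_erase (part_subset π hB hvB)
  refine ⟨hvr, ?_⟩
  rw [← Bool.not_eq_true, inRB_spec G r p d hd0 hstep]
  rintro ⟨-, hp, -⟩
  have hpart : π.part v = B := π.part_eq_of_mem hB hvB
  rw [hpart] at hp
  have hlt : d (p v) < d v := by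
    obtain ⟨-, hdp⟩ := hstep v hvr
    omega
  exact absurd (hmin (p v) hp) (by omega)

include hd0 hstep in
/-- The reconstructed partition of `univ` from a partition of `univ.erase r`. -/
noncomputable def bwdP (π : Finpartition ((univ : Finset V).erase r)) :
    Finpartition (univ : Finset V) :=
  mkP _ (insert (Rset r p d π) (π.parts.image (fun B => B \ Rset r p d π)))
    (by
      intro a ha b hb hab x hxa hxb
      rw [Finset.mem_insert] at ha hb
      rcases ha with rfl | ha <;> rcases hb with rfl | hb
      · exact hab rfl
      · simp only [mem_image] at hb
        obtain ⟨B, hB, rfl⟩ := hb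
        exact (Finset.mem_sdiff.1 hxb).2 hxa
      · simp only [mem_image] at ha
        obtain ⟨B, hB, rfl⟩ := ha
        exact (Finset.mem_sdiff.1 hxa).2 hxb
      · simp only [mem_image] at ha hb
        obtain ⟨B₁, hB₁, rfl⟩ := ha
        obtain ⟨B₂, hB₂, rfl⟩ := hb
        have hne : B₁ ≠ B₂ := by rintro rfl; exact hab rfl
        exact (Finset.disjoint_left.1 (π.disjoint hB₁ hB₂ hne))
          (Finset.mem_sdiff.1 hxa).1 (Finset.mem_sdiff.1 hxb).1)
    (fun t _ => t.subset_univ)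
    (by
      intro x _
      by_cases hx : x ∈ Rset r p d π
      · exact ⟨Rset r p d π, Finset.mem_insert_self _ _, hx⟩
      · rw [not_mem_Rset] at hx
        have hxs : x ∈ (univ : Finset V).erase r := Finset.mem_erase.2 ⟨hx.1, Finset.mem_univ x⟩
        refine ⟨π.part x \ Rset r p d π,
          Finset.mem_insert_of_mem (Finset.mem_image_of_mem _ (π.part_mem.2 hxs)), ?_⟩
        refine Finset.mem_sdiff.2 ⟨π.mem_part hxs, ?_⟩
        rw [not_mem_Rset]
        exact hx)
    (by
      intro t ht
      rw [Finset.mem_insert] at ht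
      rcases ht with rfl | ht
      · exact ⟨r, r_mem_Rset r p d⟩
      · simp only [mem_image] at ht
        obtain ⟨B, hB, rfl⟩ := ht
        exact exists_not_mem_Rset G r p d hd0 hstep hB)

include hd0 hstep in
lemma bwdP_parts (π : Finpartition ((univ : Finset V).erase r)) :
    (bwdP G r p d hd0 hstep π).parts
      = insert (Rset r p d π) (π.parts.image (fun B => B \ Rset r p d π)) := rfl

variable (hpr : p r = r)
variable (hadj : ∀ u v, G.Adj u v → p u = v ∨ p v = u)

include hd0 hstep hpr in
lemma bwd_stab_aux (π : Finpartition ((univ : Finset V).erase r)) :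
    ∀ t ∈ (bwdP G r p d hd0 hstep π).parts, ∀ u ∈ t, ∀ v ∈ t, G.Adj u v → p u = v → False := by
  intro t ht u hu v hv hAdj hpu
  rw [bwdP_parts, Finset.mem_insert] at ht
  rcases ht with rfl | ht
  · by_cases hur : u = r
    · subst hur
      rw [hpr] at hpu
      exact G.loopless.irrefl u (hpu ▸ hAdj)
    · have hu' := (mem_Rset r p d).1 hu
      have hinRu : inRB r p d π u = true := hu'.resolve_left hur
      obtain ⟨-, -, hfalse⟩ := (inRB_spec G r p d hd0 hstep π u).1 hinRu
      obtain ⟨-, hmem, -⟩ := (inRB_spec G r p d hd0 hstep π u).1 hinRu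
      have hv' := (mem_Rset r p d).1 hv
      rcases hv' with hv' | hv'
      · exact (part_ne_r r hmem) (hpu.trans hv')
      · rw [hpu] at hfalse
        simp [hfalse] at hv'
  · simp only [mem_image] at ht
    obtain ⟨B, hB, rfl⟩ := ht
    obtain ⟨huB, huR⟩ := Finset.mem_sdiff.1 hu
    obtain ⟨hvB, hvR⟩ := Finset.mem_sdiff.1 hv
    have hur : u ≠ r := Finset.ne_of_mem_erase (part_subset π hB huB)
    have hvr : v ≠ r := Finset.ne_of_mem_erase (part_subset π hB hvB)
    have hvfalse : inRB r p d π v = false := ((not_mem_Rset r p d).1 hvR).2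
    have hus : u ∈ (univ : Finset V).erase r := Finset.mem_erase.2 ⟨hur, Finset.mem_univ u⟩
    have hpart : π.part u = B := π.part_eq_of_mem hB huB
    have : inRB r p d π u = true := by
      rw [inRB_spec G r p d hd0 hstep]
      exact ⟨hur, by rw [hpart, hpu]; exact hvB, by rw [hpu]; exact hvfalse⟩
    simp [((not_mem_Rset r p d).1 huR).2] at this

include hd0 hstep hpr hadj in
lemma bwdP_stable (π : Finpartition ((univ : Finset V).erase r)) :
    IsStablePartition G (bwdP G r p d hd0 hstep π) := by
  intro t ht u hu v hv hAdj
  rcases hadj u v hAdj with h | h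
  · exact bwd_stab_aux G r p d hd0 hstep hpr π t ht u hu v hv hAdj h
  · exact bwd_stab_aux G r p d hd0 hstep hpr π t ht v hv u hu hAdj.symm h

end Stable
end StmtAux
namespace StmtAux
open Finset

section Stable2
variable {V : Type*} [Fintype V] [DecidableEq V] (G : SimpleGraph V)
variable (r : V) (p : V → V) (d : V → ℕ)
variable (hd0 : ∀ v, d v = 0 ↔ v = r)
variable (hstep : ∀ v, v ≠ r → G.Adj v (p v) ∧ d (p v) + 1 = d v)
variable (hpr : p r = r)
variable (hadj : ∀ u v, G.Adj u v → p u = v ∨ p v = u)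

/-- The map sending a block `B ≠ R₀` to `B` together with the attached root-block vertices. -/
def attachMap (σ : Finpartition (univ : Finset V)) (B : Finset V) : Finset V :=
  B ∪ ((σ.part r).erase r).filter (fun v => p v ∈ B)

lemma r_mem_part_r (σ : Finpartition (univ : Finset V)) : r ∈ σ.part r :=
  σ.mem_part (Finset.mem_univ r)

lemma part_r_mem (σ : Finpartition (univ : Finset V)) : σ.part r ∈ σ.parts :=
  σ.part_mem.2 (Finset.mem_univ r)

lemma ne_r_of_mem_erase_part {σ : Finpartition (univ : Finset V)} {B : Finset V}
    (hB : B ∈ σ.parts.erase (σ.part r)) {x : V} (hx : x ∈ B) : x ≠ r := by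
  intro hc
  exact Finset.ne_of_mem_erase hB
    (σ.eq_of_mem_parts (Finset.mem_of_mem_erase hB) (part_r_mem r σ) hx
      (by rw [hc]; exact r_mem_part_r r σ))

include hstep in
lemma p_not_mem_part_r {σ : Finpartition (univ : Finset V)} (hσ : IsStablePartition G σ)
    {x : V} (hx : x ∈ σ.part r) (hxr : x ≠ r) : p x ∉ σ.part r := fun hp =>
  hσ _ (part_r_mem r σ) x hx (p x) hp (hstep x hxr).1

include hstep in
/-- The forward map: a stable partition of `univ` gives a partition of `univ.erase r`. -/
noncomputable def fwdP (σ : Finpartition (univ : Finset V)) (hσ : IsStablePartition G σ) :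
    Finpartition ((univ : Finset V).erase r) :=
  mkP _ ((σ.parts.erase (σ.part r)).image (attachMap r p σ))
    (by
      intro a ha b hb hab x hxa hxb
      simp only [mem_image] at ha hb
      obtain ⟨B₁, hB₁, rfl⟩ := ha
      obtain ⟨B₂, hB₂, rfl⟩ := hb
      have hne : B₁ ≠ B₂ := by rintro rfl; exact hab rfl
      have hd12 := σ.disjoint (Finset.mem_of_mem_erase hB₁) (Finset.mem_of_mem_erase hB₂) hne
      have hd1R := σ.disjoint (Finset.mem_of_mem_erase hB₁) (part_r_mem r σ)
        (Finset.ne_of_mem_erase hB₁)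
      have hd2R := σ.disjoint (Finset.mem_of_mem_erase hB₂) (part_r_mem r σ)
        (Finset.ne_of_mem_erase hB₂)
      rw [attachMap, Finset.mem_union] at hxa hxb
      rcases hxa with hxa | hxa <;> rcases hxb with hxb | hxb
      · exact (Finset.disjoint_left.1 hd12) hxa hxb
      · exact (Finset.disjoint_left.1 hd1R) hxa
          (Finset.mem_of_mem_erase (Finset.mem_filter.1 hxb).1)
      · exact (Finset.disjoint_left.1 hd2R) hxb
          (Finset.mem_of_mem_erase (Finset.mem_filter.1 hxa).1)
      · exact (Finset.disjoint_left.1 hd12) (Finset.mem_filter.1 hxa).2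
          (Finset.mem_filter.1 hxb).2)
    (by
      intro t ht
      simp only [mem_image] at ht
      obtain ⟨B, hB, rfl⟩ := ht
      intro x hx
      rw [attachMap, Finset.mem_union] at hx
      refine Finset.mem_erase.2 ⟨?_, Finset.mem_univ x⟩
      rcases hx with hx | hx
      · exact ne_r_of_mem_erase_part r hB hx
      · exact Finset.ne_of_mem_erase (Finset.mem_filter.1 hx).1)
    (by
      intro x hx
      have hxr : x ≠ r := Finset.ne_of_mem_erase hx
      by_cases hxR : x ∈ σ.part r
      · have hpx : p x ∉ σ.part r := p_not_mem_part_r G r p d hstep hσ hxR hxr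
        have hBmem : σ.part (p x) ∈ σ.parts.erase (σ.part r) := by
          refine Finset.mem_erase.2 ⟨?_, σ.part_mem.2 (Finset.mem_univ (p x))⟩
          intro hc
          exact hpx (hc ▸ σ.mem_part (Finset.mem_univ (p x)))
        refine ⟨attachMap r p σ (σ.part (p x)), Finset.mem_image_of_mem _ hBmem, ?_⟩
        rw [attachMap, Finset.mem_union]
        right
        exact Finset.mem_filter.2 ⟨Finset.mem_erase.2 ⟨hxr, hxR⟩,
          σ.mem_part (Finset.mem_univ (p x))⟩
      · have hBmem : σ.part x ∈ σ.parts.erase (σ.part r) := by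
          refine Finset.mem_erase.2 ⟨?_, σ.part_mem.2 (Finset.mem_univ x)⟩
          intro hc
          exact hxR (hc ▸ σ.mem_part (Finset.mem_univ x))
        refine ⟨attachMap r p σ (σ.part x), Finset.mem_image_of_mem _ hBmem, ?_⟩
        rw [attachMap, Finset.mem_union]
        exact Or.inl (σ.mem_part (Finset.mem_univ x)))
    (by
      intro t ht
      simp only [mem_image] at ht
      obtain ⟨B, hB, rfl⟩ := ht
      obtain ⟨x, hx⟩ := σ.nonempty_of_mem_parts (Finset.mem_of_mem_erase hB)
      exact ⟨x, by rw [attachMap, Finset.mem_union]; exact Or.inl hx⟩)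

include hstep in
lemma fwdP_parts (σ : Finpartition (univ : Finset V)) (hσ : IsStablePartition G σ) :
    (fwdP G r p d hstep σ hσ).parts = (σ.parts.erase (σ.part r)).image (attachMap r p σ) := rfl

include hstep in
lemma attachMap_injOn (σ : Finpartition (univ : Finset V)) (hσ : IsStablePartition G σ) :
    ∀ B₁ ∈ σ.parts.erase (σ.part r), ∀ B₂ ∈ σ.parts.erase (σ.part r),
      attachMap r p σ B₁ = attachMap r p σ B₂ → B₁ = B₂ := by
  intro B₁ hB₁ B₂ hB₂ heq
  obtain ⟨x, hx⟩ := σ.nonempty_of_mem_parts (Finset.mem_of_mem_erase hB₁)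
  have hx1 : x ∈ attachMap r p σ B₂ := by
    rw [← heq, attachMap, Finset.mem_union]; exact Or.inl hx
  rw [attachMap, Finset.mem_union] at hx1
  rcases hx1 with hx1 | hx1
  · exact σ.eq_of_mem_parts (Finset.mem_of_mem_erase hB₁) (Finset.mem_of_mem_erase hB₂) hx hx1
  · have : x ∈ σ.part r := Finset.mem_of_mem_erase (Finset.mem_filter.1 hx1).1
    have hd1R := σ.disjoint (Finset.mem_of_mem_erase hB₁) (part_r_mem r σ)
      (Finset.ne_of_mem_erase hB₁)
    exact absurd this ((Finset.disjoint_left.1 hd1R) hx)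

include hstep in
lemma card_fwdP_parts (σ : Finpartition (univ : Finset V)) (hσ : IsStablePartition G σ) :
    (fwdP G r p d hstep σ hσ).parts.card + 1 = σ.parts.card := by
  rw [fwdP_parts, Finset.card_image_of_injOn (fun B₁ h₁ B₂ h₂ h =>
    attachMap_injOn G r p d hstep σ hσ B₁ h₁ B₂ h₂ h),
    Finset.card_erase_of_mem (part_r_mem r σ)]
  have : 0 < σ.parts.card := Finset.card_pos.2 ⟨_, part_r_mem r σ⟩
  omega

end Stable2
end StmtAux
namespace StmtAux
open Finset

section Stable3
variable {V : Type*} [Fintype V] [DecidableEq V] (G : SimpleGraph V)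
variable (r : V) (p : V → V) (d : V → ℕ)
variable (hd0 : ∀ v, d v = 0 ↔ v = r)
variable (hstep : ∀ v, v ≠ r → G.Adj v (p v) ∧ d (p v) + 1 = d v)
variable (hpr : p r = r)
variable (hadj : ∀ u v, G.Adj u v → p u = v ∨ p v = u)

include hd0 hstep in
lemma inRB_fwd (σ : Finpartition (univ : Finset V)) (hσ : IsStablePartition G σ) (v : V) :
    inRB r p d (fwdP G r p d hstep σ hσ) v = true ↔ (v ∈ σ.part r ∧ v ≠ r) := by
  set π := fwdP G r p d hstep σ hσ with hπ
  suffices key : ∀ k v, d v ≤ k →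
      (inRB r p d π v = true ↔ (v ∈ σ.part r ∧ v ≠ r)) from key (d v) v le_rfl
  intro k
  induction k with
  | zero =>
    intro v hv
    have hvr : v = r := (hd0 v).1 (Nat.le_zero.1 hv)
    rw [hvr, inRB_r r p d hd0]
    simp
  | succ k ih =>
    intro v hv
    by_cases hvr : v = r
    · rw [hvr, inRB_r r p d hd0]
      simp
    · obtain ⟨hadjv, hdp⟩ := hstep v hvr
      have IH := ih (p v) (by omega)
      rw [inRB_spec G r p d hd0 hstep]
      by_cases hvR : v ∈ σ.part r
      · have hpx : p v ∉ σ.part r := p_not_mem_part_r G r p d hstep hσ hvR hvr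
        have hBmem : σ.part (p v) ∈ σ.parts.erase (σ.part r) := by
          refine Finset.mem_erase.2 ⟨?_, σ.part_mem.2 (Finset.mem_univ (p v))⟩
          intro hc
          exact hpx (hc ▸ σ.mem_part (Finset.mem_univ (p v)))
        have hgmem : attachMap r p σ (σ.part (p v)) ∈ π.parts := by
          rw [hπ, fwdP_parts]
          exact Finset.mem_image_of_mem _ hBmem
        have hvmem : v ∈ attachMap r p σ (σ.part (p v)) := by
          rw [attachMap, Finset.mem_union]
          exact Or.inr (Finset.mem_filter.2 ⟨Finset.mem_erase.2 ⟨hvr, hvR⟩,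
            σ.mem_part (Finset.mem_univ (p v))⟩)
        have hpart : π.part v = attachMap r p σ (σ.part (p v)) := π.part_eq_of_mem hgmem hvmem
        have h1 : inRB r p d π (p v) = false := by
          rw [← Bool.not_eq_true, IH]
          rintro ⟨hc, -⟩
          exact hpx hc
        exact iff_of_true ⟨hvr, by
          rw [hpart, attachMap, Finset.mem_union]
          exact Or.inl (σ.mem_part (Finset.mem_univ (p v))), h1⟩ ⟨hvR, hvr⟩
      · have hBmem : σ.part v ∈ σ.parts.erase (σ.part r) := by
          refine Finset.mem_erase.2 ⟨?_, σ.part_mem.2 (Finset.mem_univ v)⟩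
          intro hc
          exact hvR (hc ▸ σ.mem_part (Finset.mem_univ v))
        have hgmem : attachMap r p σ (σ.part v) ∈ π.parts := by
          rw [hπ, fwdP_parts]
          exact Finset.mem_image_of_mem _ hBmem
        have hvmem : v ∈ attachMap r p σ (σ.part v) := by
          rw [attachMap, Finset.mem_union]
          exact Or.inl (σ.mem_part (Finset.mem_univ v))
        have hpart : π.part v = attachMap r p σ (σ.part v) := π.part_eq_of_mem hgmem hvmem
        apply iff_of_false
        · rintro ⟨-, hmem, hfalse⟩
          rw [hpart, attachMap, Finset.mem_union] at hmem
          rcases hmem with hmem | hmem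
          · exact hσ _ (σ.part_mem.2 (Finset.mem_univ v)) v (σ.mem_part (Finset.mem_univ v))
              (p v) hmem hadjv
          · have hin : inRB r p d π (p v) = true := IH.2
              ⟨Finset.mem_of_mem_erase (Finset.mem_filter.1 hmem).1,
               Finset.ne_of_mem_erase (Finset.mem_filter.1 hmem).1⟩
            simp [hfalse] at hin
        · rintro ⟨hc, -⟩
          exact hvR hc

include hd0 hstep in
lemma Rset_fwd (σ : Finpartition (univ : Finset V)) (hσ : IsStablePartition G σ) :
    Rset r p d (fwdP G r p d hstep σ hσ) = σ.part r := by
  ext x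
  rw [mem_Rset, inRB_fwd G r p d hd0 hstep σ hσ]
  by_cases hxr : x = r
  · rw [hxr]
    simp [r_mem_part_r r σ]
  · simp [hxr]

include hd0 hstep in
lemma leftInv (σ : Finpartition (univ : Finset V)) (hσ : IsStablePartition G σ) :
    bwdP G r p d hd0 hstep (fwdP G r p d hstep σ hσ) = σ := by
  apply Finpartition.ext
  rw [bwdP_parts, Rset_fwd G r p d hd0 hstep σ hσ, fwdP_parts, Finset.image_image]
  have key : ∀ B ∈ σ.parts.erase (σ.part r),
      ((fun B => B \ σ.part r) ∘ attachMap r p σ) B = B := by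
    intro B hB
    have hdisj := σ.disjoint (Finset.mem_of_mem_erase hB) (part_r_mem r σ)
      (Finset.ne_of_mem_erase hB)
    simp only [Function.comp]
    ext x
    rw [Finset.mem_sdiff, attachMap, Finset.mem_union]
    constructor
    · rintro ⟨hx | hx, hxR⟩
      · exact hx
      · exact absurd (Finset.mem_of_mem_erase (Finset.mem_filter.1 hx).1) hxR
    · intro hx
      exact ⟨Or.inl hx, Finset.disjoint_left.1 hdisj hx⟩
  rw [Finset.image_congr key]
  simp only [Finset.image_id']
  rw [Finset.insert_erase (part_r_mem r σ)]

include hd0 hstep hpr hadj in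
lemma rightInv (π : Finpartition ((univ : Finset V).erase r)) :
    fwdP G r p d hstep (bwdP G r p d hd0 hstep π)
      (bwdP_stable G r p d hd0 hstep hpr hadj π) = π := by
  set σ := bwdP G r p d hd0 hstep π with hσdef
  set R := Rset r p d π with hRdef
  have hpartr : σ.part r = R := σ.part_eq_of_mem
    (by rw [hσdef, bwdP_parts]; exact Finset.mem_insert_self _ _) (r_mem_Rset r p d)
  have hnotmem : R ∉ π.parts.image (fun B => B \ R) := by
    intro hc
    simp only [mem_image] at hc
    obtain ⟨B, hB, hBR⟩ := hc
    have : r ∈ B \ R := by rw [hBR]; exact r_mem_Rset r p d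
    exact Finset.ne_of_mem_erase (part_subset π hB (Finset.mem_sdiff.1 this).1) rfl
  have herase : σ.parts.erase (σ.part r) = π.parts.image (fun B => B \ R) := by
    rw [hpartr, hσdef, bwdP_parts, Finset.erase_insert hnotmem]
  apply Finpartition.ext
  rw [fwdP_parts, herase, Finset.image_image]
  have key : ∀ B ∈ π.parts, (attachMap r p σ ∘ (fun B => B \ R)) B = B := by
    intro B hB
    simp only [Function.comp]
    ext x
    rw [attachMap, hpartr, Finset.mem_union]
    constructor
    · rintro (hx | hx)
      · exact (Finset.mem_sdiff.1 hx).1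
      · obtain ⟨hx1, hx2⟩ := Finset.mem_filter.1 hx
        have hxr : x ≠ r := Finset.ne_of_mem_erase hx1
        have hxR : x ∈ R := Finset.mem_of_mem_erase hx1
        have hxin : inRB r p d π x = true :=
          ((mem_Rset r p d).1 hxR).resolve_left hxr
        obtain ⟨-, hys, -⟩ := (inRB_spec G r p d hd0 hstep π x).1 hxin
        have hxs : x ∈ (univ : Finset V).erase r :=
          Finset.mem_erase.2 ⟨hxr, Finset.mem_univ x⟩
        have hpx : p x ∈ B := (Finset.mem_sdiff.1 hx2).1
        have : π.part x = B := π.eq_of_mem_parts (π.part_mem.2 hxs) hB hys hpx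
        rw [← this]
        exact π.mem_part hxs
    · intro hx
      have hxs : x ∈ (univ : Finset V).erase r := part_subset π hB hx
      have hxr : x ≠ r := Finset.ne_of_mem_erase hxs
      by_cases hxR : x ∈ R
      · right
        have hxin : inRB r p d π x = true := ((mem_Rset r p d).1 hxR).resolve_left hxr
        obtain ⟨-, hys, hfalse⟩ := (inRB_spec G r p d hd0 hstep π x).1 hxin
        have hpartx : π.part x = B := π.part_eq_of_mem hB hx
        rw [hpartx] at hys
        have hpxr : p x ≠ r := Finset.ne_of_mem_erase (part_subset π hB hys)
        have hpxR : p x ∉ R := (not_mem_Rset r p d).2 ⟨hpxr, hfalse⟩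
        exact Finset.mem_filter.2 ⟨Finset.mem_erase.2 ⟨hxr, hxR⟩,
          Finset.mem_sdiff.2 ⟨hys, hpxR⟩⟩
      · exact Or.inl (Finset.mem_sdiff.2 ⟨hx, hxR⟩)
  rw [Finset.image_congr key]
  simp only [Finset.image_id']

/-- The central bijection: stable partitions of `univ` vs all partitions of `univ.erase r`. -/
noncomputable def stableEquiv :
    {σ : Finpartition (univ : Finset V) // IsStablePartition G σ} ≃
      Finpartition ((univ : Finset V).erase r) where
  toFun σp := fwdP G r p d hstep σp.1 σp.2
  invFun π := ⟨bwdP G r p d hd0 hstep π, bwdP_stable G r p d hd0 hstep hpr hadj π⟩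
  left_inv σp := Subtype.ext (leftInv G r p d hd0 hstep σp.1 σp.2)
  right_inv π := rightInv G r p d hd0 hstep hpr hadj π

end Stable3
end StmtAux
namespace StmtAux
open Finset SimpleGraph

section Tree
variable {V : Type*} [Fintype V] [DecidableEq V] {G : SimpleGraph V}

lemma tree_toolkit (hG : G.IsTree) (r : V) :
    ∃ (p : V → V) (d : V → ℕ),
      (∀ v, d v = 0 ↔ v = r) ∧
      (∀ v, v ≠ r → G.Adj v (p v) ∧ d (p v) + 1 = d v) ∧
      p r = r ∧
      (∀ u v, G.Adj u v → p u = v ∨ p v = u) := by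
  classical
  set W : ∀ v : V, G.Walk v r := fun v => (hG.existsUnique_path v r).choose with hWdef
  have hWpath : ∀ v, (W v).IsPath := fun v => (hG.existsUnique_path v r).choose_spec.1
  have hWuniq : ∀ v (q : G.Walk v r), q.IsPath → q = W v :=
    fun v q hq => (hG.existsUnique_path v r).choose_spec.2 q hq
  set d : V → ℕ := fun v => (W v).length with hd
  set p : V → V := fun v => (W v).getVert 1 with hp
  have hWr : W r = SimpleGraph.Walk.nil := SimpleGraph.Walk.isPath_iff_eq_nil.1 (hWpath r)
  have hdr : d r = 0 := by rw [hd]; simp only; rw [hWr]; rfl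
  have hpr : p r = r := by rw [hp]; simp only; rw [hWr]; rfl
  have hd0 : ∀ v, d v = 0 ↔ v = r := by
    intro v
    constructor
    · intro h
      exact SimpleGraph.Walk.eq_of_length_eq_zero h
    · intro h
      rw [h]; exact hdr
  have hstep : ∀ v, v ≠ r → G.Adj v (p v) ∧ d (p v) + 1 = d v := by
    intro v hvr
    obtain ⟨u, ha, q, hcons⟩ := SimpleGraph.Walk.exists_eq_cons_of_ne hvr (W v)
    have hq : q.IsPath := by
      have := hWpath v
      rw [hcons, SimpleGraph.Walk.cons_isPath_iff] at this
      exact this.1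
    have hqW : q = W u := hWuniq u q hq
    have hpv : p v = u := by
      rw [hp]; simp only; rw [hcons, SimpleGraph.Walk.getVert_cons_succ,
        SimpleGraph.Walk.getVert_zero]
    have hdv : d v = d u + 1 := by
      rw [hd]; simp only; rw [hcons, SimpleGraph.Walk.length_cons, hqW]
    rw [hpv]
    exact ⟨ha, by omega⟩
  -- parent uniqueness
  have hT5 : ∀ v u, G.Adj v u → d u + 1 = d v → p v = u := by
    intro v u hA hdu
    have hvnot : v ∉ (W u).support := by
      intro hmem
      have htake := (hWpath u).takeUntil hmem
      have hdrop := (hWpath u).dropUntil hmem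
      have hWv : (W u).dropUntil v hmem = W v := hWuniq v _ hdrop
      have hlen : ((W u).takeUntil v hmem).length + ((W u).dropUntil v hmem).length = d u := by
        have := congrArg SimpleGraph.Walk.length ((W u).take_spec hmem)
        rwa [SimpleGraph.Walk.length_append] at this
      have hpos : ((W u).takeUntil v hmem).length ≠ 0 := by
        intro h0
        exact hA.ne (SimpleGraph.Walk.eq_of_length_eq_zero h0).symm
      have : ((W u).dropUntil v hmem).length = d v := by rw [hWv]
      omega
    have hcpath : (SimpleGraph.Walk.cons hA (W u)).IsPath :=
      (SimpleGraph.Walk.cons_isPath_iff hA (W u)).2 ⟨hWpath u, hvnot⟩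
    have hcW : SimpleGraph.Walk.cons hA (W u) = W v := hWuniq v _ hcpath
    rw [hp]; simp only; rw [← hcW, SimpleGraph.Walk.getVert_cons_succ,
      SimpleGraph.Walk.getVert_zero]
  have hadj : ∀ u v, G.Adj u v → p u = v ∨ p v = u := by
    intro u v hA
    by_cases hmem : u ∈ (W v).support
    · right
      -- the path from v to u must be the single edge
      have htake := (hWpath v).takeUntil hmem
      have hdrop := (hWpath v).dropUntil hmem
      have hedge : (SimpleGraph.Walk.cons hA.symm SimpleGraph.Walk.nil : G.Walk v u).IsPath := by
        rw [SimpleGraph.Walk.cons_isPath_iff]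
        constructor
        · exact SimpleGraph.Walk.IsPath.nil
        · simp [hA.ne']
      have huniq := hG.existsUnique_path v u
      have heq : (W v).takeUntil u hmem = SimpleGraph.Walk.cons hA.symm SimpleGraph.Walk.nil := by
        rw [huniq.unique htake hedge]
      have hlen1 : ((W v).takeUntil u hmem).length = 1 := by rw [heq]; rfl
      have hWu : (W v).dropUntil u hmem = W u := hWuniq u _ hdrop
      have hlen : ((W v).takeUntil u hmem).length + ((W v).dropUntil u hmem).length = d v := by
        have := congrArg SimpleGraph.Walk.length ((W v).take_spec hmem)
        rwa [SimpleGraph.Walk.length_append] at this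
      have hdu : d u + 1 = d v := by
        have : ((W v).dropUntil u hmem).length = d u := by rw [hWu]
        omega
      exact hT5 v u hA.symm hdu
    · left
      have hcpath : (SimpleGraph.Walk.cons hA (W v)).IsPath :=
        (SimpleGraph.Walk.cons_isPath_iff hA (W v)).2 ⟨hWpath v, hmem⟩
      have hcW : SimpleGraph.Walk.cons hA (W v) = W u := hWuniq u _ hcpath
      rw [hp]; simp only; rw [← hcW, SimpleGraph.Walk.getVert_cons_succ,
        SimpleGraph.Walk.getVert_zero]
  exact ⟨p, d, hd0, hstep, hpr, hadj⟩

end Tree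
end StmtAux
/-- If `G` is a tree of order `n ≥ 1`, then `B(G) = bell (n-1)` and `T(G) = bell n`. -/
theorem stmt_1 {V : Type*} [Fintype V] [DecidableEq V] (G : SimpleGraph V) (n : ℕ)
    (hn : 1 ≤ n) (hcard : Fintype.card V = n) (hG : G.IsTree) :
    colB G = bell (n - 1) ∧ colT G = bell n := by
  classical
  have hne : Nonempty V := hG.isConnected.nonempty
  obtain ⟨r⟩ := hne
  obtain ⟨p, d, hd0, hstep, hpr, hadj⟩ := StmtAux.tree_toolkit hG r
  set E : {σ : Finpartition (univ : Finset V) // IsStablePartition G σ} ≃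
      Finpartition ((univ : Finset V).erase r)
    := StmtAux.stableEquiv G r p d hd0 hstep hpr hadj with hE
  have hfilter : ∀ f : Finpartition (univ : Finset V) → ℕ,
      ∑ P ∈ univ.filter (IsStablePartition G), f P
        = ∑ σ : {σ : Finpartition (univ : Finset V) // IsStablePartition G σ}, f σ.1 := by
    intro f
    rw [Finset.sum_subtype (p := IsStablePartition G) (univ.filter (IsStablePartition G))
      (by intro x; simp) f]
  have hcard_erase : ((univ : Finset V).erase r).card = n - 1 := by
    rw [Finset.card_erase_of_mem (Finset.mem_univ r), Finset.card_univ, hcard]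
  have hB : colB G = bell (n - 1) := by
    rw [colB]
    have h1 : (univ.filter (IsStablePartition G)).card
        = ∑ P ∈ univ.filter (IsStablePartition G), 1 := by rw [Finset.card_eq_sum_ones]
    rw [h1, hfilter (fun _ => 1)]
    have h2 : ∑ _σ : {σ : Finpartition (univ : Finset V) // IsStablePartition G σ}, 1
        = Fintype.card {σ : Finpartition (univ : Finset V) // IsStablePartition G σ} := by
      rw [Fintype.card_eq_sum_ones]
    rw [h2, Fintype.card_congr E, StmtAux.card_finpartition_eq_bell, hcard_erase]
  have hT : colT G = bell n := by
    rw [colT, hfilter (fun P => P.parts.card)]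
    have h3 : ∀ σ : {σ : Finpartition (univ : Finset V) // IsStablePartition G σ},
        σ.1.parts.card = (E σ).parts.card + 1 := by
      intro σ
      rw [hE]
      exact (StmtAux.card_fwdP_parts G r p d hstep σ.1 σ.2).symm
    rw [Finset.sum_congr rfl (fun σ _ => h3 σ)]
    have h4 : ∑ σ : {σ : Finpartition (univ : Finset V) // IsStablePartition G σ},
        ((E σ).parts.card + 1)
        = ∑ π : Finpartition ((univ : Finset V).erase r), (π.parts.card + 1) :=
      Fintype.sum_equiv E _ _ (fun σ => rfl)
    rw [h4, ← StmtAux.card_finpartition_insert (Finset.notMem_erase r univ)]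
    have h5 : insert r ((univ : Finset V).erase r) = univ :=
      Finset.insert_erase (Finset.mem_univ r)
    rw [show (Fintype.card (Finpartition (insert r ((univ : Finset V).erase r))))
      = Fintype.card (Finpartition (univ : Finset V)) by rw [h5]]
    rw [StmtAux.card_finpartition_eq_bell, Finset.card_univ, hcard]
  exact ⟨hB, hT⟩
end

section
/- Let C_n be the cycle graph of order n ≥ 3. Then B(C_n) = Σ_{j=1}^{n−1} (−1)^{j+1} B_{n−j} and T(C_n) = Σ_{j=1}^{n−1} (−1)^{j+1} B_{n−j+1}, where B_k is the k-th Bell number (the equalities hold as integers). -/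
open Finset SimpleGraph

namespace ColProof

open scoped Classical

variable {n : ℕ}

/-- one step along an arc map -/
def step (f : Fin n → Option (Fin n)) (o : Option (Fin n)) : Option (Fin n) := o.bind f

/-- reachability along an arc map -/
def reach (f : Fin n → Option (Fin n)) (i j : Fin n) : Prop :=
  ∃ k, (step f)^[k] (some i) = some j

/-- arc maps: strictly increasing partial maps, injective on their domain -/
def IsArcMap (f : Fin n → Option (Fin n)) : Prop :=
  (∀ i j, f i = some j → i < j) ∧ ∀ i₁ i₂ j, f i₁ = some j → f i₂ = some j → i₁ = i₂

lemma step_iterate_none (f : Fin n → Option (Fin n)) (k : ℕ) : (step f)^[k] none = none := by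
  induction k with
  | zero => rfl
  | succ k ih => rw [Function.iterate_succ_apply]; exact ih

lemma reach_refl (f : Fin n → Option (Fin n)) (i : Fin n) : reach f i i := ⟨0, rfl⟩

lemma reach_le {f : Fin n → Option (Fin n)} (hf : IsArcMap f) {i j : Fin n} {k : ℕ}
    (h : (step f)^[k] (some i) = some j) : i ≤ j := by
  induction k generalizing i with
  | zero => simp_all
  | succ k ih =>
    rw [Function.iterate_succ_apply] at h
    cases hfi : f i with
    | none => rw [show step f (some i) = f i from rfl, hfi, step_iterate_none] at h; simp at h
    | some m =>
      rw [show step f (some i) = f i from rfl, hfi] at h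
      exact le_of_lt (lt_of_lt_of_le (hf.1 i m hfi) (ih h))

lemma reach_le' {f : Fin n → Option (Fin n)} (hf : IsArcMap f) {i j : Fin n}
    (h : reach f i j) : i ≤ j := by obtain ⟨k, hk⟩ := h; exact reach_le hf hk

lemma reach_trans {f : Fin n → Option (Fin n)} {i j l : Fin n}
    (h1 : reach f i j) (h2 : reach f j l) : reach f i l := by
  obtain ⟨k1, hk1⟩ := h1; obtain ⟨k2, hk2⟩ := h2
  exact ⟨k2 + k1, by rw [Function.iterate_add_apply, hk1, hk2]⟩

lemma iterate_succ_some {f : Fin n → Option (Fin n)} {k : ℕ} {i j : Fin n}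
    (h : (step f)^[k] (some i) = some j) (hne : j ≠ i) :
    ∃ m, f i = some m ∧ reach f m j := by
  cases k with
  | zero => simp at h; exact absurd h.symm hne
  | succ k =>
    rw [Function.iterate_succ_apply] at h
    cases hfi : f i with
    | none => rw [show step f (some i) = f i from rfl, hfi, step_iterate_none] at h; simp at h
    | some m =>
      rw [show step f (some i) = f i from rfl, hfi] at h
      exact ⟨m, rfl, k, h⟩

lemma reach_total {f : Fin n → Option (Fin n)} {i j l : Fin n}
    (h1 : reach f i j) (h2 : reach f i l) : reach f j l ∨ reach f l j := by
  obtain ⟨k1, hk1⟩ := h1; obtain ⟨k2, hk2⟩ := h2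
  rcases le_total k1 k2 with h | h
  · left
    refine ⟨k2 - k1, ?_⟩
    rw [← hk1, ← Function.iterate_add_apply, Nat.sub_add_cancel h]; exact hk2
  · right
    refine ⟨k1 - k2, ?_⟩
    rw [← hk2, ← Function.iterate_add_apply, Nat.sub_add_cancel h]; exact hk1

lemma step_iterate_inj {f : Fin n → Option (Fin n)} (hf : IsArcMap f) {k : ℕ} {a b j : Fin n}
    (ha : (step f)^[k] (some a) = some j) (hb : (step f)^[k] (some b) = some j) : a = b := by
  induction k generalizing j with
  | zero => simp_all
  | succ k ih =>
    rw [Function.iterate_succ_apply'] at ha hb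
    cases ha' : (step f)^[k] (some a) with
    | none => rw [ha'] at ha; simp [step] at ha
    | some a' =>
      cases hb' : (step f)^[k] (some b) with
      | none => rw [hb'] at hb; simp [step] at hb
      | some b' =>
        rw [ha'] at ha; rw [hb'] at hb
        have : a' = b' := hf.2 a' b' j ha hb
        subst this
        exact ih ha' hb'

lemma reach_antitotal {f : Fin n → Option (Fin n)} (hf : IsArcMap f) {i j l : Fin n}
    (h1 : reach f i j) (h2 : reach f l j) : reach f i l ∨ reach f l i := by
  obtain ⟨k1, hk1⟩ := h1; obtain ⟨k2, hk2⟩ := h2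
  rcases le_total k1 k2 with h | h
  · right
    cases hc : (step f)^[k2 - k1] (some l) with
    | none =>
      exfalso
      have : (step f)^[k2] (some l) = none := by
        rw [show k2 = k1 + (k2 - k1) by omega, Function.iterate_add_apply, hc, step_iterate_none]
      rw [hk2] at this; simp at this
    | some c =>
      have : (step f)^[k1] (some c) = some j := by
        rw [← hc, ← Function.iterate_add_apply, show k1 + (k2-k1) = k2 by omega, hk2]
      have hci : c = i := step_iterate_inj hf this hk1
      exact ⟨k2 - k1, by rw [hc, hci]⟩
  · left
    cases hc : (step f)^[k1 - k2] (some i) with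
    | none =>
      exfalso
      have : (step f)^[k1] (some i) = none := by
        rw [show k1 = k2 + (k1 - k2) by omega, Function.iterate_add_apply, hc, step_iterate_none]
      rw [hk1] at this; simp at this
    | some c =>
      have : (step f)^[k2] (some c) = some j := by
        rw [← hc, ← Function.iterate_add_apply, show k2 + (k1-k2) = k1 by omega, hk1]
      have hci : c = l := step_iterate_inj hf this hk2
      exact ⟨k1 - k2, by rw [hc, hci]⟩

/-- the setoid of an arc map: same chain -/
noncomputable def arcSetoid (f : Fin n → Option (Fin n)) (hf : IsArcMap f) : Setoid (Fin n) where
  r i j := reach f i j ∨ reach f j i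
  iseqv := by
    refine ⟨fun i => Or.inl (reach_refl f i), fun h => h.symm, ?_⟩
    rintro i j l (hij | hji) (hjl | hlj)
    · exact Or.inl (reach_trans hij hjl)
    · exact reach_antitotal hf hij hlj
    · rcases reach_total hji hjl with h | h
      · exact Or.inl h
      · exact Or.inr h
    · exact Or.inr (reach_trans hlj hji)

noncomputable def toPartition (f : Fin n → Option (Fin n)) (hf : IsArcMap f) :
    Finpartition (univ : Finset (Fin n)) :=
  Finpartition.ofSetoid (arcSetoid f hf)

lemma mem_part_toPartition {f : Fin n → Option (Fin n)} {hf : IsArcMap f} {i j : Fin n} :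
    j ∈ (toPartition f hf).part i ↔ reach f i j ∨ reach f j i :=
  Finpartition.mem_part_ofSetoid_iff_rel


lemma eq_of_part (P Q : Finpartition (univ : Finset (Fin n)))
    (h : ∀ a b : Fin n, b ∈ P.part a ↔ b ∈ Q.part a) : P = Q := by
  ext t
  constructor
  · intro ht
    obtain ⟨a, ha⟩ := P.nonempty_of_mem_parts ht
    have h1 : P.part a = t := P.part_eq_of_mem ht ha
    have h2 : P.part a = Q.part a := by ext b; exact h a b
    rw [← h1, h2]; exact Q.part_mem.2 (mem_univ a)
  · intro ht
    obtain ⟨a, ha⟩ := Q.nonempty_of_mem_parts ht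
    have h1 : Q.part a = t := Q.part_eq_of_mem ht ha
    have h2 : P.part a = Q.part a := by ext b; exact h a b
    rw [← h1, ← h2]; exact P.part_mem.2 (mem_univ a)

section NextMap
variable (P : Finpartition (univ : Finset (Fin n)))

lemma partsEq_iff_mem' (a b : Fin n) : P.part a = P.part b ↔ b ∈ P.part a := by
  rw [P.mem_part_iff_part_eq_part (mem_univ b) (mem_univ a)]
  exact eq_comm

/-- the successor map of a partition : next element of the same block -/
noncomputable def nextMap (i : Fin n) : Option (Fin n) :=
  if h : ((P.part i).filter (fun j => i < j)).Nonempty then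
    some (((P.part i).filter (fun j => i < j)).min' h) else none

lemma nextMap_some_spec {i j : Fin n} (h : nextMap P i = some j) :
    i < j ∧ j ∈ P.part i ∧ ∀ k ∈ P.part i, i < k → j ≤ k := by
  unfold nextMap at h
  split_ifs at h with hne
  obtain ⟨rfl⟩ := Option.some_injective _ h.symm
  have hmem := Finset.min'_mem _ hne
  rw [mem_filter] at hmem
  exact ⟨hmem.2, hmem.1, fun k hk hik => Finset.min'_le _ _ (mem_filter.2 ⟨hk, hik⟩)⟩

lemma nextMap_none_spec {i : Fin n} (h : nextMap P i = none) :
    ∀ k ∈ P.part i, ¬ i < k := by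
  intro k hk hik
  unfold nextMap at h
  rw [dif_pos ⟨k, mem_filter.2 ⟨hk, hik⟩⟩] at h
  simp at h

lemma nextMap_isSome_of_mem {i j : Fin n} (hj : j ∈ P.part i) (hij : i < j) :
    ∃ m, nextMap P i = some m := by
  unfold nextMap
  rw [dif_pos ⟨j, mem_filter.2 ⟨hj, hij⟩⟩]
  exact ⟨_, rfl⟩

lemma isArcMap_nextMap : IsArcMap (nextMap P) := by
  constructor
  · intro i j h; exact (nextMap_some_spec P h).1
  · intro i₁ i₂ j h₁ h₂
    obtain ⟨hlt₁, hmem₁, hmin₁⟩ := nextMap_some_spec P h₁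
    obtain ⟨hlt₂, hmem₂, hmin₂⟩ := nextMap_some_spec P h₂
    have hp : P.part i₁ = P.part i₂ := by
      rw [(partsEq_iff_mem' P i₁ j).2 hmem₁, (partsEq_iff_mem' P i₂ j).2 hmem₂]
    by_contra hne
    rcases lt_or_gt_of_ne hne with h | h
    · have : i₂ ∈ P.part i₁ := hp ▸ P.mem_part (mem_univ i₂)
      exact absurd (hmin₁ i₂ this h) (not_le.2 hlt₂)
    · have : i₁ ∈ P.part i₂ := hp ▸ P.mem_part (mem_univ i₁)
      exact absurd (hmin₂ i₁ this h) (not_le.2 hlt₁)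

lemma part_of_reach {i j : Fin n} (h : reach (nextMap P) i j) : j ∈ P.part i := by
  obtain ⟨k, hk⟩ := h
  induction k generalizing i with
  | zero =>
    simp only [Function.iterate_zero, id_eq, Option.some_inj] at hk
    subst hk; exact P.mem_part (mem_univ i)
  | succ k ih =>
    rw [Function.iterate_succ_apply] at hk
    cases hfi : nextMap P i with
    | none => rw [show step (nextMap P) (some i) = nextMap P i from rfl, hfi, step_iterate_none] at hk; simp at hk
    | some m =>
      rw [show step (nextMap P) (some i) = nextMap P i from rfl, hfi] at hk
      have hm : m ∈ P.part i := (nextMap_some_spec P hfi).2.1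
      have : j ∈ P.part m := ih hk
      rwa [(partsEq_iff_mem' P i m).2 hm]

lemma reach_of_mem : ∀ d (i j : Fin n), j.val - i.val = d → j ∈ P.part i → i ≤ j →
    reach (nextMap P) i j := by
  intro d
  induction d using Nat.strong_induction_on with
  | _ d IH =>
    intro i j hd hj hij
    rcases eq_or_lt_of_le hij with rfl | hlt
    · exact reach_refl _ _
    · obtain ⟨m, hm⟩ := nextMap_isSome_of_mem P hj hlt
      obtain ⟨him, hmem, hmin⟩ := nextMap_some_spec P hm
      have hmj : m ≤ j := hmin j hj hlt
      have hjm : j ∈ P.part m := by rwa [(partsEq_iff_mem' P i m).2 hmem] at hj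
      have hrec : reach (nextMap P) m j :=
        IH (j.val - m.val) (by have := him; have := hlt; omega) m j rfl hjm hmj
      obtain ⟨k, hk⟩ := hrec
      exact ⟨k + 1, by rw [Function.iterate_succ_apply,
        show step (nextMap P) (some i) = nextMap P i from rfl, hm]; exact hk⟩

lemma mem_part_iff_rel {i j : Fin n} :
    j ∈ P.part i ↔ reach (nextMap P) i j ∨ reach (nextMap P) j i := by
  constructor
  · intro h
    rcases le_total i j with hij | hji
    · exact Or.inl (reach_of_mem P _ i j rfl h hij)
    · have hpe : P.part i = P.part j := (partsEq_iff_mem' P i j).2 h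
      have : i ∈ P.part j := by rw [← hpe]; exact P.mem_part (mem_univ i)
      exact Or.inr (reach_of_mem P _ j i rfl this hji)
  · rintro (h | h)
    · exact part_of_reach P h
    · have := part_of_reach P h
      have hpe : P.part j = P.part i := (partsEq_iff_mem' P j i).2 this
      rw [← hpe]; exact P.mem_part (mem_univ j)

lemma toPartition_nextMap : toPartition (nextMap P) (isArcMap_nextMap P) = P := by
  apply eq_of_part
  intro a b
  rw [mem_part_toPartition, mem_part_iff_rel]

lemma nextMap_toPartition (f : Fin n → Option (Fin n)) (hf : IsArcMap f) :
    nextMap (toPartition f hf) = f := by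
  funext i
  cases hfi : f i with
  | none =>
    unfold nextMap
    rw [dif_neg]
    rintro ⟨j, hj⟩
    rw [mem_filter, mem_part_toPartition] at hj
    obtain ⟨hrel, hij⟩ := hj
    rcases hrel with ⟨k, hk⟩ | hji
    · rcases eq_or_ne j i with rfl | hne
      · exact lt_irrefl _ hij
      · obtain ⟨m, hm, _⟩ := iterate_succ_some hk hne
        rw [hfi] at hm; simp at hm
    · exact absurd (reach_le' hf hji) (not_le.2 hij)
  | some m =>
    have hst : step f (some i) = f i := rfl
    have hreach : reach f i m := ⟨1, by rw [Function.iterate_one, hst, hfi]⟩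
    have hmem : m ∈ ((toPartition f hf).part i).filter (fun j => i < j) :=
      mem_filter.2 ⟨mem_part_toPartition.2 (Or.inl hreach), hf.1 i m hfi⟩
    unfold nextMap
    rw [dif_pos ⟨m, hmem⟩]
    congr 1
    apply le_antisymm (Finset.min'_le _ _ hmem)
    apply Finset.le_min'
    intro y hy
    rw [mem_filter, mem_part_toPartition] at hy
    obtain ⟨hrel, hiy⟩ := hy
    rcases hrel with ⟨k, hk⟩ | hyi
    · rcases eq_or_ne y i with rfl | hne
      · exact absurd hiy (lt_irrefl _)
      · obtain ⟨m', hm', hr⟩ := iterate_succ_some hk hne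
        rw [hfi] at hm'
        obtain ⟨rfl⟩ := Option.some_injective _ hm'
        exact reach_le' hf hr
    · exact absurd (reach_le' hf hyi) (not_le.2 hiy)

/-- the number of blocks equals the number of chain-ends -/
lemma card_parts_eq_nones : P.parts.card = (univ.filter fun i => nextMap P i = none).card := by
  apply card_bij (fun t ht => t.max' (P.nonempty_of_mem_parts ht))
  · intro t ht
    set m := t.max' (P.nonempty_of_mem_parts ht) with hm
    have hmt : m ∈ t := t.max'_mem _
    rw [mem_filter]
    refine ⟨mem_univ _, ?_⟩
    unfold nextMap
    rw [dif_neg]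
    rintro ⟨j, hj⟩
    rw [mem_filter] at hj
    have : P.part m = t := P.part_eq_of_mem ht hmt
    exact absurd (t.le_max' j (this ▸ hj.1)) (not_le.2 hj.2)
  · intro t₁ ht₁ t₂ ht₂ heq
    have h1 : t₁.max' (P.nonempty_of_mem_parts ht₁) ∈ t₁ := Finset.max'_mem _ _
    have h2 : t₂.max' (P.nonempty_of_mem_parts ht₂) ∈ t₂ := Finset.max'_mem _ _
    exact P.eq_of_mem_parts ht₁ ht₂ h1 (heq ▸ h2)
  · intro i hi
    rw [mem_filter] at hi
    refine ⟨P.part i, P.part_mem.2 (mem_univ i), ?_⟩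
    apply le_antisymm
    · apply Finset.max'_le
      intro y hy
      by_contra hlt
      exact nextMap_none_spec P hi.2 y hy (lt_of_not_ge hlt)
    · exact Finset.le_max' _ _ (P.mem_part (mem_univ i))

end NextMap

lemma stable_iff {G : SimpleGraph (Fin n)} (P : Finpartition (univ : Finset (Fin n))) :
    IsStablePartition G P ↔ ∀ u v : Fin n, v ∈ P.part u → ¬ G.Adj u v := by
  constructor
  · intro h u v hv
    exact h (P.part u) (P.part_mem.2 (mem_univ u)) u (P.mem_part (mem_univ u)) v hv
  · intro h t ht u hu v hv
    have : P.part u = t := P.part_eq_of_mem ht hu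
    exact h u v (this ▸ hv)

/-- no arc between consecutive vertices -/
def NoUnit (f : Fin n → Option (Fin n)) : Prop :=
  ∀ i j, f i = some j → (j : ℕ) ≠ (i : ℕ) + 1

lemma stable_path_iff_noUnit (P : Finpartition (univ : Finset (Fin n))) :
    IsStablePartition (pathGraph n) P ↔ NoUnit (nextMap P) := by
  rw [stable_iff]
  constructor
  · intro h i j hij hval
    obtain ⟨hlt, hmem, -⟩ := nextMap_some_spec P hij
    exact h i j hmem (pathGraph_adj.2 (Or.inl hval.symm))
  · intro h u v hv hadj
    rw [pathGraph_adj] at hadj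
    have key : ∀ a b : Fin n, b ∈ P.part a → (a : ℕ) + 1 = (b : ℕ) → False := by
      intro a b hb hab
      have hlt : a < b := by rw [Fin.lt_def]; omega
      obtain ⟨m, hm⟩ := nextMap_isSome_of_mem P hb hlt
      obtain ⟨ham, hmem, hmin⟩ := nextMap_some_spec P hm
      have := hmin b hb hlt
      have : (m : ℕ) = (a : ℕ) + 1 := by
        rw [Fin.lt_def] at ham hlt
        rw [Fin.le_def] at this
        omega
      exact h a m hm this
    rcases hadj with hadj | hadj
    · exact key u v hv hadj
    · have hpe : P.part u = P.part v := (partsEq_iff_mem' P u v).2 hv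
      have : u ∈ P.part v := by rw [← hpe]; exact P.mem_part (mem_univ u)
      exact key v u this hadj

/-- partition associated to an arbitrary map (junk value if not an arc map) -/
noncomputable def toPart (f : Fin n → Option (Fin n)) : Finpartition (univ : Finset (Fin n)) :=
  if h : IsArcMap f then toPartition f h else ⊥

lemma toPart_nextMap (P : Finpartition (univ : Finset (Fin n))) : toPart (nextMap P) = P := by
  rw [toPart, dif_pos (isArcMap_nextMap P), toPartition_nextMap]

lemma nextMap_toPart {f : Fin n → Option (Fin n)} (hf : IsArcMap f) :
    nextMap (toPart f) = f := by
  rw [toPart, dif_pos hf, nextMap_toPartition]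

lemma stable_toPart_iff {f : Fin n → Option (Fin n)} (hf : IsArcMap f) :
    IsStablePartition (pathGraph n) (toPart f) ↔ NoUnit f := by
  rw [stable_path_iff_noUnit, nextMap_toPart hf]

/-- number of chain ends -/
noncomputable def nones (f : Fin n → Option (Fin n)) : ℕ :=
  (univ.filter fun i => f i = none).card

lemma nones_nextMap (P : Finpartition (univ : Finset (Fin n))) :
    nones (nextMap P) = P.parts.card := (card_parts_eq_nones P).symm

/-- transfer sums over partitions to sums over arc maps -/
lemma sum_transfer (q : Finpartition (univ : Finset (Fin n)) → Prop)
    (v : (Fin n → Option (Fin n)) → ℕ) :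
    ∑ P ∈ univ.filter q, v (nextMap P)
      = ∑ f ∈ univ.filter (fun f => IsArcMap f ∧ q (toPart f)), v f := by
  apply Finset.sum_nbij' (fun P => nextMap P) (fun f => toPart f)
  · intro P hP
    rw [mem_filter] at hP ⊢
    exact ⟨mem_univ _, isArcMap_nextMap P, by rw [toPart_nextMap]; exact hP.2⟩
  · intro f hf
    rw [mem_filter] at hf ⊢
    exact ⟨mem_univ _, hf.2.2⟩
  · intro P _
    exact toPart_nextMap P
  · intro f hf
    rw [mem_filter] at hf
    exact nextMap_toPart hf.2.1
  · intro P _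
    rfl

lemma arc_last_none {f : Fin (n+1) → Option (Fin (n+1))} (hf : IsArcMap f) :
    f (Fin.last n) = none := by
  cases hfj : f (Fin.last n) with
  | none => rfl
  | some j => exact absurd (hf.1 _ j hfj) (not_lt.2 (Fin.le_last j))

/-- shift arcs down by one (deleting unit gaps) -/
def shiftF (f : Fin (n+1) → Option (Fin (n+1))) (i : Fin n) : Option (Fin n) :=
  (f i.castSucc).map (fun j => ⟨j.val - 1, by have := j.2; have := i.2; omega⟩)

def shiftB (g : Fin n → Option (Fin n)) (x : Fin (n+1)) : Option (Fin (n+1)) :=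
  if h : x.val < n then (g ⟨x.val, h⟩).map (fun k => ⟨k.val + 1, by have := k.2; omega⟩)
  else none

lemma shiftF_isArcMap {f : Fin (n+1) → Option (Fin (n+1))} (hf : IsArcMap f)
    (hnu : NoUnit f) : IsArcMap (shiftF f) := by
  constructor
  · intro i k hk
    rw [shiftF, Option.map_eq_some_iff] at hk
    obtain ⟨j, hj, hjk⟩ := hk
    have h1 : i.castSucc < j := hf.1 _ _ hj
    have h2 : (j : ℕ) ≠ (i : ℕ) + 1 := by simpa using hnu _ _ hj
    rw [Fin.lt_def] at h1 ⊢
    simp only [Fin.coe_castSucc] at h1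
    rw [← hjk]
    simp only []
    omega
  · intro i₁ i₂ k h₁ h₂
    rw [shiftF, Option.map_eq_some_iff] at h₁ h₂
    obtain ⟨j₁, hj₁, hjk₁⟩ := h₁
    obtain ⟨j₂, hj₂, hjk₂⟩ := h₂
    have e1 : i₁.castSucc < j₁ := hf.1 _ _ hj₁
    have e2 : i₂.castSucc < j₂ := hf.1 _ _ hj₂
    rw [Fin.lt_def] at e1 e2
    have : j₁ = j₂ := by
      have v1 : (j₁ : ℕ) - 1 = (k : ℕ) := congrArg Fin.val hjk₁
      have v2 : (j₂ : ℕ) - 1 = (k : ℕ) := congrArg Fin.val hjk₂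
      apply Fin.ext
      simp only [Fin.coe_castSucc] at e1 e2
      omega
    subst this
    exact Fin.castSucc_injective _ (hf.2 _ _ _ hj₁ hj₂)

lemma shiftB_isArcMap {g : Fin n → Option (Fin n)} (hg : IsArcMap g) :
    IsArcMap (shiftB g) ∧ NoUnit (shiftB g) := by
  have hsome : ∀ x j, shiftB g x = some j →
      ∃ hx : x.val < n, ∃ k, g ⟨x.val, hx⟩ = some k ∧ (j : ℕ) = (k : ℕ) + 1 := by
    intro x j hxj
    rw [shiftB] at hxj
    split_ifs at hxj with hx
    · rw [Option.map_eq_some_iff] at hxj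
      obtain ⟨k, hk, hkj⟩ := hxj
      exact ⟨hx, k, hk, by rw [← hkj]⟩
  refine ⟨⟨?_, ?_⟩, ?_⟩
  · intro x j hxj
    obtain ⟨hx, k, hk, hkj⟩ := hsome x j hxj
    have := hg.1 _ _ hk
    rw [Fin.lt_def] at this ⊢
    simp only [] at this
    omega
  · intro x₁ x₂ j h₁ h₂
    obtain ⟨hx₁, k₁, hk₁, hkj₁⟩ := hsome x₁ j h₁
    obtain ⟨hx₂, k₂, hk₂, hkj₂⟩ := hsome x₂ j h₂
    have : k₁ = k₂ := Fin.ext (by omega)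
    subst this
    have := hg.2 _ _ _ hk₁ hk₂
    have := congrArg Fin.val this
    exact Fin.ext (by simpa using this)
  · intro x j hxj
    obtain ⟨hx, k, hk, hkj⟩ := hsome x j hxj
    have := hg.1 _ _ hk
    rw [Fin.lt_def] at this
    simp only [] at this
    omega

lemma shiftB_shiftF {f : Fin (n+1) → Option (Fin (n+1))} (hf : IsArcMap f) :
    shiftB (shiftF f) = f := by
  funext x
  rw [shiftB]
  split_ifs with hx
  · have hcast : (⟨x.val, hx⟩ : Fin n).castSucc = x := Fin.ext rfl
    rw [shiftF, hcast, Option.map_map]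
    cases hfx : f x with
    | none => rfl
    | some j =>
      have : x < j := hf.1 _ _ hfx
      rw [Fin.lt_def] at this
      simp only [Option.map_some, Function.comp]
      congr 1
      exact Fin.ext (by simp; omega)
  · have : x = Fin.last n := Fin.ext (by have := x.2; simp; omega)
    rw [this, arc_last_none hf]

lemma shiftF_shiftB (g : Fin n → Option (Fin n)) : shiftF (shiftB g) = g := by
  funext i
  have hlt : (i.castSucc : Fin (n+1)).val < n := by simpa using i.2
  rw [shiftF, shiftB, dif_pos hlt]
  have : (⟨(i.castSucc : Fin (n+1)).val, hlt⟩ : Fin n) = i := Fin.ext (by simp)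
  rw [this, Option.map_map]
  cases hgi : g i with
  | none => rfl
  | some k =>
    simp only [Option.map_some, Function.comp_apply]
    exact congrArg some (Fin.ext (by simp))

lemma nones_shiftF {f : Fin (n+1) → Option (Fin (n+1))} (hf : IsArcMap f) :
    nones f = nones (shiftF f) + 1 := by
  have hset : (univ.filter fun x : Fin (n+1) => f x = none)
      = insert (Fin.last n)
        ((univ.filter fun i : Fin n => shiftF f i = none).image Fin.castSucc) := by
    ext x
    simp only [mem_filter, mem_univ, true_and, mem_insert, mem_image]
    constructor
    · intro hfx
      rcases eq_or_ne x (Fin.last n) with rfl | hne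
      · exact Or.inl rfl
      · refine Or.inr ⟨x.castPred hne, ⟨?_, ?_⟩⟩
        · rw [shiftF, Fin.castSucc_castPred, hfx]
          rfl
        · exact Fin.castSucc_castPred x hne
    · rintro (rfl | ⟨i, hi, rfl⟩)
      · exact arc_last_none hf
      · rw [shiftF, Option.map_eq_none_iff] at hi
        exact hi
  rw [nones, hset, card_insert_of_notMem, card_image_of_injective _ (Fin.castSucc_injective n)]
  · rfl
  · rw [mem_image]
    rintro ⟨i, _, hi⟩
    exact (Fin.castSucc_lt_last i).ne hi

lemma sum_shift (w : ℕ → ℕ) :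
    ∑ f ∈ univ.filter (fun f : Fin (n+1) → Option (Fin (n+1)) => IsArcMap f ∧ NoUnit f),
        w (nones f)
      = ∑ g ∈ univ.filter (fun g : Fin n → Option (Fin n) => IsArcMap g), w (nones g + 1) := by
  apply Finset.sum_nbij' shiftF shiftB
  · intro f hfm
    rw [mem_filter] at hfm ⊢
    exact ⟨mem_univ _, shiftF_isArcMap hfm.2.1 hfm.2.2⟩
  · intro g hgm
    rw [mem_filter] at hgm ⊢
    exact ⟨mem_univ _, shiftB_isArcMap hgm.2⟩
  · intro f hfm
    rw [mem_filter] at hfm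
    exact shiftB_shiftF hfm.2.1
  · intro g _
    exact shiftF_shiftB g
  · intro f hfm
    rw [mem_filter] at hfm
    rw [nones_shiftF hfm.2.1]

/-- restriction of an arc map on `Fin (n+1)` to `Fin n`, dropping arcs into `last` -/
def res (f : Fin (n+1) → Option (Fin (n+1))) (i : Fin n) : Option (Fin n) :=
  (f i.castSucc).bind (fun j => if h : j = Fin.last n then none else some (j.castPred h))

noncomputable def lastPre (f : Fin (n+1) → Option (Fin (n+1))) : Option (Fin n) :=
  if h : (univ.filter fun i : Fin n => f i.castSucc = some (Fin.last n)).Nonempty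
  then some ((univ.filter fun i : Fin n => f i.castSucc = some (Fin.last n)).min' h) else none

def extMap (g : Fin n → Option (Fin n)) (o : Option (Fin n)) (x : Fin (n+1)) :
    Option (Fin (n+1)) :=
  if hx : x.val < n then
    (if o = some (⟨x.val, hx⟩ : Fin n) then some (Fin.last n)
     else (g ⟨x.val, hx⟩).map Fin.castSucc)
  else none

lemma res_some {f : Fin (n+1) → Option (Fin (n+1))} {i : Fin n} {k : Fin n}
    (h : res f i = some k) : f i.castSucc = some k.castSucc := by
  rw [res, Option.bind_eq_some_iff] at h
  obtain ⟨j, hj, hjk⟩ := h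
  split_ifs at hjk with hl
  obtain ⟨rfl⟩ := Option.some_injective _ hjk.symm
  rwa [Fin.castSucc_castPred]

lemma res_isArcMap {f : Fin (n+1) → Option (Fin (n+1))} (hf : IsArcMap f) :
    IsArcMap (res f) := by
  constructor
  · intro i k h
    have := hf.1 _ _ (res_some h)
    rw [Fin.lt_def] at this ⊢
    simpa using this
  · intro i₁ i₂ k h₁ h₂
    have := hf.2 _ _ _ (res_some h₁) (res_some h₂)
    exact Fin.castSucc_injective _ this

lemma extMap_some {g : Fin n → Option (Fin n)} {o : Option (Fin n)} {x : Fin (n+1)}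
    {j : Fin (n+1)} (h : extMap g o x = some j) :
    ∃ hx : x.val < n, (o = some (⟨x.val, hx⟩ : Fin n) ∧ j = Fin.last n) ∨
      (∃ k, g ⟨x.val, hx⟩ = some k ∧ j = k.castSucc) := by
  rw [extMap] at h
  split_ifs at h with hx ho
  · exact ⟨hx, Or.inl ⟨ho, (Option.some_injective _ h).symm⟩⟩
  · rw [Option.map_eq_some_iff] at h
    obtain ⟨k, hk, hkj⟩ := h
    exact ⟨hx, Or.inr ⟨k, hk, hkj.symm⟩⟩

lemma extMap_isArcMap {g : Fin n → Option (Fin n)} {o : Option (Fin n)} (hg : IsArcMap g) :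
    IsArcMap (extMap g o) := by
  constructor
  · intro x j h
    obtain ⟨hx, hcase⟩ := extMap_some h
    rcases hcase with ⟨-, rfl⟩ | ⟨k, hk, rfl⟩
    · rw [Fin.lt_def]; simpa using hx
    · have := hg.1 _ _ hk
      rw [Fin.lt_def] at this ⊢
      simpa using this
  · intro x₁ x₂ j h₁ h₂
    obtain ⟨hx₁, hc₁⟩ := extMap_some h₁
    obtain ⟨hx₂, hc₂⟩ := extMap_some h₂
    rcases hc₁ with ⟨ho₁, rfl⟩ | ⟨k₁, hk₁, rfl⟩
    · rcases hc₂ with ⟨ho₂, -⟩ | ⟨k₂, hk₂, habs⟩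
      · rw [ho₁] at ho₂
        have : (⟨x₁.val, hx₁⟩ : Fin n) = ⟨x₂.val, hx₂⟩ := Option.some_injective _ ho₂
        exact Fin.ext (by have := congrArg Fin.val this; simpa using this)
      · exact absurd habs.symm (Fin.castSucc_lt_last k₂).ne
    · rcases hc₂ with ⟨ho₂, habs⟩ | ⟨k₂, hk₂, hkk⟩
      · exact absurd habs (Fin.castSucc_lt_last k₁).ne
      · have : k₁ = k₂ := Fin.castSucc_injective _ hkk
        subst this
        have := hg.2 _ _ _ hk₁ hk₂
        exact Fin.ext (by have := congrArg Fin.val this; simpa using this)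

lemma extMap_res {g : Fin n → Option (Fin n)} {o : Option (Fin n)}
    (ho : ∀ i, o = some i → g i = none) : res (extMap g o) = g := by
  funext i
  have hx : (i.castSucc : Fin (n+1)).val < n := by simpa using i.2
  have hidx : (⟨(i.castSucc : Fin (n+1)).val, hx⟩ : Fin n) = i := Fin.ext rfl
  rw [res, extMap, dif_pos hx, hidx]
  by_cases hoi : o = some i
  · rw [if_pos hoi, Option.bind_some, dif_pos rfl, ho i hoi]
  · rw [if_neg hoi]
    cases hgi : g i with
    | none => rfl
    | some k =>
      simp only [Option.map_some, Option.bind_some]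
      rw [dif_neg (Fin.castSucc_lt_last k).ne]
      rw [Fin.castPred_castSucc]

lemma lastPre_extMap {g : Fin n → Option (Fin n)} (o : Option (Fin n)) :
    lastPre (extMap g o) = o := by
  have key : ∀ i : Fin n, (extMap g o i.castSucc = some (Fin.last n)) ↔ o = some i := by
    intro i
    have hx : (i.castSucc : Fin (n+1)).val < n := by simpa using i.2
    have hidx : (⟨(i.castSucc : Fin (n+1)).val, hx⟩ : Fin n) = i := Fin.ext rfl
    rw [extMap, dif_pos hx, hidx]
    constructor
    · intro h
      by_cases hoi : o = some i
      · exact hoi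
      · rw [if_neg hoi, Option.map_eq_some_iff] at h
        obtain ⟨k, -, hk⟩ := h
        exact absurd hk (Fin.castSucc_lt_last k).ne
    · intro h
      rw [if_pos h]
  cases o with
  | none =>
    rw [lastPre, dif_neg]
    rintro ⟨i, hi⟩
    rw [mem_filter] at hi
    exact absurd ((key i).1 hi.2) (by simp)
  | some i₀ =>
    have hne : (univ.filter fun i : Fin n => extMap g (some i₀) i.castSucc
        = some (Fin.last n)).Nonempty := ⟨i₀, mem_filter.2 ⟨mem_univ _, (key i₀).2 rfl⟩⟩
    rw [lastPre, dif_pos hne]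
    congr 1
    have := Finset.min'_mem _ hne
    rw [mem_filter] at this
    exact Option.some_injective _ ((key _).1 this.2).symm

lemma lastPre_eq_some {f : Fin (n+1) → Option (Fin (n+1))} {i : Fin n}
    (h : lastPre f = some i) : f i.castSucc = some (Fin.last n) := by
  rw [lastPre] at h
  split_ifs at h with hne
  obtain ⟨rfl⟩ := Option.some_injective _ h.symm
  have := Finset.min'_mem _ hne
  rw [mem_filter] at this
  exact this.2

lemma lastPre_res_none {f : Fin (n+1) → Option (Fin (n+1))} {i : Fin n}
    (h : lastPre f = some i) : res f i = none := by
  rw [res, lastPre_eq_some h, Option.bind_some, dif_pos rfl]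

lemma extMap_lastPre {f : Fin (n+1) → Option (Fin (n+1))} (hf : IsArcMap f) :
    extMap (res f) (lastPre f) = f := by
  funext x
  rw [extMap]
  split_ifs with hx ho
  · -- lastPre f = some ⟨x.val, hx⟩
    have := lastPre_eq_some ho
    have hcast : ((⟨x.val, hx⟩ : Fin n).castSucc : Fin (n+1)) = x := Fin.ext rfl
    rw [hcast] at this
    exact this.symm
  · -- lastPre f ≠ some ⟨x.val, hx⟩, so f x ≠ some last
    have hcast : ((⟨x.val, hx⟩ : Fin n).castSucc : Fin (n+1)) = x := Fin.ext rfl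
    have hfx : f x ≠ some (Fin.last n) := by
      intro habs
      apply ho
      have hne : (univ.filter fun i : Fin n => f i.castSucc
          = some (Fin.last n)).Nonempty :=
        ⟨⟨x.val, hx⟩, mem_filter.2 ⟨mem_univ _, by rw [hcast]; exact habs⟩⟩
      rw [lastPre, dif_pos hne]
      congr 1
      have hm := Finset.min'_mem _ hne
      rw [mem_filter] at hm
      have h2 : f ((⟨x.val, hx⟩ : Fin n).castSucc) = some (Fin.last n) := by
        rw [hcast]; exact habs
      have := hf.2 _ _ _ hm.2 h2
      exact Fin.castSucc_injective _ this
    rw [res, hcast]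
    cases hfval : f x with
    | none => rfl
    | some j =>
      have hj : j ≠ Fin.last n := fun hh => hfx (hh ▸ hfval)
      simp only [Option.bind_some]
      rw [dif_neg hj]
      simp only [Option.map_some]
      rw [Fin.castSucc_castPred]
  · -- x = last
    have : x = Fin.last n := Fin.ext (by have := x.2; simp; omega)
    rw [this, arc_last_none hf]

lemma fiber_card {g : Fin n → Option (Fin n)} (hg : IsArcMap g) :
    ((univ.filter fun f : Fin (n+1) → Option (Fin (n+1)) => IsArcMap f).filter
      fun f => res f = g).card = nones g + 1 := by
  have hcard : (insert none ((univ.filter fun i => g i = none).image some)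
      : Finset (Option (Fin n))).card = nones g + 1 := by
    rw [card_insert_of_notMem (by simp), card_image_of_injective _ (Option.some_injective _)]
    rw [nones]
  rw [← hcard]
  apply card_nbij' lastPre (extMap g)
  · intro f hf
    rw [mem_coe, mem_filter, mem_filter] at hf
    obtain ⟨⟨-, harc⟩, hres⟩ := hf
    cases hlp : lastPre f with
    | none => simp
    | some i =>
      simp only [mem_coe, mem_insert, mem_image, mem_filter]
      exact Or.inr ⟨i, ⟨mem_univ _, by rw [← hres]; exact lastPre_res_none hlp⟩, rfl⟩
  · intro o ho
    have ho' : ∀ i, o = some i → g i = none := by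
      intro i hoi
      subst hoi
      simp only [mem_coe, mem_insert, mem_image, mem_filter, mem_univ, true_and] at ho
      rcases ho with h | ⟨i', hi', he⟩
      · exact absurd h (by simp)
      · obtain ⟨rfl⟩ := Option.some_injective _ he
        exact hi'
    rw [mem_coe, mem_filter, mem_filter]
    exact ⟨⟨mem_univ _, extMap_isArcMap hg⟩, extMap_res ho'⟩
  · intro f hf
    rw [mem_coe, mem_filter, mem_filter] at hf
    rw [← hf.2]
    exact extMap_lastPre hf.1.2
  · intro o _
    exact lastPre_extMap o

lemma card_arc_succ :
    (univ.filter fun f : Fin (n+1) → Option (Fin (n+1)) => IsArcMap f).card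
      = ∑ g ∈ univ.filter (fun g : Fin n → Option (Fin n) => IsArcMap g), (nones g + 1) := by
  rw [card_eq_sum_card_fiberwise (f := res)
    (t := univ.filter (fun g : Fin n → Option (Fin n) => IsArcMap g))]
  · apply sum_congr rfl
    intro g hgm
    rw [mem_filter] at hgm
    exact fiber_card hgm.2
  · intro f hf
    rw [mem_coe, mem_filter] at hf ⊢
    exact ⟨mem_univ _, res_isArcMap hf.2⟩

lemma bell_eq_card_arc (n : ℕ) :
    bell n = (univ.filter fun g : Fin n → Option (Fin n) => IsArcMap g).card := by
  have h := sum_transfer (n := n) (fun _ => True) (fun _ => 1)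
  rw [Finset.filter_true] at h
  simp only [and_true] at h
  rw [bell, ← Finset.card_univ, card_eq_sum_ones, h, ← card_eq_sum_ones]

lemma filter_stable_eq (n : ℕ) :
    (univ.filter fun f : Fin (n+1) → Option (Fin (n+1)) =>
        IsArcMap f ∧ IsStablePartition (pathGraph (n+1)) (toPart f))
      = univ.filter (fun f => IsArcMap f ∧ NoUnit f) := by
  apply filter_congr
  intro f _
  constructor
  · rintro ⟨hf, hs⟩; exact ⟨hf, (stable_toPart_iff hf).1 hs⟩
  · rintro ⟨hf, hs⟩; exact ⟨hf, (stable_toPart_iff hf).2 hs⟩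

lemma colB_path (n : ℕ) : colB (pathGraph (n+1)) = bell n := by
  rw [colB, card_eq_sum_ones]
  rw [sum_transfer (n := n+1) (IsStablePartition (pathGraph (n+1))) (fun _ => 1)]
  rw [filter_stable_eq n, sum_shift (n := n) (fun _ => 1)]
  rw [← card_eq_sum_ones, bell_eq_card_arc]

lemma colT_path (n : ℕ) : colT (pathGraph (n+1)) = bell (n+1) := by
  rw [colT]
  have hl : ∑ P ∈ univ.filter (IsStablePartition (pathGraph (n+1))), P.parts.card
      = ∑ P ∈ univ.filter (IsStablePartition (pathGraph (n+1))), nones (nextMap P) :=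
    sum_congr rfl (fun P _ => (nones_nextMap P).symm)
  rw [hl, sum_transfer (n := n+1) (IsStablePartition (pathGraph (n+1))) (fun f => nones f)]
  rw [filter_stable_eq n, sum_shift (n := n) (fun m => m)]
  rw [← card_arc_succ, ← bell_eq_card_arc]

lemma sub_eq_one_iff {n : ℕ} {u v : Fin (n+2)} :
    u - v = 1 ↔ ((v : ℕ) + 1 = (u : ℕ) ∨ (v = Fin.last (n+1) ∧ u = 0)) := by
  rw [sub_eq_iff_eq_add]
  have hv := v.2
  have hval : ((1 + v : Fin (n+2)) : ℕ) = (1 + (v : ℕ)) % (n+2) := by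
    rw [Fin.val_add, Fin.val_one]
  constructor
  · rintro rfl
    rcases Nat.lt_or_ge ((v : ℕ) + 1) (n + 2) with h | h
    · left
      rw [hval, Nat.mod_eq_of_lt (by omega)]
      omega
    · right
      have hvl : (v : ℕ) = n + 1 := by omega
      refine ⟨Fin.ext (by simpa using hvl), Fin.ext ?_⟩
      rw [hval, Fin.val_zero, hvl, show 1 + (n+1) = n+2 by omega, Nat.mod_self]
  · rintro (h | ⟨rfl, rfl⟩)
    · exact Fin.ext (by rw [hval, Nat.mod_eq_of_lt (by omega)]; omega)
    · exact Fin.ext (by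
        rw [Fin.val_zero, hval, Fin.val_last, show 1 + (n+1) = n+2 by omega, Nat.mod_self])

lemma cycle_adj_iff {n : ℕ} {u v : Fin (n+2)} :
    (cycleGraph (n+2)).Adj u v ↔
      ((v : ℕ) + 1 = (u : ℕ) ∨ (v = Fin.last (n+1) ∧ u = 0)) ∨
      ((u : ℕ) + 1 = (v : ℕ) ∨ (u = Fin.last (n+1) ∧ v = 0)) := by
  rw [cycleGraph_adj, sub_eq_one_iff, sub_eq_one_iff]

lemma stable_cycle_iff {n : ℕ} (P : Finpartition (univ : Finset (Fin (n+2)))) :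
    IsStablePartition (cycleGraph (n+2)) P ↔
      IsStablePartition (pathGraph (n+2)) P ∧ Fin.last (n+1) ∉ P.part 0 := by
  rw [stable_iff, stable_iff]
  constructor
  · intro h
    constructor
    · intro u v hv hadj
      rw [pathGraph_adj] at hadj
      apply h u v hv
      rw [cycle_adj_iff]
      tauto
    · intro hmem
      apply h 0 (Fin.last (n+1)) hmem
      rw [cycle_adj_iff]
      exact Or.inl (Or.inr ⟨rfl, rfl⟩)
  · rintro ⟨hp, h0⟩ u v hv hadj
    rw [cycle_adj_iff] at hadj
    rcases hadj with (h | ⟨rfl, rfl⟩) | (h | ⟨rfl, rfl⟩)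
    · exact hp u v hv (pathGraph_adj.2 (Or.inr h))
    · exact h0 hv
    · exact hp u v hv (pathGraph_adj.2 (Or.inl h))
    · apply h0
      have hpe : P.part (Fin.last (n+1)) = P.part 0 := (partsEq_iff_mem' P _ _).2 hv
      rw [← hpe]
      exact P.mem_part (mem_univ _)

/-- delete the last vertex, merging it into the block of `0` -/
noncomputable def dfwd {n : ℕ} (P : Finpartition (univ : Finset (Fin (n+1)))) :
    Finpartition (univ : Finset (Fin n)) :=
  Finpartition.ofSetoid (Setoid.ker (fun i : Fin n => P.part i.castSucc))

noncomputable def dbwd {n : ℕ} [NeZero n] (Q : Finpartition (univ : Finset (Fin n))) :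
    Finpartition (univ : Finset (Fin (n+1))) :=
  Finpartition.ofSetoid (Setoid.ker (fun x : Fin (n+1) =>
    Q.part (if h : x = Fin.last n then 0 else x.castPred h)))

lemma parts_eq_image {m : ℕ} (P : Finpartition (univ : Finset (Fin m))) :
    P.parts = univ.image P.part := by
  ext t
  simp only [mem_image, mem_univ, true_and]
  constructor
  · intro ht
    obtain ⟨a, ha⟩ := P.nonempty_of_mem_parts ht
    exact ⟨a, P.part_eq_of_mem ht ha⟩
  · rintro ⟨a, rfl⟩
    exact P.part_mem.2 (mem_univ a)

lemma card_image_eq_of_ker {m : ℕ} {β γ : Type*} [DecidableEq β] [DecidableEq γ]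
    (f : Fin m → β) (g : Fin m → γ)
    (h : ∀ a b : Fin m, f a = f b ↔ g a = g b) :
    (univ.image f).card = (univ.image g).card := by
  apply Finset.card_bij (fun t ht => g (mem_image.1 ht).choose)
  · intro t ht
    exact mem_image_of_mem g (mem_univ _)
  · intro t₁ ht₁ t₂ ht₂ heq
    have h1 := (mem_image.1 ht₁).choose_spec.2
    have h2 := (mem_image.1 ht₂).choose_spec.2
    rw [← h1, ← h2]
    exact (h _ _).2 heq
  · intro u hu
    obtain ⟨b, _, rfl⟩ := mem_image.1 hu
    refine ⟨f b, mem_image_of_mem f (mem_univ b), ?_⟩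
    have := (mem_image.1 (mem_image_of_mem f (mem_univ b))).choose_spec.2
    exact (h _ _).1 this

lemma mem_part_ker {m : ℕ} {β : Type*} (f : Fin m → β) {a b : Fin m} :
    b ∈ (Finpartition.ofSetoid (Setoid.ker f)).part a ↔ f a = f b :=
  Finpartition.mem_part_ofSetoid_iff_rel

lemma mem_part_dfwd {n : ℕ} (P : Finpartition (univ : Finset (Fin (n+1)))) {a b : Fin n} :
    b ∈ (dfwd P).part a ↔ P.part a.castSucc = P.part b.castSucc := mem_part_ker _

lemma mem_part_dbwd {n : ℕ} [NeZero n] (Q : Finpartition (univ : Finset (Fin n)))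
    {a b : Fin (n+1)} :
    b ∈ (dbwd Q).part a ↔
      Q.part (if h : a = Fin.last n then 0 else a.castPred h)
        = Q.part (if h : b = Fin.last n then 0 else b.castPred h) := mem_part_ker _

lemma card_parts_dfwd {n : ℕ} [NeZero n] (P : Finpartition (univ : Finset (Fin (n+1))))
    (hlast : Fin.last n ∈ P.part 0) : (dfwd P).parts.card = P.parts.card := by
  rw [parts_eq_image, parts_eq_image]
  have h1 : (univ.image (dfwd P).part).card
      = (univ.image (fun i : Fin n => P.part i.castSucc)).card := by
    apply card_image_eq_of_ker
    intro a b
    rw [partsEq_iff_mem' (dfwd P) a b, mem_part_dfwd]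
  rw [h1]
  congr 1
  ext t
  simp only [mem_image, mem_univ, true_and]
  constructor
  · rintro ⟨i, rfl⟩
    exact ⟨i.castSucc, rfl⟩
  · rintro ⟨x, rfl⟩
    rcases eq_or_ne x (Fin.last n) with rfl | hne
    · refine ⟨0, ?_⟩
      have hc : ((0 : Fin n).castSucc : Fin (n+1)) = 0 := Fin.ext rfl
      rw [hc]
      exact (partsEq_iff_mem' P 0 (Fin.last n)).2 hlast
    · exact ⟨x.castPred hne, by rw [Fin.castSucc_castPred]⟩

lemma dfwd_stable {n : ℕ} (P : Finpartition (univ : Finset (Fin (n+3))))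
    (hp : IsStablePartition (pathGraph (n+3)) P) (hlast : Fin.last (n+2) ∈ P.part 0) :
    IsStablePartition (cycleGraph (n+2)) (dfwd P) := by
  rw [stable_iff]
  intro x y hv hadj
  rw [mem_part_dfwd] at hv
  have hp' := (stable_iff P).1 hp
  have hmem : y.castSucc ∈ P.part x.castSucc := by
    rw [hv]; exact P.mem_part (mem_univ _)
  have hc0 : ((0 : Fin (n+2)).castSucc : Fin (n+3)) = 0 := Fin.ext rfl
  rw [cycle_adj_iff] at hadj
  rcases hadj with (h | ⟨rfl, rfl⟩) | (h | ⟨rfl, rfl⟩)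
  · exact hp' x.castSucc y.castSucc hmem (pathGraph_adj.2 (Or.inr (by simpa using h)))
  · -- y = last, x = 0 : P.part 0 = P.part (castSucc last)
    rw [hc0] at hv
    have : Fin.last (n+2) ∈ P.part ((Fin.last (n+1)).castSucc : Fin (n+3)) := by
      rw [← hv]; exact hlast
    exact hp' _ _ this (pathGraph_adj.2 (Or.inl (by simp)))
  · exact hp' x.castSucc y.castSucc hmem (pathGraph_adj.2 (Or.inl (by simpa using h)))
  · -- x = last, y = 0
    rw [hc0] at hv
    have : Fin.last (n+2) ∈ P.part ((Fin.last (n+1)).castSucc : Fin (n+3)) := by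
      rw [hv]; exact hlast
    exact hp' _ _ this (pathGraph_adj.2 (Or.inl (by simp)))

lemma dbwd_last_mem {n : ℕ} (Q : Finpartition (univ : Finset (Fin (n+2)))) :
    Fin.last (n+2) ∈ (dbwd Q).part 0 := by
  have h0 : (0 : Fin (n+3)) ≠ Fin.last (n+2) := by
    intro h; have := congrArg Fin.val h; simp at this
  rw [mem_part_dbwd, dif_neg h0, dif_pos rfl]
  congr 1

lemma dbwd_stable {n : ℕ} (Q : Finpartition (univ : Finset (Fin (n+2))))
    (hq : IsStablePartition (cycleGraph (n+2)) Q) :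
    IsStablePartition (pathGraph (n+3)) (dbwd Q) := by
  rw [stable_iff]
  have hq' := (stable_iff Q).1 hq
  have key : ∀ a b : Fin (n+3), (a : ℕ) + 1 = (b : ℕ) →
      Q.part (if h : a = Fin.last (n+2) then 0 else a.castPred h)
        = Q.part (if h : b = Fin.last (n+2) then 0 else b.castPred h) → False := by
    intro a b hab hpart
    have ha : a ≠ Fin.last (n+2) := by
      intro h
      have := congrArg Fin.val h
      have hb := b.2
      simp at this
      omega
    rw [dif_neg ha] at hpart
    rcases eq_or_ne b (Fin.last (n+2)) with rfl | hb
    · rw [dif_pos rfl] at hpart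
      have hmem : (0 : Fin (n+2)) ∈ Q.part (a.castPred ha) := by
        rw [hpart]; exact Q.mem_part (mem_univ _)
      apply hq' _ _ hmem
      rw [cycle_adj_iff]
      refine Or.inr (Or.inr ⟨Fin.ext ?_, rfl⟩)
      have := congrArg Fin.val (rfl : Fin.last (n+2) = Fin.last (n+2))
      simp only [Fin.coe_castPred, Fin.val_last] at hab ⊢
      omega
    · rw [dif_neg hb] at hpart
      have hmem : b.castPred hb ∈ Q.part (a.castPred ha) := by
        rw [hpart]; exact Q.mem_part (mem_univ _)
      apply hq' _ _ hmem
      rw [cycle_adj_iff]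
      exact Or.inr (Or.inl (by simpa using hab))
  intro u v hv hadj
  rw [mem_part_dbwd] at hv
  rw [pathGraph_adj] at hadj
  rcases hadj with h | h
  · exact key u v h hv
  · exact key v u h hv.symm

lemma dbwd_dfwd {n : ℕ} [NeZero n] (P : Finpartition (univ : Finset (Fin (n+1))))
    (hlast : Fin.last n ∈ P.part 0) : dbwd (dfwd P) = P := by
  apply eq_of_part
  intro a b
  rw [mem_part_dbwd]
  have key : ∀ x : Fin (n+1),
      P.part (((if h : x = Fin.last n then (0 : Fin n) else x.castPred h)).castSucc)
        = P.part x := by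
    intro x
    split_ifs with h
    · subst h
      have hc : ((0 : Fin n).castSucc : Fin (n+1)) = 0 := Fin.ext rfl
      rw [hc]
      exact (partsEq_iff_mem' P 0 (Fin.last n)).2 hlast
    · rw [Fin.castSucc_castPred]
  rw [partsEq_iff_mem' (dfwd P), mem_part_dfwd, key, key, partsEq_iff_mem' P]

lemma dfwd_dbwd {n : ℕ} [NeZero n] (Q : Finpartition (univ : Finset (Fin n))) :
    dfwd (dbwd Q) = Q := by
  apply eq_of_part
  intro a b
  rw [mem_part_dfwd]
  have key : ∀ i : Fin n,
      (if h : (i.castSucc : Fin (n+1)) = Fin.last n then (0 : Fin n)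
        else (i.castSucc).castPred h) = i := by
    intro i
    rw [dif_neg (Fin.castSucc_lt_last i).ne]
    exact Fin.castPred_castSucc _
  rw [partsEq_iff_mem' (dbwd Q), mem_part_dbwd, key, key, partsEq_iff_mem' Q]

lemma sum_del {n : ℕ} (w : ℕ → ℕ) :
    ∑ P ∈ univ.filter (fun P : Finpartition (univ : Finset (Fin (n+3))) =>
        IsStablePartition (pathGraph (n+3)) P ∧ Fin.last (n+2) ∈ P.part 0),
      w P.parts.card
    = ∑ Q ∈ univ.filter (fun Q : Finpartition (univ : Finset (Fin (n+2))) =>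
        IsStablePartition (cycleGraph (n+2)) Q), w Q.parts.card := by
  apply Finset.sum_nbij' dfwd dbwd
  · intro P hP
    rw [mem_filter] at hP ⊢
    exact ⟨mem_univ _, dfwd_stable P hP.2.1 hP.2.2⟩
  · intro Q hQ
    rw [mem_filter] at hQ ⊢
    exact ⟨mem_univ _, dbwd_stable Q hQ.2, dbwd_last_mem Q⟩
  · intro P hP
    rw [mem_filter] at hP
    exact dbwd_dfwd P hP.2.2
  · intro Q _
    exact dfwd_dbwd Q
  · intro P hP
    rw [mem_filter] at hP
    rw [card_parts_dfwd P hP.2.2]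

lemma cyc_split {n : ℕ} (w : ℕ → ℕ) :
    ∑ P ∈ univ.filter (IsStablePartition (pathGraph (n+3))), w P.parts.card
      = ∑ P ∈ univ.filter (IsStablePartition (cycleGraph (n+3))), w P.parts.card
        + ∑ P ∈ univ.filter (fun P : Finpartition (univ : Finset (Fin (n+3))) =>
            IsStablePartition (pathGraph (n+3)) P ∧ Fin.last (n+2) ∈ P.part 0),
          w P.parts.card := by
  have hfe : univ.filter (fun P : Finpartition (univ : Finset (Fin (n+3))) =>
      IsStablePartition (pathGraph (n+3)) P ∧ ¬ Fin.last (n+2) ∈ P.part 0)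
      = univ.filter (IsStablePartition (cycleGraph (n+3))) := by
    apply filter_congr
    intro P _
    rw [stable_cycle_iff P]
  rw [← Finset.sum_filter_add_sum_filter_not
    (univ.filter (IsStablePartition (pathGraph (n+3))))
    (fun P => Fin.last (n+2) ∈ P.part 0) (fun P => w P.parts.card)]
  rw [add_comm, filter_filter, filter_filter, hfe]

lemma colB_cyc_rec (n : ℕ) :
    colB (cycleGraph (n+3)) + colB (cycleGraph (n+2)) = bell (n+2) := by
  have h := cyc_split (n := n) (fun _ => 1)
  rw [sum_del (n := n) (fun _ => 1)] at h
  rw [← colB_path (n+2), colB, colB, colB, card_eq_sum_ones, card_eq_sum_ones,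
    card_eq_sum_ones]
  simpa using h.symm

lemma colT_cyc_rec (n : ℕ) :
    colT (cycleGraph (n+3)) + colT (cycleGraph (n+2)) = bell (n+3) := by
  have h := cyc_split (n := n) (fun m => m)
  rw [sum_del (n := n) (fun m => m)] at h
  rw [← colT_path (n+2), colT, colT, colT]
  simpa using h.symm

lemma cyc2_eq_path2 : cycleGraph 2 = pathGraph 2 := by
  ext u v
  rw [show (cycleGraph 2) = cycleGraph (0+2) from rfl, cycleGraph_adj, pathGraph_adj,
    sub_eq_one_iff, sub_eq_one_iff]
  have hu := u.2
  have hv := v.2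
  rw [Fin.ext_iff, Fin.ext_iff, Fin.ext_iff, Fin.ext_iff]
  simp only [Fin.val_last, Fin.val_zero]
  omega

lemma colB_cyc2 : colB (cycleGraph 2) = bell 1 := by
  rw [cyc2_eq_path2]; exact colB_path 1

lemma colT_cyc2 : colT (cycleGraph 2) = bell 2 := by
  rw [cyc2_eq_path2]; exact colT_path 1

lemma sum_alt_step (b : ℕ → ℤ) (l : ℕ) :
    ∑ j ∈ Finset.Icc 1 (l+1), (-1:ℤ)^(j+1) * b (l+2-j)
      = b (l+1) - ∑ j ∈ Finset.Icc 1 l, (-1:ℤ)^(j+1) * b (l+1-j) := by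
  have hins : Finset.Icc 1 (l+1) = insert 1 (Finset.Icc 2 (l+1)) := by
    ext j; simp only [Finset.mem_Icc, Finset.mem_insert]; omega
  rw [hins, Finset.sum_insert (by simp)]
  have hmap : (Finset.Icc 1 l).map (addRightEmbedding 1) = Finset.Icc 2 (l+1) := by
    rw [Finset.map_add_right_Icc]
  rw [← hmap, Finset.sum_map]
  have hcong : ∀ i ∈ Finset.Icc 1 l,
      (-1:ℤ)^((addRightEmbedding 1 i)+1) * b (l+2-(addRightEmbedding 1 i))
        = -((-1:ℤ)^(i+1) * b (l+1-i)) := by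
    intro i hi
    simp only [addRightEmbedding_apply]
    rw [show l+2-(i+1) = l+1-i by omega, pow_succ]
    ring
  rw [Finset.sum_congr rfl hcong, Finset.sum_neg_distrib]
  norm_num [sub_eq_add_neg]

end ColProof

open ColProof in
theorem stmt_3' (n : ℕ) (hn : 3 ≤ n) :
    (colB (cycleGraph n) : ℤ) =
      ∑ j ∈ Finset.Icc 1 (n - 1), (-1 : ℤ) ^ (j + 1) * bell (n - j) ∧
    (colT (cycleGraph n) : ℤ) =
      ∑ j ∈ Finset.Icc 1 (n - 1), (-1 : ℤ) ^ (j + 1) * bell (n - j + 1) := by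
  have H : ∀ m : ℕ, 2 ≤ m →
      ((colB (cycleGraph m) : ℤ) =
        ∑ j ∈ Finset.Icc 1 (m - 1), (-1 : ℤ) ^ (j + 1) * bell (m - j)) ∧
      ((colT (cycleGraph m) : ℤ) =
        ∑ j ∈ Finset.Icc 1 (m - 1), (-1 : ℤ) ^ (j + 1) * bell (m - j + 1)) := by
    intro m
    induction m with
    | zero => omega
    | succ m IH =>
      intro hm
      rcases Nat.lt_or_ge m 2 with h2 | h2
      · have hm1 : m = 1 := by omega
        subst hm1
        refine ⟨?_, ?_⟩
        · rw [show (1:ℕ)+1-1 = 1 from rfl, Finset.Icc_self, Finset.sum_singleton]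
          norm_num
          exact_mod_cast colB_cyc2
        · rw [show (1:ℕ)+1-1 = 1 from rfl, Finset.Icc_self, Finset.sum_singleton]
          norm_num
          exact_mod_cast colT_cyc2
      · obtain ⟨k, rfl⟩ : ∃ k, m = k + 2 := ⟨m - 2, by omega⟩
        obtain ⟨IH1, IH2⟩ := IH (by omega)
        have hk1 : k + 2 - 1 = k + 1 := by omega
        rw [hk1] at IH1 IH2
        refine ⟨?_, ?_⟩
        · show (colB (cycleGraph (k+3)) : ℤ)
            = ∑ j ∈ Finset.Icc 1 ((k+1)+1), (-1:ℤ)^(j+1) * bell ((k+1)+2-j)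
          rw [sum_alt_step (fun j => (bell j : ℤ)) (k+1)]
          rw [← IH1]
          have hrec := colB_cyc_rec k
          have := congrArg (fun t : ℕ => (t : ℤ)) hrec
          push_cast at this
          linarith
        · show (colT (cycleGraph (k+3)) : ℤ)
            = ∑ j ∈ Finset.Icc 1 ((k+1)+1), (-1:ℤ)^(j+1) * bell ((k+1)+2-j+1)
          rw [sum_alt_step (fun j => (bell (j+1) : ℤ)) (k+1)]
          rw [← IH2]
          have hrec := colT_cyc_rec k
          have := congrArg (fun t : ℕ => (t : ℤ)) hrec
          push_cast at this
          linarith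
  exact H n (by omega)


/-- For the cycle `C_n` with `n ≥ 3`,
`B(C_n) = ∑_{j=1}^{n-1} (-1)^{j+1} bell (n-j)` and
`T(C_n) = ∑_{j=1}^{n-1} (-1)^{j+1} bell (n-j+1)`. -/
theorem stmt_3 (n : ℕ) (hn : 3 ≤ n) :
    (colB (cycleGraph n) : ℤ) =
      ∑ j ∈ Finset.Icc 1 (n - 1), (-1 : ℤ) ^ (j + 1) * bell (n - j) ∧
    (colT (cycleGraph n) : ℤ) =
      ∑ j ∈ Finset.Icc 1 (n - 1), (-1 : ℤ) ^ (j + 1) * bell (n - j + 1) := by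
  exact stmt_3' n hn
end

section
/- Let G be a finite simple graph with a simplicial vertex v (a vertex whose neighbors are pairwise adjacent), and let G − v be the graph obtained from G by deleting v and all its incident edges. Then A(G) > A(G − v). -/
open Finset SimpleGraph

set_option linter.unusedSectionVars false

section AuxStmt5

variable {V : Type*} [Fintype V] [DecidableEq V]

namespace Stmt5Aux

/-- Lift a finset of the subtype `{w | w ≠ v}` to a finset of `V`. -/
def lf (v : V) (s : Finset ↥({w : V | w ≠ v})) : Finset V :=
  s.map (Function.Embedding.subtype _)

lemma mem_lf {v : V} {s : Finset ↥({w : V | w ≠ v})} {a : V} :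
    a ∈ lf v s ↔ ∃ b ∈ s, (b : V) = a := by
  simp [lf]

lemma coe_mem_lf {v : V} {s : Finset ↥({w : V | w ≠ v})} {u : ↥({w : V | w ≠ v})} :
    (u : V) ∈ lf v s ↔ u ∈ s := by
  simp only [lf, Finset.mem_map, Function.Embedding.coe_subtype]
  exact ⟨fun ⟨b, hb, h⟩ => (Subtype.ext h : b = u) ▸ hb, fun h => ⟨u, h, rfl⟩⟩

lemma v_not_mem_lf {v : V} {s : Finset ↥({w : V | w ≠ v})} : v ∉ lf v s := by
  rw [mem_lf]
  rintro ⟨b, -, hb⟩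
  exact b.2 hb

lemma lf_injective (v : V) : Function.Injective (lf v) :=
  fun _ _ h => Finset.map_injective _ h

lemma lf_eq_empty {v : V} {s : Finset ↥({w : V | w ≠ v})} : lf v s = ∅ ↔ s = ∅ :=
  Finset.map_eq_empty

lemma disjoint_lf {v : V} {s t : Finset ↥({w : V | w ≠ v})} (h : Disjoint s t) :
    Disjoint (lf v s) (lf v t) :=
  (Finset.disjoint_map _).2 h

/-- Restrict a finset of `V` to the subtype `{w | w ≠ v}`. -/
def dn (v : V) (t : Finset V) : Finset ↥({w : V | w ≠ v}) :=
  t.subtype _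

lemma mem_dn {v : V} {t : Finset V} {u : ↥({w : V | w ≠ v})} :
    u ∈ dn v t ↔ (u : V) ∈ t :=
  Finset.mem_subtype

lemma lf_dn (v : V) (t : Finset V) : lf v (dn v t) = t.erase v := by
  ext a
  rw [mem_lf, mem_erase]
  constructor
  · rintro ⟨b, hb, rfl⟩
    exact ⟨b.2, mem_dn.1 hb⟩
  · rintro ⟨ha, hat⟩
    exact ⟨⟨a, ha⟩, mem_dn.2 hat, rfl⟩

lemma dn_lf (v : V) (s : Finset ↥({w : V | w ≠ v})) : dn v (lf v s) = s := by
  ext u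
  rw [mem_dn, coe_mem_lf]

lemma dn_eq_empty {v : V} {t : Finset V} (hvt : v ∉ t) (ht : t.Nonempty) :
    dn v t ≠ ∅ := by
  obtain ⟨a, ha⟩ := ht
  have hav : a ≠ v := fun h => hvt (h ▸ ha)
  intro h
  have : (⟨a, hav⟩ : ↥({w : V | w ≠ v})) ∈ dn v t := mem_dn.2 ha
  simp [h] at this


/-- The partition of `univ : Finset V` obtained from a partition `Q` of the subtype by
inserting `v` into the part `s` (where `s = ∅` means `v` gets a new singleton part). -/
noncomputable def up (v : V) (Q : Finpartition (univ : Finset ↥({w : V | w ≠ v})))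
    (s : Finset ↥({w : V | w ≠ v})) : Finpartition (univ : Finset V) :=
  if hs : s = ∅ ∨ s ∈ Q.parts then
    { parts := insert (insert v (lf v s)) ((Q.parts.erase s).image (lf v))
      supIndep := by
        rw [Finset.supIndep_iff_pairwiseDisjoint]
        have hdisj : ∀ t ∈ Q.parts.erase s, Disjoint (insert v (lf v s)) (lf v t) := by
          intro t ht
          rw [Finset.disjoint_insert_left]
          refine ⟨v_not_mem_lf, ?_⟩
          rcases hs with rfl | hsQ
          · simp [lf]
          · exact disjoint_lf (Q.disjoint hsQ (Finset.mem_of_mem_erase ht)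
              (Finset.ne_of_mem_erase ht).symm)
        intro x hx y hy hxy
        simp only [Finset.coe_insert, Set.mem_insert_iff, Finset.coe_image,
          Set.mem_image, Finset.mem_coe] at hx hy
        rcases hx with rfl | ⟨t₁, ht₁, rfl⟩ <;> rcases hy with rfl | ⟨t₂, ht₂, rfl⟩
        · exact absurd rfl hxy
        · exact hdisj t₂ ht₂
        · exact (hdisj t₁ ht₁).symm
        · have ht : t₁ ≠ t₂ := fun h => hxy (h ▸ rfl)
          exact disjoint_lf (Q.disjoint (Finset.mem_of_mem_erase ht₁)
            (Finset.mem_of_mem_erase ht₂) ht)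
      sup_parts := by
        rw [Finset.eq_univ_iff_forall]
        intro a
        rw [Finset.mem_sup]
        by_cases hav : a = v
        · exact ⟨_, Finset.mem_insert_self _ _, by simp [hav]⟩
        · obtain ⟨t, htQ, hat⟩ := Q.exists_mem (Finset.mem_univ (⟨a, hav⟩ : ↥({w : V | w ≠ v})))
          by_cases hts : t = s
          · subst hts
            exact ⟨insert v (lf v t), Finset.mem_insert_self _ _,
              Finset.mem_insert_of_mem (coe_mem_lf.2 hat)⟩
          · exact ⟨lf v t, Finset.mem_insert_of_mem (Finset.mem_image_of_mem _
              (Finset.mem_erase.2 ⟨hts, htQ⟩)), coe_mem_lf.2 hat⟩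
      bot_notMem := by
        intro h
        rcases Finset.mem_insert.1 h with h | h
        · exact (Finset.insert_ne_empty v _) h.symm
        · obtain ⟨t, ht, hlf⟩ := Finset.mem_image.1 h
          have : t = ∅ := lf_eq_empty.1 hlf
          exact Q.bot_notMem (by simpa [this] using Finset.mem_of_mem_erase ht) }
  else ⊥

lemma up_parts {v : V} {Q : Finpartition (univ : Finset ↥({w : V | w ≠ v}))}
    {s : Finset ↥({w : V | w ≠ v})} (hs : s = ∅ ∨ s ∈ Q.parts) :
    (up v Q s).parts = insert (insert v (lf v s)) ((Q.parts.erase s).image (lf v)) := by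
  rw [up, dif_pos hs]

lemma insert_not_mem_image {v : V} {s : Finset ↥({w : V | w ≠ v})}
    {A : Finset (Finset ↥({w : V | w ≠ v}))} :
    insert v (lf v s) ∉ A.image (lf v) := by
  intro h
  obtain ⟨t, -, ht⟩ := Finset.mem_image.1 h
  have : v ∈ lf v t := ht ▸ Finset.mem_insert_self v _
  exact v_not_mem_lf this

lemma up_parts_card {v : V} {Q : Finpartition (univ : Finset ↥({w : V | w ≠ v}))}
    {s : Finset ↥({w : V | w ≠ v})} (hs : s = ∅ ∨ s ∈ Q.parts) :
    (up v Q s).parts.card = if s = ∅ then Q.parts.card + 1 else Q.parts.card := by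
  rw [up_parts hs, Finset.card_insert_of_notMem insert_not_mem_image,
    Finset.card_image_of_injective _ (lf_injective v)]
  rcases hs with rfl | hsQ
  · rw [if_pos rfl, Finset.erase_eq_of_notMem (by simpa using Q.bot_notMem)]
  · have hne : s ≠ ∅ := fun h => Q.bot_notMem (by simpa [h] using hsQ)
    rw [if_neg hne, Finset.card_erase_of_mem hsQ]
    have : 0 < Q.parts.card := Finset.card_pos.2 ⟨s, hsQ⟩
    omega

lemma up_stable {G : SimpleGraph V} {v : V}
    {Q : Finpartition (univ : Finset ↥({w : V | w ≠ v}))}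
    {s : Finset ↥({w : V | w ≠ v})}
    (hQ : IsStablePartition (G.induce {w : V | w ≠ v}) Q)
    (hs : s = ∅ ∨ s ∈ Q.parts) (hgood : ∀ u ∈ s, ¬ G.Adj v ↑u) :
    IsStablePartition G (up v Q s) := by
  intro t ht u hu w hw hadj
  rw [up_parts hs] at ht
  rcases Finset.mem_insert.1 ht with rfl | ht
  · rcases Finset.mem_insert.1 hu with rfl | hu <;> rcases Finset.mem_insert.1 hw with rfl | hw
    · exact G.loopless.irrefl _ hadj
    · obtain ⟨w', hw', rfl⟩ := mem_lf.1 hw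
      exact hgood w' hw' hadj
    · obtain ⟨u', hu', rfl⟩ := mem_lf.1 hu
      exact hgood u' hu' hadj.symm
    · obtain ⟨u', hu', rfl⟩ := mem_lf.1 hu
      obtain ⟨w', hw', rfl⟩ := mem_lf.1 hw
      rcases hs with rfl | hsQ
      · exact absurd hu' (Finset.notMem_empty _)
      · exact hQ s hsQ u' hu' w' hw' hadj
  · obtain ⟨t', ht', rfl⟩ := Finset.mem_image.1 ht
    obtain ⟨u', hu', rfl⟩ := mem_lf.1 hu
    obtain ⟨w', hw', rfl⟩ := mem_lf.1 hw
    exact hQ t' (Finset.mem_of_mem_erase ht') u' hu' w' hw' hadj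

/-- The partition of the subtype obtained from a partition `P` of `univ : Finset V` by
removing `v` from its part. -/
noncomputable def downQ (v : V) (P : Finpartition (univ : Finset V)) :
    Finpartition (univ : Finset ↥({w : V | w ≠ v})) :=
  Finpartition.ofErase (P.parts.image (dn v))
    (by
      rw [Finset.supIndep_iff_pairwiseDisjoint]
      intro x hx y hy hxy
      simp only [Finset.coe_image, Set.mem_image, Finset.mem_coe] at hx hy
      obtain ⟨t₁, ht₁, rfl⟩ := hx
      obtain ⟨t₂, ht₂, rfl⟩ := hy
      have ht : t₁ ≠ t₂ := fun h => hxy (h ▸ rfl)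
      have hd := P.disjoint ht₁ ht₂ ht
      simp only [Function.onFun, id] at hd ⊢
      rw [Finset.disjoint_left]
      intro u h1 h2
      exact (Finset.disjoint_left.1 hd) (mem_dn.1 h1) (mem_dn.1 h2))
    (by
      rw [Finset.eq_univ_iff_forall]
      intro u
      rw [Finset.mem_sup]
      obtain ⟨t, ht, h⟩ := P.exists_mem (Finset.mem_univ (u : V))
      exact ⟨dn v t, Finset.mem_image_of_mem _ ht, mem_dn.2 h⟩)

lemma downQ_parts (v : V) (P : Finpartition (univ : Finset V)) :
    (downQ v P).parts = (P.parts.image (dn v)).erase ∅ := rfl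

lemma downQ_stable {G : SimpleGraph V} {v : V} {P : Finpartition (univ : Finset V)}
    (hP : IsStablePartition G P) :
    IsStablePartition (G.induce {w : V | w ≠ v}) (downQ v P) := by
  intro t ht u hu w hw hadj
  rw [downQ_parts] at ht
  obtain ⟨t₀, ht₀, rfl⟩ := Finset.mem_image.1 (Finset.mem_of_mem_erase ht)
  exact hP t₀ ht₀ u (mem_dn.1 hu) w (mem_dn.1 hw) hadj

lemma not_v_mem_of_ne_part {v : V} {P : Finpartition (univ : Finset V)} {t : Finset V}
    (ht : t ∈ P.parts) (hne : t ≠ P.part v) : v ∉ t := fun hvt =>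
  hne (P.eq_of_mem_parts ht (P.part_mem.2 (Finset.mem_univ v)) hvt (P.mem_part (Finset.mem_univ v)))

lemma dn_part_mem_or {v : V} (P : Finpartition (univ : Finset V)) :
    dn v (P.part v) = ∅ ∨ dn v (P.part v) ∈ (downQ v P).parts := by
  by_cases h : dn v (P.part v) = ∅
  · exact Or.inl h
  · refine Or.inr ?_
    rw [downQ_parts, Finset.mem_erase]
    exact ⟨h, Finset.mem_image_of_mem _ (P.part_mem.2 (Finset.mem_univ v))⟩

lemma up_downQ {v : V} (P : Finpartition (univ : Finset V)) :
    up v (downQ v P) (dn v (P.part v)) = P := by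
  have hvP : v ∈ P.part v := P.mem_part (Finset.mem_univ v)
  have htP : P.part v ∈ P.parts := P.part_mem.2 (Finset.mem_univ v)
  apply Finpartition.ext
  rw [up_parts (dn_part_mem_or P)]
  have h1 : insert v (lf v (dn v (P.part v))) = P.part v := by
    rw [lf_dn, Finset.insert_erase hvP]
  have h2 : ((downQ v P).parts.erase (dn v (P.part v))).image (lf v)
      = P.parts.erase (P.part v) := by
    ext x
    constructor
    · intro hx
      obtain ⟨y, hy, rfl⟩ := Finset.mem_image.1 hx
      have hy1 := Finset.mem_of_mem_erase hy
      rw [downQ_parts] at hy1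
      have hyne : y ≠ ∅ := (Finset.mem_erase.1 hy1).1
      obtain ⟨t, ht, rfl⟩ := Finset.mem_image.1 (Finset.mem_of_mem_erase hy1)
      have htne : t ≠ P.part v := fun h => (Finset.ne_of_mem_erase hy) (h ▸ rfl)
      have hvt : v ∉ t := not_v_mem_of_ne_part ht htne
      rw [lf_dn, Finset.erase_eq_of_notMem hvt]
      exact Finset.mem_erase.2 ⟨htne, ht⟩
    · intro hx
      have hxP := Finset.mem_of_mem_erase hx
      have hxne : x ≠ P.part v := (Finset.mem_erase.1 hx).1
      have hvx : v ∉ x := not_v_mem_of_ne_part hxP hxne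
      have hxn : x.Nonempty := P.nonempty_of_mem_parts hxP
      refine Finset.mem_image.2 ⟨dn v x, ?_, by rw [lf_dn, Finset.erase_eq_of_notMem hvx]⟩
      rw [Finset.mem_erase, downQ_parts, Finset.mem_erase]
      refine ⟨?_, dn_eq_empty hvx hxn, Finset.mem_image_of_mem _ hxP⟩
      intro hcontr
      obtain ⟨a, ha⟩ := hxn
      have hav : a ≠ v := fun h => hvx (h ▸ ha)
      have h1 : (⟨a, hav⟩ : ↥({w : V | w ≠ v})) ∈ dn v x := mem_dn.2 ha
      have h2 : (⟨a, hav⟩ : ↥({w : V | w ≠ v})) ∈ dn v (P.part v) := hcontr ▸ h1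
      have haP : a ∈ P.part v := mem_dn.1 h2
      exact hxne (P.eq_of_mem_parts hxP htP ha haP)
  rw [h1, h2, Finset.insert_erase htP]

lemma up_inj {v : V} {Q₁ Q₂ : Finpartition (univ : Finset ↥({w : V | w ≠ v}))}
    {s₁ s₂ : Finset ↥({w : V | w ≠ v})}
    (h1 : s₁ = ∅ ∨ s₁ ∈ Q₁.parts) (h2 : s₂ = ∅ ∨ s₂ ∈ Q₂.parts)
    (h : up v Q₁ s₁ = up v Q₂ s₂) : Q₁ = Q₂ ∧ s₁ = s₂ := by
  have hparts : insert (insert v (lf v s₁)) ((Q₁.parts.erase s₁).image (lf v))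
      = insert (insert v (lf v s₂)) ((Q₂.parts.erase s₂).image (lf v)) := by
    rw [← up_parts h1, ← up_parts h2, h]
  have hX : insert v (lf v s₁) = insert v (lf v s₂) := by
    have := hparts ▸ Finset.mem_insert_self (insert v (lf v s₁)) ((Q₁.parts.erase s₁).image (lf v))
    rcases Finset.mem_insert.1 this with h' | h'
    · exact h'
    · exact absurd h' insert_not_mem_image
  have hs : s₁ = s₂ := by
    have e1 : (insert v (lf v s₁)).erase v = lf v s₁ :=
      Finset.erase_insert v_not_mem_lf
    have e2 : (insert v (lf v s₂)).erase v = lf v s₂ :=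
      Finset.erase_insert v_not_mem_lf
    exact lf_injective v (by rw [← e1, ← e2, hX])
  subst hs
  refine ⟨?_, rfl⟩
  have himg : (Q₁.parts.erase s₁).image (lf v) = (Q₂.parts.erase s₁).image (lf v) := by
    have e1 : (Q₁.parts.erase s₁).image (lf v)
        = (insert (insert v (lf v s₁)) ((Q₁.parts.erase s₁).image (lf v))).erase
            (insert v (lf v s₁)) := by
      rw [Finset.erase_insert insert_not_mem_image]
    have e2 : (Q₂.parts.erase s₁).image (lf v)
        = (insert (insert v (lf v s₁)) ((Q₂.parts.erase s₁).image (lf v))).erase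
            (insert v (lf v s₁)) := by
      rw [Finset.erase_insert insert_not_mem_image]
    rw [e1, e2, hparts, hX]
  have herase : Q₁.parts.erase s₁ = Q₂.parts.erase s₁ :=
    Finset.image_injective (lf_injective v) himg
  apply Finpartition.ext
  rcases h1 with rfl | h1m
  · rw [Finset.erase_eq_of_notMem (by simpa using Q₁.bot_notMem),
      Finset.erase_eq_of_notMem (by simpa using Q₂.bot_notMem)] at herase
    exact herase
  · have h2m : s₁ ∈ Q₂.parts := by
      rcases h2 with rfl | h2m
      · exact absurd h1m (by simpa using Q₁.bot_notMem)
      · exact h2m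
    rw [← Finset.insert_erase h1m, ← Finset.insert_erase h2m, herase]

open scoped Classical in
/-- The parts of `Q` containing no neighbour of `v`. -/
noncomputable def goodParts (G : SimpleGraph V) (v : V)
    (Q : Finpartition (univ : Finset ↥({w : V | w ≠ v}))) :
    Finset (Finset ↥({w : V | w ≠ v})) :=
  Q.parts.filter (fun t => ∀ u ∈ t, ¬ G.Adj v ↑u)

lemma mem_goodParts {G : SimpleGraph V} {v : V}
    {Q : Finpartition (univ : Finset ↥({w : V | w ≠ v}))}
    {t : Finset ↥({w : V | w ≠ v})} :
    t ∈ goodParts G v Q ↔ t ∈ Q.parts ∧ ∀ u ∈ t, ¬ G.Adj v ↑u := by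
  classical
  rw [goodParts]
  simp

/-- The options for inserting `v` into a stable partition `Q` of `G - v`:
either a new singleton (coded by `∅`) or a part with no neighbour of `v`. -/
noncomputable def OptF (G : SimpleGraph V) (v : V)
    (Q : Finpartition (univ : Finset ↥({w : V | w ≠ v}))) :
    Finset (Finset ↥({w : V | w ≠ v})) :=
  insert ∅ (goodParts G v Q)

lemma mem_OptF {G : SimpleGraph V} {v : V}
    {Q : Finpartition (univ : Finset ↥({w : V | w ≠ v}))}
    {s : Finset ↥({w : V | w ≠ v})} :
    s ∈ OptF G v Q ↔ s = ∅ ∨ (s ∈ Q.parts ∧ ∀ u ∈ s, ¬ G.Adj v ↑u) := by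
  rw [OptF, Finset.mem_insert, mem_goodParts]

lemma mem_OptF_or {G : SimpleGraph V} {v : V}
    {Q : Finpartition (univ : Finset ↥({w : V | w ≠ v}))}
    {s : Finset ↥({w : V | w ≠ v})} (h : s ∈ OptF G v Q) : s = ∅ ∨ s ∈ Q.parts := by
  rcases mem_OptF.1 h with h | h
  · exact Or.inl h
  · exact Or.inr h.1

lemma mem_OptF_good {G : SimpleGraph V} {v : V}
    {Q : Finpartition (univ : Finset ↥({w : V | w ≠ v}))}
    {s : Finset ↥({w : V | w ≠ v})} (h : s ∈ OptF G v Q) : ∀ u ∈ s, ¬ G.Adj v ↑u := by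
  rcases mem_OptF.1 h with rfl | h
  · intro u hu
    exact absurd hu (Finset.notMem_empty _)
  · exact h.2

lemma empty_not_mem_goodParts {G : SimpleGraph V} {v : V}
    {Q : Finpartition (univ : Finset ↥({w : V | w ≠ v}))} :
    ∅ ∉ goodParts G v Q := by
  intro h
  exact Q.bot_notMem (by simpa using (mem_goodParts.1 h).1)

lemma card_OptF {G : SimpleGraph V} {v : V}
    {Q : Finpartition (univ : Finset ↥({w : V | w ≠ v}))} :
    (OptF G v Q).card = 1 + (goodParts G v Q).card := by
  rw [OptF, Finset.card_insert_of_notMem empty_not_mem_goodParts, add_comm]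

open scoped Classical in
lemma sum_stable_eq (G : SimpleGraph V) (v : V) {M : Type*} [AddCommMonoid M]
    (g : Finpartition (univ : Finset V) → M) :
    ∑ P ∈ univ.filter (IsStablePartition G), g P
      = ∑ x ∈ (univ.filter (IsStablePartition (G.induce {w : V | w ≠ v}))).sigma
          (fun Q => OptF G v Q), g (up v x.1 x.2) := by
  symm
  refine Finset.sum_bij (fun x _ => up v x.1 x.2) ?_ ?_ ?_ ?_
  · intro x hx
    obtain ⟨hx1, hx2⟩ := Finset.mem_sigma.1 hx
    exact Finset.mem_filter.2 ⟨Finset.mem_univ _,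
      up_stable (Finset.mem_filter.1 hx1).2 (mem_OptF_or hx2) (mem_OptF_good hx2)⟩
  · intro x₁ hx₁ x₂ hx₂ h
    obtain ⟨-, h1⟩ := Finset.mem_sigma.1 hx₁
    obtain ⟨-, h2⟩ := Finset.mem_sigma.1 hx₂
    obtain ⟨hQ, hs⟩ := up_inj (mem_OptF_or h1) (mem_OptF_or h2) h
    exact Sigma.ext hQ (heq_of_eq hs)
  · intro P hP
    have hPs := (Finset.mem_filter.1 hP).2
    have hvP : v ∈ P.part v := P.mem_part (Finset.mem_univ v)
    have htP : P.part v ∈ P.parts := P.part_mem.2 (Finset.mem_univ v)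
    refine ⟨⟨downQ v P, dn v (P.part v)⟩, ?_, up_downQ (v := v) P⟩
    refine Finset.mem_sigma.2 ⟨Finset.mem_filter.2 ⟨Finset.mem_univ _, downQ_stable hPs⟩, ?_⟩
    rcases dn_part_mem_or P with h | h
    · exact mem_OptF.2 (Or.inl h)
    · refine mem_OptF.2 (Or.inr ⟨h, ?_⟩)
      intro u hu
      exact hPs (P.part v) htP v hvP (u : V) (mem_dn.1 hu)
  · intro x hx
    rfl

open scoped Classical in
lemma colB_eq (G : SimpleGraph V) (v : V) :
    colB G = ∑ Q ∈ univ.filter (IsStablePartition (G.induce {w : V | w ≠ v})),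
      (1 + (goodParts G v Q).card) := by
  rw [colB, Finset.card_eq_sum_ones, sum_stable_eq G v (fun _ => 1), Finset.sum_sigma]
  refine Finset.sum_congr rfl fun Q hQ => ?_
  rw [Finset.sum_const, smul_eq_mul, mul_one, card_OptF]

open scoped Classical in
lemma colT_eq (G : SimpleGraph V) (v : V) :
    colT G = ∑ Q ∈ univ.filter (IsStablePartition (G.induce {w : V | w ≠ v})),
      ((Q.parts.card + 1) + (goodParts G v Q).card * Q.parts.card) := by
  rw [colT, sum_stable_eq G v (fun P => P.parts.card), Finset.sum_sigma]
  refine Finset.sum_congr rfl fun Q hQ => ?_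
  have h1 : ∀ s ∈ OptF G v Q, (up v Q s).parts.card
      = if s = ∅ then Q.parts.card + 1 else Q.parts.card :=
    fun s hs => up_parts_card (mem_OptF_or hs)
  rw [Finset.sum_congr rfl h1, OptF, Finset.sum_insert empty_not_mem_goodParts, if_pos rfl]
  congr 1
  rw [Finset.sum_congr rfl
      (fun s hs => if_neg (fun h => empty_not_mem_goodParts (h ▸ hs))),
    Finset.sum_const, smul_eq_mul]

open scoped Classical in
lemma goodParts_card {G : SimpleGraph V} {v : V}
    (hsimp : ∀ u w, u ≠ w → G.Adj v u → G.Adj v w → G.Adj u w)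
    {Q : Finpartition (univ : Finset ↥({w : V | w ≠ v}))}
    (hQ : IsStablePartition (G.induce {w : V | w ≠ v}) Q) :
    (goodParts G v Q).card + (G.neighborFinset v).card = Q.parts.card := by
  have hbad : (Q.parts.filter
        (fun t => ¬ ∀ u : ↥({w : V | w ≠ v}), u ∈ t → ¬ G.Adj v ↑u)).card
      = (G.neighborFinset v).card := by
    symm
    refine Finset.card_bij
      (fun u hu => Q.part ⟨u, (G.ne_of_adj ((SimpleGraph.mem_neighborFinset G v u).1 hu)).symm⟩)
      ?_ ?_ ?_
    · intro u hu
      refine Finset.mem_filter.2 ⟨Q.part_mem.2 (Finset.mem_univ _), ?_⟩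
      intro hall
      exact hall _ (Q.mem_part (Finset.mem_univ _)) ((SimpleGraph.mem_neighborFinset G v u).1 hu)
    · intro u₁ hu₁ u₂ hu₂ heq
      by_contra hne
      have h1 := Q.mem_part (Finset.mem_univ
        (⟨u₁, (G.ne_of_adj ((SimpleGraph.mem_neighborFinset G v u₁).1 hu₁)).symm⟩ :
          ↥({w : V | w ≠ v})))
      have h2 := Q.mem_part (Finset.mem_univ
        (⟨u₂, (G.ne_of_adj ((SimpleGraph.mem_neighborFinset G v u₂).1 hu₂)).symm⟩ :
          ↥({w : V | w ≠ v})))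
      rw [← heq] at h2
      have hstab := hQ _ (Q.part_mem.2 (Finset.mem_univ _)) _ h1 _ h2
      exact hstab (hsimp u₁ u₂ hne ((SimpleGraph.mem_neighborFinset G v u₁).1 hu₁)
        ((SimpleGraph.mem_neighborFinset G v u₂).1 hu₂))
    · intro t ht
      obtain ⟨htQ, hbad⟩ := Finset.mem_filter.1 ht
      push_neg at hbad
      obtain ⟨u, hut, hadj⟩ := hbad
      refine ⟨(u : V), (SimpleGraph.mem_neighborFinset G v (u : V)).2 hadj, ?_⟩
      show Q.part ⟨(u : V), _⟩ = t
      rw [Subtype.coe_eta]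
      exact Q.part_eq_of_mem htQ hut
  rw [← hbad, goodParts]
  exact Finset.card_filter_add_card_filter_not _

lemma bot_stable (G : SimpleGraph V) :
    IsStablePartition G (⊥ : Finpartition (univ : Finset V)) := by
  intro t ht u hu w hw
  obtain ⟨a, -, rfl⟩ := Finpartition.mem_bot_iff.1 ht
  rw [Finset.mem_singleton] at hu hw
  rw [hu, hw]
  exact G.loopless.irrefl a

lemma final_ineq {ι : Type*} (S : Finset ι) (b f : ι → ℕ) (d : ℕ)
    (hne : S.Nonempty) (hfd : ∀ Q ∈ S, f Q + d = b Q) :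
    ((∑ Q ∈ S, b Q : ℕ) : ℚ) / ((S.card : ℕ) : ℚ)
      < ((∑ Q ∈ S, (b Q + 1 + f Q * b Q) : ℕ) : ℚ) / ((∑ Q ∈ S, (1 + f Q) : ℕ) : ℚ) := by
  have hC : (0:ℚ) < (S.card : ℚ) := by exact_mod_cast Finset.card_pos.2 hne
  have hDnat : S.card ≤ ∑ Q ∈ S, (1 + f Q) := by
    calc S.card = ∑ _Q ∈ S, 1 := by rw [Finset.sum_const, smul_eq_mul, mul_one]
    _ ≤ _ := Finset.sum_le_sum fun _ _ => Nat.le_add_right 1 _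
  have hD : (0:ℚ) < ((∑ Q ∈ S, (1 + f Q) : ℕ) : ℚ) :=
    lt_of_lt_of_le hC (by exact_mod_cast hDnat)
  rw [div_lt_div_iff₀ hC hD]
  have hf' : ∀ Q ∈ S, (f Q : ℚ) = (b Q : ℚ) - d := by
    intro Q hQ
    have h := hfd Q hQ
    have h2 : ((f Q : ℚ) + d) = b Q := by exact_mod_cast congrArg (Nat.cast : ℕ → ℚ) h
    linarith
  push_cast
  have e1 : (∑ Q ∈ S, (1 + (f Q:ℚ))) = (S.card : ℚ) + (∑ Q ∈ S, (b Q:ℚ)) - d * S.card := by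
    rw [Finset.sum_congr rfl (fun Q hQ => by rw [hf' Q hQ])]
    rw [Finset.sum_add_distrib, Finset.sum_sub_distrib, Finset.sum_const, Finset.sum_const]
    simp [nsmul_eq_mul]
    ring
  have e2 : (∑ Q ∈ S, ((b Q:ℚ) + 1 + (f Q:ℚ) * b Q))
      = (∑ Q ∈ S, (b Q:ℚ)) + (S.card : ℚ) + (∑ Q ∈ S, (b Q:ℚ)^2)
          - d * (∑ Q ∈ S, (b Q:ℚ)) := by
    have h3 : ∀ Q ∈ S, (b Q:ℚ) + 1 + (f Q:ℚ) * b Q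
        = ((b Q:ℚ) + 1 + ((b Q:ℚ)^2 - d * b Q)) := by
      intro Q hQ; rw [hf' Q hQ]; ring
    rw [Finset.sum_congr rfl h3]
    rw [Finset.sum_add_distrib, Finset.sum_add_distrib, Finset.sum_sub_distrib,
      Finset.sum_const, ← Finset.mul_sum]
    simp [nsmul_eq_mul]
    ring
  rw [e1, e2]
  have cauchy : (∑ Q ∈ S, (b Q:ℚ))^2 ≤ (S.card : ℚ) * ∑ Q ∈ S, (b Q:ℚ)^2 := by
    simpa using sq_sum_le_card_mul_sum_sq (s := S) (f := fun Q => (b Q : ℚ))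
  nlinarith [cauchy, hC]

open scoped Classical in
theorem colA_lt (G : SimpleGraph V) (v : V)
    (hsimp : ∀ u w, u ≠ w → G.Adj v u → G.Adj v w → G.Adj u w) :
    colA (G.induce {w : V | w ≠ v}) < colA G := by
  have hb := colB_eq G v
  have ht := colT_eq G v
  have hB' : colB (G.induce {w : V | w ≠ v})
      = (univ.filter (IsStablePartition (G.induce {w : V | w ≠ v}))).card := by rw [colB]
  have hT' : colT (G.induce {w : V | w ≠ v})
      = ∑ Q ∈ univ.filter (IsStablePartition (G.induce {w : V | w ≠ v})), Q.parts.card := by rw [colT]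
  rw [colA, colA, hb, ht, hB', hT']
  have hne : (univ.filter (IsStablePartition (G.induce {w : V | w ≠ v}))).Nonempty :=
    ⟨⊥, Finset.mem_filter.2 ⟨Finset.mem_univ _, bot_stable _⟩⟩
  apply final_ineq _ (fun Q => Q.parts.card) (fun Q => (goodParts G v Q).card)
    (G.neighborFinset v).card hne
  intro Q hQ
  exact goodParts_card hsimp (Finset.mem_filter.1 hQ).2

end Stmt5Aux

end AuxStmt5

/-- If `v` is a simplicial vertex of `G` (its neighbors are pairwise adjacent), then
`A(G) > A(G - v)`. -/
theorem stmt_5 {V : Type*} [Fintype V] [DecidableEq V] (G : SimpleGraph V) (v : V)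
    (hsimp : ∀ u w, u ≠ w → G.Adj v u → G.Adj v w → G.Adj u w) :
    colA G > colA (G.induce {w | w ≠ v}) := by
  exact Stmt5Aux.colA_lt G v hsimp
end

section
/- For all n ≥ 1 and p ≥ 0, A(P_n ∪ (p+1)K_1) < A(P_{n+1} ∪ pK_1). -/
open Finset SimpleGraph

namespace Stmt7
variable {V : Type*} [Fintype V] [DecidableEq V]

lemma v_not_mem {v : V} {Q : Finpartition (univ : Finset V)} (h1 : {v} ∈ Q.parts)
    {t : Finset V} (ht : t ∈ Q.parts) (htv : t ≠ {v}) : v ∉ t :=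
  fun hv => htv (Q.eq_of_mem_parts ht h1 hv (mem_singleton_self v))

/-- Move `v` out of its singleton block into block `c`. -/
def moveAux (v : V) (Q : Finpartition (univ : Finset V)) (c : Finset V)
    (h1 : {v} ∈ Q.parts) (h2 : c ∈ Q.parts) (hc : c ≠ {v}) :
    Finpartition (univ : Finset V) where
  parts := insert (insert v c) ((Q.parts.erase {v}).erase c)
  supIndep := by
    rw [Finset.supIndep_iff_pairwiseDisjoint]
    intro x hx y hy hne
    simp only [coe_insert, Set.mem_insert_iff, mem_coe, mem_erase] at hx hy
    have old : ∀ t, t ≠ {v} ∧ t ≠ c ∧ t ∈ Q.parts → Disjoint (insert v c) t := by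
      rintro t ⟨ht1, ht2, ht3⟩
      rw [Finset.disjoint_insert_left]
      exact ⟨v_not_mem h1 ht3 ht1, Q.disjoint h2 ht3 (Ne.symm ht2)⟩
    rcases hx with rfl | hx
    · rcases hy with rfl | hy
      · exact absurd rfl hne
      · exact old y ⟨hy.2.1, hy.1, hy.2.2⟩
    · rcases hy with rfl | hy
      · exact (old x ⟨hx.2.1, hx.1, hx.2.2⟩).symm
      · exact Q.disjoint hx.2.2 hy.2.2 hne
  sup_parts := by
    apply le_antisymm
    · exact Finset.sup_le fun t _ => le_top
    · intro x _
      rw [Finset.mem_sup]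
      obtain ⟨t, ht, hxt⟩ := Q.exists_mem (mem_univ x)
      by_cases htv : t = {v}
      · subst htv
        exact ⟨insert v c, mem_insert_self _ _, by simp_all⟩
      by_cases htc : t = c
      · rw [htc] at hxt
        exact ⟨insert v c, mem_insert_self _ _, mem_insert_of_mem hxt⟩
      · exact ⟨t, mem_insert_of_mem (mem_erase.2 ⟨htc, mem_erase.2 ⟨htv, ht⟩⟩), hxt⟩
  bot_notMem := by
    simp only [bot_eq_empty, mem_insert, mem_erase]
    rintro (h | h)
    · exact (insert_ne_empty _ _) h.symm
    · exact Q.bot_notMem h.2.2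

/-- Total version: move `v` into block `c` if sensible, else do nothing. -/
def move (v : V) (Q : Finpartition (univ : Finset V)) (c : Finset V) :
    Finpartition (univ : Finset V) :=
  if h : {v} ∈ Q.parts ∧ c ∈ Q.parts ∧ c ≠ {v} then moveAux v Q c h.1 h.2.1 h.2.2 else Q

lemma move_parts {v : V} {Q : Finpartition (univ : Finset V)} {c : Finset V}
    (h1 : {v} ∈ Q.parts) (h2 : c ∈ Q.parts) (hc : c ≠ {v}) :
    (move v Q c).parts = insert (insert v c) ((Q.parts.erase {v}).erase c) := by
  rw [move, dif_pos ⟨h1, h2, hc⟩]; rfl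

lemma move_self {v : V} {Q : Finpartition (univ : Finset V)} :
    move v Q {v} = Q := by
  rw [move, dif_neg]; rintro ⟨-, -, h⟩; exact h rfl

lemma insert_not_mem_ee {v : V} {Q : Finpartition (univ : Finset V)} {c : Finset V}
    (h1 : {v} ∈ Q.parts) :
    insert v c ∉ (Q.parts.erase {v}).erase c := by
  intro h
  rw [mem_erase, mem_erase] at h
  exact v_not_mem h1 h.2.2 h.2.1 (mem_insert_self _ _)

lemma move_card {v : V} {Q : Finpartition (univ : Finset V)} {c : Finset V}
    (h1 : {v} ∈ Q.parts) (h2 : c ∈ Q.parts) (hc : c ≠ {v}) :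
    (move v Q c).parts.card + 1 = Q.parts.card := by
  rw [move_parts h1 h2 hc, card_insert_of_notMem (insert_not_mem_ee h1)]
  have hce : c ∈ Q.parts.erase {v} := mem_erase.2 ⟨hc, h2⟩
  rw [add_comm, ← Nat.add_assoc]
  calc 1 + ((Q.parts.erase {v}).erase c).card + 1
      = 1 + (((Q.parts.erase {v}).erase c).card + 1) := by ring
    _ = 1 + (Q.parts.erase {v}).card := by rw [Finset.card_erase_add_one hce]
    _ = (Q.parts.erase {v}).card + 1 := by ring
    _ = Q.parts.card := Finset.card_erase_add_one h1


section part2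
variable (v : V) (P : Finpartition (univ : Finset V))

/-- Split `v` off into its own singleton block. -/
def splitAux (h : P.part v ≠ {v}) : Finpartition (univ : Finset V) where
  parts := insert {v} (insert ((P.part v).erase v) (P.parts.erase (P.part v)))
  supIndep := by
    have hBv : P.part v ∈ P.parts := P.part_mem.2 (mem_univ v)
    have hvBv : v ∈ P.part v := P.mem_part (mem_univ v)
    rw [Finset.supIndep_iff_pairwiseDisjoint]
    have hd1 : ∀ t ∈ P.parts.erase (P.part v), Disjoint ({v} : Finset V) t := by
      intro t ht
      rw [Finset.disjoint_singleton_left]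
      intro hvt
      exact (mem_erase.1 ht).1 (P.eq_of_mem_parts (mem_erase.1 ht).2 hBv hvt hvBv)
    have hd2 : ∀ t ∈ P.parts.erase (P.part v), Disjoint ((P.part v).erase v) t := by
      intro t ht
      exact Finset.disjoint_of_subset_left (erase_subset _ _)
        (P.disjoint hBv (mem_erase.1 ht).2 (Ne.symm (mem_erase.1 ht).1))
    have hd3 : Disjoint ({v} : Finset V) ((P.part v).erase v) := by
      rw [Finset.disjoint_singleton_left]; exact notMem_erase _ _
    intro x hx y hy hne
    simp only [coe_insert, Set.mem_insert_iff, mem_coe] at hx hy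
    rcases hx with rfl | rfl | hx
    · rcases hy with rfl | rfl | hy
      · exact absurd rfl hne
      · exact hd3
      · exact hd1 _ hy
    · rcases hy with rfl | rfl | hy
      · exact hd3.symm
      · exact absurd rfl hne
      · exact hd2 _ hy
    · rcases hy with rfl | rfl | hy
      · exact (hd1 _ hx).symm
      · exact (hd2 _ hx).symm
      · exact P.disjoint (mem_erase.1 hx).2 (mem_erase.1 hy).2 hne
  sup_parts := by
    have hBv : P.part v ∈ P.parts := P.part_mem.2 (mem_univ v)
    apply le_antisymm
    · exact Finset.sup_le fun t _ => le_top
    · intro x _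
      rw [Finset.mem_sup]
      obtain ⟨t, ht, hxt⟩ := P.exists_mem (mem_univ x)
      by_cases htv : t = P.part v
      · by_cases hxv : x = v
        · exact ⟨{v}, mem_insert_self _ _, by simp [hxv]⟩
        · refine ⟨(P.part v).erase v, mem_insert_of_mem (mem_insert_self _ _), ?_⟩
          simp only [id]; rw [mem_erase]; exact ⟨hxv, htv ▸ hxt⟩
      · exact ⟨t, mem_insert_of_mem (mem_insert_of_mem (mem_erase.2 ⟨htv, ht⟩)), hxt⟩
  bot_notMem := by
    have hBv : P.part v ∈ P.parts := P.part_mem.2 (mem_univ v)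
    have hvBv : v ∈ P.part v := P.mem_part (mem_univ v)
    simp only [bot_eq_empty, mem_insert, mem_erase]
    rintro (he | he | he)
    · exact (singleton_ne_empty v) he.symm
    · obtain ⟨x, hx, hxv⟩ : ∃ x ∈ P.part v, x ≠ v := by
        by_contra hcon
        push_neg at hcon
        exact h (subset_antisymm (fun y hy => mem_singleton.2 (hcon y hy))
          (singleton_subset_iff.2 hvBv))
      have : x ∈ (P.part v).erase v := mem_erase.2 ⟨hxv, hx⟩
      rw [← he] at this
      exact notMem_empty x this
    · exact P.bot_notMem he.2

def split : Finpartition (univ : Finset V) :=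
  if h : P.part v = {v} then P else splitAux v P h

/-- The index block recording where `v` was. -/
def cIdx : Finset V :=
  if P.part v = {v} then {v} else (P.part v).erase v

end part2

section part3
variable {v : V} {Q P : Finpartition (univ : Finset V)} {c : Finset V}

lemma part_eq_singleton (h1 : {v} ∈ Q.parts) : Q.part v = {v} :=
  Q.part_eq_of_mem h1 (mem_singleton_self v)

lemma insert_vc_ne_singleton (h2 : c ∈ Q.parts) (h1 : {v} ∈ Q.parts) (hc : c ≠ {v}) :
    insert v c ≠ {v} := by
  obtain ⟨x, hx⟩ := Q.nonempty_of_mem_parts h2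
  have hxv : x ≠ v := fun h => v_not_mem h1 h2 hc (h ▸ hx)
  intro h
  have : x ∈ ({v} : Finset V) := h ▸ mem_insert_of_mem hx
  exact hxv (mem_singleton.1 this)

lemma move_part_v (h1 : {v} ∈ Q.parts) (h2 : c ∈ Q.parts) (hc : c ≠ {v}) :
    (move v Q c).part v = insert v c := by
  refine (move v Q c).part_eq_of_mem ?_ (mem_insert_self v c)
  rw [move_parts h1 h2 hc]
  exact mem_insert_self _ _

lemma split_move (h1 : {v} ∈ Q.parts) (h2 : c ∈ Q.parts) :
    split v (move v Q c) = Q := by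
  by_cases hc : c = {v}
  · subst hc
    rw [move_self, split, dif_pos (part_eq_singleton h1)]
  · have hpv := move_part_v h1 h2 hc
    have hne : (move v Q c).part v ≠ {v} := hpv ▸ insert_vc_ne_singleton h2 h1 hc
    rw [split, dif_neg hne]
    apply Finpartition.ext
    show insert {v} _ = Q.parts
    rw [hpv, move_parts h1 h2 hc,
      Finset.erase_insert (v_not_mem h1 h2 hc),
      Finset.erase_insert (insert_not_mem_ee h1),
      Finset.insert_erase (mem_erase.2 ⟨hc, h2⟩),
      Finset.insert_erase h1]

lemma cIdx_move (h1 : {v} ∈ Q.parts) (h2 : c ∈ Q.parts) :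
    cIdx v (move v Q c) = c := by
  by_cases hc : c = {v}
  · subst hc
    rw [move_self, cIdx, if_pos (part_eq_singleton h1)]
  · have hpv := move_part_v h1 h2 hc
    have hne : (move v Q c).part v ≠ {v} := hpv ▸ insert_vc_ne_singleton h2 h1 hc
    rw [cIdx, if_neg hne, hpv, Finset.erase_insert (v_not_mem h1 h2 hc)]

lemma singleton_mem_split : {v} ∈ (split v P).parts := by
  rw [split]
  split_ifs with h
  · exact h ▸ P.part_mem.2 (mem_univ v)
  · exact mem_insert_self _ _

lemma cIdx_mem_split : cIdx v P ∈ (split v P).parts := by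
  rw [split, cIdx]
  split_ifs with h
  · exact h ▸ P.part_mem.2 (mem_univ v)
  · exact mem_insert_of_mem (mem_insert_self _ _)

lemma singleton_not_mem_of_ne (h : P.part v ≠ {v}) : {v} ∉ P.parts := by
  intro hmem
  exact h (part_eq_singleton hmem)

lemma move_split : move v (split v P) (cIdx v P) = P := by
  by_cases hB : P.part v = {v}
  · rw [split, dif_pos hB, cIdx, if_pos hB, move_self]
  · have hvB : v ∈ P.part v := P.mem_part (mem_univ v)
    have hBmem : P.part v ∈ P.parts := P.part_mem.2 (mem_univ v)
    set B := P.part v with hBdef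
    set c := B.erase v with hcdef
    have hcv : c ≠ {v} := fun h => (notMem_erase v B) (by rw [← hcdef, h]; exact mem_singleton_self v)
    have hcB : insert v c = B := Finset.insert_erase hvB
    have h1 : {v} ∈ (split v P).parts := singleton_mem_split
    have h2 : c ∈ (split v P).parts := by
      have := cIdx_mem_split (v := v) (P := P)
      rwa [cIdx, if_neg hB] at this
    have hcc : cIdx v P = c := by rw [cIdx, if_neg hB]
    rw [hcc]
    apply Finpartition.ext
    rw [move_parts h1 h2 hcv, hcB]
    have hsparts : (split v P).parts = insert {v} (insert c (P.parts.erase B)) := by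
      rw [split, dif_neg hB]; rfl
    have hsv : {v} ∉ insert c (P.parts.erase B) := by
      intro hmem
      rcases mem_insert.1 hmem with h | h
      · exact hcv h.symm
      · exact singleton_not_mem_of_ne hB (mem_erase.1 h).2
    have hcnm : c ∉ P.parts.erase B := by
      intro hmem
      obtain ⟨x, hx⟩ : c.Nonempty := by
        obtain ⟨x, hx, hxv⟩ : ∃ x ∈ B, x ≠ v := by
          by_contra hcon
          push_neg at hcon
          exact hB (subset_antisymm (fun y hy => mem_singleton.2 (hcon y hy))
            (singleton_subset_iff.2 hvB))
        exact ⟨x, mem_erase.2 ⟨hxv, hx⟩⟩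
      have : c = B := P.eq_of_mem_parts (mem_erase.1 hmem).2 hBmem hx (erase_subset _ _ hx)
      exact (mem_erase.1 hmem).1 this
    rw [hsparts, Finset.erase_insert hsv, Finset.erase_insert hcnm,
      Finset.insert_erase hBmem]

end part3

section part4
open scoped Classical
variable {u v : V} {G : SimpleGraph V} {Q P : Finpartition (univ : Finset V)} {c : Finset V}

lemma move_stable (hG : IsStablePartition G Q) (hv : ∀ x, ¬ G.Adj v x)
    (h1 : {v} ∈ Q.parts) (h2 : c ∈ Q.parts) : IsStablePartition G (move v Q c) := by
  by_cases hc : c = {v}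
  · subst hc; rw [move_self]; exact hG
  · intro t ht x hx y hy
    rw [move_parts h1 h2 hc] at ht
    rcases mem_insert.1 ht with rfl | ht
    · rcases mem_insert.1 hx with rfl | hx
      · exact hv y
      · rcases mem_insert.1 hy with rfl | hy
        · exact fun hadj => hv x (G.adj_symm hadj)
        · exact hG c h2 x hx y hy
    · exact hG t (Finset.mem_of_mem_erase (Finset.mem_of_mem_erase ht)) x hx y hy

lemma split_stable (hP : IsStablePartition G P) : IsStablePartition G (split v P) := by
  rw [split]
  split_ifs with h
  · exact hP
  · intro t ht x hx y hy
    rcases mem_insert.1 ht with rfl | ht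
    · rw [mem_singleton] at hx hy; subst hx; subst hy; exact G.irrefl
    · rcases mem_insert.1 ht with rfl | ht
      · exact hP _ (P.part_mem.2 (mem_univ v)) x (erase_subset _ _ hx) y (erase_subset _ _ hy)
      · exact hP t (Finset.mem_of_mem_erase ht) x hx y hy

lemma sup_edge_adj (huv : u ≠ v) (a b : V) :
    (G ⊔ fromEdgeSet {s(u,v)}).Adj a b ↔
      G.Adj a b ∨ (a = u ∧ b = v) ∨ (a = v ∧ b = u) := by
  simp only [SimpleGraph.sup_adj _ _, SimpleGraph.fromEdgeSet_adj, Set.mem_singleton_iff,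
    Sym2.eq_iff]
  constructor
  · rintro (h | ⟨(⟨rfl, rfl⟩ | ⟨rfl, rfl⟩), hne⟩)
    · exact Or.inl h
    · exact Or.inr (Or.inl ⟨rfl, rfl⟩)
    · exact Or.inr (Or.inr ⟨rfl, rfl⟩)
  · rintro (h | ⟨rfl, rfl⟩ | ⟨rfl, rfl⟩)
    · exact Or.inl h
    · exact Or.inr ⟨Or.inl ⟨rfl, rfl⟩, huv⟩
    · exact Or.inr ⟨Or.inr ⟨rfl, rfl⟩, huv.symm⟩

lemma stable_sup_edge_iff (huv : u ≠ v) :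
    IsStablePartition (G ⊔ fromEdgeSet {s(u,v)}) P ↔
      IsStablePartition G P ∧ ∀ t ∈ P.parts, ¬(u ∈ t ∧ v ∈ t) := by
  constructor
  · intro h
    refine ⟨fun t ht x hx y hy hadj => h t ht x hx y hy ?_, fun t ht ⟨hu, hv⟩ =>
      h t ht u hu v hv ((sup_edge_adj huv u v).2 (Or.inr (Or.inl ⟨rfl, rfl⟩)))⟩
    exact (SimpleGraph.sup_adj _ _ _ _).2 (Or.inl hadj)
  · rintro ⟨hG, hsep⟩ t ht x hx y hy hadj
    rcases (sup_edge_adj huv x y).1 hadj with h | ⟨rfl, rfl⟩ | ⟨rfl, rfl⟩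
    · exact hG t ht x hx y hy h
    · exact hsep t ht ⟨hx, hy⟩
    · exact hsep t ht ⟨hy, hx⟩

lemma bot_stable (H : SimpleGraph V) : IsStablePartition H ⊥ := by
  intro t ht x hx y hy
  rw [Finpartition.mem_bot_iff] at ht
  obtain ⟨a, -, rfl⟩ := ht
  rw [mem_singleton] at hx hy
  subst hx; subst hy
  exact H.irrefl

lemma filter_not_mem_eq_erase_part (Q : Finpartition (univ : Finset V)) (u : V) :
    Q.parts.filter (fun t => u ∉ t) = Q.parts.erase (Q.part u) := by
  ext t
  simp only [mem_filter, mem_erase]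
  constructor
  · rintro ⟨ht, hut⟩
    exact ⟨fun h => hut (h ▸ Q.mem_part (mem_univ u)), ht⟩
  · rintro ⟨hne, ht⟩
    exact ⟨ht, fun hut => hne (Q.part_eq_of_mem ht hut).symm⟩

end part4

section part5
open scoped Classical
variable {u v : V} {G : SimpleGraph V}

lemma sum_stable (hv : ∀ x, ¬ G.Adj v x) {M : Type*} [AddCommMonoid M]
    (f : Finpartition (univ : Finset V) → M) :
    ∑ P ∈ univ.filter (IsStablePartition G), f P =
      ∑ Q ∈ univ.filter
          (fun Q : Finpartition (univ : Finset V) => IsStablePartition G Q ∧ {v} ∈ Q.parts),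
        ∑ c ∈ Q.parts, f (move v Q c) := by
  rw [Finset.sum_sigma']
  symm
  refine Finset.sum_nbij' (fun x => move v x.1 x.2) (fun P => ⟨split v P, cIdx v P⟩)
    ?_ ?_ ?_ ?_ ?_
  · rintro ⟨Q, c⟩ ha
    rw [Finset.mem_sigma, mem_filter] at ha
    rw [mem_filter]
    exact ⟨mem_univ _, move_stable ha.1.2.1 hv ha.1.2.2 ha.2⟩
  · intro P hP
    rw [mem_filter] at hP
    rw [Finset.mem_sigma, mem_filter]
    exact ⟨⟨mem_univ _, split_stable hP.2, singleton_mem_split⟩, cIdx_mem_split⟩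
  · rintro ⟨Q, c⟩ ha
    rw [Finset.mem_sigma, mem_filter] at ha
    exact Sigma.ext (split_move ha.1.2.2 ha.2) (heq_of_eq (cIdx_move ha.1.2.2 ha.2))
  · intro P _
    exact move_split
  · intro x _
    rfl

lemma sum_stable_edge (huv : u ≠ v) (hv : ∀ x, ¬ G.Adj v x) {M : Type*} [AddCommMonoid M]
    (f : Finpartition (univ : Finset V) → M) :
    ∑ P ∈ univ.filter (IsStablePartition (G ⊔ fromEdgeSet {s(u,v)})), f P =
      ∑ Q ∈ univ.filter
          (fun Q : Finpartition (univ : Finset V) => IsStablePartition G Q ∧ {v} ∈ Q.parts),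
        ∑ c ∈ Q.parts.filter (fun t => u ∉ t), f (move v Q c) := by
  rw [Finset.sum_sigma']
  symm
  refine Finset.sum_nbij' (fun x => move v x.1 x.2) (fun P => ⟨split v P, cIdx v P⟩)
    ?_ ?_ ?_ ?_ ?_
  · rintro ⟨Q, c⟩ ha
    rw [Finset.mem_sigma, mem_filter] at ha
    obtain ⟨⟨-, hst, h1⟩, hc⟩ := ha
    rw [mem_filter] at hc
    obtain ⟨h2, hu⟩ := hc
    dsimp only at hst h1 h2 hu ⊢
    rw [mem_filter]
    refine ⟨mem_univ _, (stable_sup_edge_iff huv).2 ⟨move_stable hst hv h1 h2, ?_⟩⟩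
    by_cases hcv : c = {v}
    · subst hcv
      rw [move_self]
      rintro t ht ⟨hut, hvt⟩
      have : t = {v} := Q.eq_of_mem_parts ht h1 hvt (mem_singleton_self v)
      exact huv (mem_singleton.1 (this ▸ hut))
    · rintro t ht ⟨hut, hvt⟩
      rw [move_parts h1 h2 hcv] at ht
      rcases mem_insert.1 ht with rfl | ht
      · rcases mem_insert.1 hut with h | h
        · exact huv h
        · exact hu h
      · exact v_not_mem h1 (mem_of_mem_erase (mem_of_mem_erase ht))
          (mem_erase.1 (mem_of_mem_erase ht)).1 hvt
  · intro P hP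
    rw [mem_filter] at hP
    have hsep := ((stable_sup_edge_iff huv).1 hP.2)
    have hbu : u ∉ P.part v := fun hu =>
      hsep.2 (P.part v) (P.part_mem.2 (mem_univ v)) ⟨hu, P.mem_part (mem_univ v)⟩
    rw [Finset.mem_sigma, mem_filter]
    refine ⟨⟨mem_univ _, split_stable hsep.1, singleton_mem_split⟩, ?_⟩
    rw [mem_filter]
    refine ⟨cIdx_mem_split, ?_⟩
    show u ∉ (if P.part v = {v} then {v} else (P.part v).erase v)
    split_ifs with h
    · exact fun hu => huv (mem_singleton.1 hu)
    · exact fun hu => hbu (erase_subset _ _ hu)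
  · rintro ⟨Q, c⟩ ha
    rw [Finset.mem_sigma, mem_filter] at ha
    have h2 : c ∈ Q.parts := (mem_filter.1 ha.2).1
    exact Sigma.ext (split_move ha.1.2.2 h2) (heq_of_eq (cIdx_move ha.1.2.2 h2))
  · intro P _
    exact move_split
  · intro x _
    rfl

end part5

section part6
open scoped Classical
variable {u v : V} {G : SimpleGraph V}

lemma colB_eq (hv : ∀ x, ¬ G.Adj v x) :
    (colB G : ℤ) = ∑ Q ∈ univ.filter
      (fun Q : Finpartition (univ : Finset V) => IsStablePartition G Q ∧ {v} ∈ Q.parts),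
      (Q.parts.card : ℤ) := by
  have h0 : colB G = ∑ Q ∈ univ.filter
      (fun Q : Finpartition (univ : Finset V) => IsStablePartition G Q ∧ {v} ∈ Q.parts),
      Q.parts.card := by
    show (univ.filter (IsStablePartition G)).card = _
    rw [Finset.card_eq_sum_ones, sum_stable hv (fun _ => 1)]
    exact Finset.sum_congr rfl fun Q _ => by
      rw [Finset.sum_const, smul_eq_mul, mul_one]
  rw [h0]
  push_cast
  rfl

lemma colT_eq (hv : ∀ x, ¬ G.Adj v x) :
    (colT G : ℤ) = ∑ Q ∈ univ.filter
      (fun Q : Finpartition (univ : Finset V) => IsStablePartition G Q ∧ {v} ∈ Q.parts),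
      ((Q.parts.card : ℤ)^2 - Q.parts.card + 1) := by
  have h0 : colT G = ∑ Q ∈ univ.filter
      (fun Q : Finpartition (univ : Finset V) => IsStablePartition G Q ∧ {v} ∈ Q.parts),
      ∑ c ∈ Q.parts, (move v Q c).parts.card := by
    show ∑ P ∈ univ.filter (IsStablePartition G), P.parts.card = _
    exact sum_stable hv _
  rw [h0]
  push_cast
  refine Finset.sum_congr rfl fun Q hQ => ?_
  obtain ⟨hst, h1⟩ := (mem_filter.1 hQ).2
  rw [← Finset.add_sum_erase _ _ h1, move_self]
  have hrest : ∀ c ∈ Q.parts.erase {v},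
      ((move v Q c).parts.card : ℤ) = (Q.parts.card : ℤ) - 1 := by
    intro c hc
    have h3 := move_card h1 (Finset.mem_of_mem_erase hc) (Finset.mem_erase.1 hc).1
    omega
  rw [Finset.sum_congr rfl hrest, Finset.sum_const, nsmul_eq_mul]
  have hk : ((Q.parts.erase {v}).card : ℤ) = (Q.parts.card : ℤ) - 1 := by
    have := Finset.card_erase_add_one h1
    omega
  rw [hk]; ring

lemma colB_edge_eq (huv : u ≠ v) (hv : ∀ x, ¬ G.Adj v x) :
    (colB (G ⊔ fromEdgeSet {s(u,v)}) : ℤ) = ∑ Q ∈ univ.filter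
      (fun Q : Finpartition (univ : Finset V) => IsStablePartition G Q ∧ {v} ∈ Q.parts),
      ((Q.parts.card : ℤ) - 1) := by
  have h0 : colB (G ⊔ fromEdgeSet {s(u,v)}) = ∑ Q ∈ univ.filter
      (fun Q : Finpartition (univ : Finset V) => IsStablePartition G Q ∧ {v} ∈ Q.parts),
      (Q.parts.filter (fun t => u ∉ t)).card := by
    show (univ.filter (IsStablePartition (G ⊔ fromEdgeSet {s(u,v)}))).card = _
    rw [Finset.card_eq_sum_ones, sum_stable_edge huv hv (fun _ => 1)]
    exact Finset.sum_congr rfl fun Q _ => by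
      rw [Finset.sum_const, smul_eq_mul, mul_one]
  rw [h0]
  push_cast
  refine Finset.sum_congr rfl fun Q hQ => ?_
  rw [filter_not_mem_eq_erase_part]
  have := Finset.card_erase_add_one (Q.part_mem.2 (mem_univ u))
  omega

lemma colT_edge_eq (huv : u ≠ v) (hv : ∀ x, ¬ G.Adj v x) :
    (colT (G ⊔ fromEdgeSet {s(u,v)}) : ℤ) = ∑ Q ∈ univ.filter
      (fun Q : Finpartition (univ : Finset V) => IsStablePartition G Q ∧ {v} ∈ Q.parts),
      ((Q.parts.card : ℤ)^2 - 2*Q.parts.card + 2) := by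
  have h0 : colT (G ⊔ fromEdgeSet {s(u,v)}) = ∑ Q ∈ univ.filter
      (fun Q : Finpartition (univ : Finset V) => IsStablePartition G Q ∧ {v} ∈ Q.parts),
      ∑ c ∈ Q.parts.filter (fun t => u ∉ t), (move v Q c).parts.card := by
    show ∑ P ∈ univ.filter (IsStablePartition (G ⊔ fromEdgeSet {s(u,v)})), P.parts.card = _
    exact sum_stable_edge huv hv _
  rw [h0]
  push_cast
  refine Finset.sum_congr rfl fun Q hQ => ?_
  obtain ⟨hst, h1⟩ := (mem_filter.1 hQ).2
  rw [filter_not_mem_eq_erase_part]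
  have hpu : Q.part u ∈ Q.parts := Q.part_mem.2 (mem_univ u)
  have h1E : {v} ∈ Q.parts.erase (Q.part u) := by
    refine Finset.mem_erase.2 ⟨?_, h1⟩
    intro h
    have hu : u ∈ Q.part u := Q.mem_part (mem_univ u)
    rw [← h] at hu
    exact huv (Finset.mem_singleton.1 hu)
  rw [← Finset.add_sum_erase _ _ h1E, move_self]
  have hrest : ∀ c ∈ (Q.parts.erase (Q.part u)).erase {v},
      ((move v Q c).parts.card : ℤ) = (Q.parts.card : ℤ) - 1 := by
    intro c hc
    have h3 := move_card h1
      (Finset.mem_of_mem_erase (Finset.mem_of_mem_erase hc)) (Finset.mem_erase.1 hc).1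
    omega
  rw [Finset.sum_congr rfl hrest, Finset.sum_const, nsmul_eq_mul]
  have hk1 := Finset.card_erase_add_one h1E
  have hk2 := Finset.card_erase_add_one hpu
  have hk : ((((Q.parts.erase (Q.part u)).erase {v}).card : ℤ)) = (Q.parts.card : ℤ) - 2 := by
    omega
  rw [hk]; ring

theorem colA_lt_sup_edge (G : SimpleGraph V) (u v : V) (huv : u ≠ v)
    (hv : ∀ x, ¬ G.Adj v x) :
    colA G < colA (G ⊔ fromEdgeSet {s(u,v)}) := by
  classical
  have hbot : ∀ H : SimpleGraph V,
      (⊥ : Finpartition (univ : Finset V)) ∈ univ.filter (IsStablePartition H) := fun H =>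
    mem_filter.2 ⟨mem_univ _, bot_stable H⟩
  have hb1 : 0 < colB G := Finset.card_pos.2 ⟨⊥, hbot G⟩
  have hb2 : 0 < colB (G ⊔ fromEdgeSet {s(u,v)}) :=
    Finset.card_pos.2 ⟨⊥, hbot _⟩
  have hbotA : (⊥ : Finpartition (univ : Finset V)) ∈ univ.filter
      (fun Q : Finpartition (univ : Finset V) => IsStablePartition G Q ∧ {v} ∈ Q.parts) :=
    mem_filter.2 ⟨mem_univ _, bot_stable G, Finpartition.mem_bot_iff.2 ⟨v, mem_univ v, rfl⟩⟩
  have key : (colT G : ℤ) * (colB (G ⊔ fromEdgeSet {s(u,v)}) : ℤ) <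
      (colT (G ⊔ fromEdgeSet {s(u,v)}) : ℤ) * (colB G : ℤ) := by
    rw [colT_eq hv, colB_eq hv, colB_edge_eq huv hv, colT_edge_eq huv hv]
    set A0 := univ.filter
      (fun Q : Finpartition (univ : Finset V) => IsStablePartition G Q ∧ {v} ∈ Q.parts) with hA0
    have ha1 : 1 ≤ (A0.card : ℤ) := by
      exact_mod_cast Finset.card_pos.2 ⟨⊥, hbotA⟩
    have hCS : (∑ Q ∈ A0, (Q.parts.card : ℤ))^2 ≤
        (A0.card : ℤ) * ∑ Q ∈ A0, (Q.parts.card : ℤ)^2 := sq_sum_le_card_mul_sum_sq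
    have hs1 : ∑ Q ∈ A0, ((Q.parts.card : ℤ)^2 - Q.parts.card + 1) =
        (∑ Q ∈ A0, (Q.parts.card : ℤ)^2) - (∑ Q ∈ A0, (Q.parts.card : ℤ)) + A0.card := by
      rw [Finset.sum_add_distrib, Finset.sum_sub_distrib, Finset.sum_const, nsmul_eq_mul, mul_one]
    have hs2 : ∑ Q ∈ A0, ((Q.parts.card : ℤ) - 1) =
        (∑ Q ∈ A0, (Q.parts.card : ℤ)) - A0.card := by
      rw [Finset.sum_sub_distrib, Finset.sum_const, nsmul_eq_mul, mul_one]
    have hs3 : ∑ Q ∈ A0, ((Q.parts.card : ℤ)^2 - 2*Q.parts.card + 2) =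
        (∑ Q ∈ A0, (Q.parts.card : ℤ)^2) - 2*(∑ Q ∈ A0, (Q.parts.card : ℤ)) + 2*A0.card := by
      rw [Finset.sum_add_distrib, Finset.sum_sub_distrib, ← Finset.mul_sum, Finset.sum_const,
        nsmul_eq_mul]
      ring
    rw [hs1, hs2, hs3]
    nlinarith [hCS, ha1, sq_nonneg ((A0.card : ℤ))]
  show (colT G : ℚ) / (colB G : ℚ) <
    (colT (G ⊔ fromEdgeSet {s(u,v)}) : ℚ) / (colB (G ⊔ fromEdgeSet {s(u,v)}) : ℚ)
  rw [div_lt_div_iff₀ (by exact_mod_cast hb1) (by exact_mod_cast hb2)]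
  exact_mod_cast key

end part6

section part7
open scoped Classical
variable {W : Type*} [Fintype W] [DecidableEq W]

/-- Transfer a partition of `univ` along an equivalence of types. -/
def transfer (e : V ≃ W) (P : Finpartition (univ : Finset V)) :
    Finpartition (univ : Finset W) where
  parts := P.parts.image (fun t => t.image e)
  supIndep := by
    rw [Finset.supIndep_iff_pairwiseDisjoint]
    intro x hx y hy hne
    simp only [coe_image, Set.mem_image, mem_coe] at hx hy
    obtain ⟨s, hs, rfl⟩ := hx
    obtain ⟨t, ht, rfl⟩ := hy
    have hst : s ≠ t := fun h => hne (by rw [h])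
    exact (Finset.disjoint_image e.injective).2 (P.disjoint hs ht hst)
  sup_parts := by
    apply le_antisymm
    · exact Finset.sup_le fun t _ => le_top
    · intro x _
      rw [Finset.mem_sup]
      obtain ⟨t, ht, hxt⟩ := P.exists_mem (mem_univ (e.symm x))
      exact ⟨t.image e, Finset.mem_image_of_mem _ ht,
        Finset.mem_image.2 ⟨e.symm x, hxt, e.apply_symm_apply x⟩⟩
  bot_notMem := by
    simp only [bot_eq_empty, Finset.mem_image]
    rintro ⟨t, ht, h⟩
    rw [Finset.image_eq_empty] at h
    rw [h] at ht
    exact P.bot_notMem ht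

lemma transfer_parts (e : V ≃ W) (P : Finpartition (univ : Finset V)) :
    (transfer e P).parts = P.parts.image (fun t => t.image e) := rfl

lemma transfer_card (e : V ≃ W) (P : Finpartition (univ : Finset V)) :
    (transfer e P).parts.card = P.parts.card :=
  Finset.card_image_of_injective _ (Finset.image_injective e.injective)

lemma transfer_transfer (e : V ≃ W) (P : Finpartition (univ : Finset V)) :
    transfer e.symm (transfer e P) = P := by
  apply Finpartition.ext
  show (P.parts.image _).image _ = P.parts
  rw [Finset.image_image]
  calc P.parts.image ((fun t => Finset.image (⇑e.symm) t) ∘ fun t => t.image e)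
      = P.parts.image id := Finset.image_congr (fun t _ => by
        simp [Function.comp, Finset.image_image])
    _ = P.parts := Finset.image_id

lemma transfer_stable (e : V ≃ W) {G : SimpleGraph V} {H : SimpleGraph W}
    (h : ∀ a b, G.Adj a b ↔ H.Adj (e a) (e b)) {P : Finpartition (univ : Finset V)}
    (hP : IsStablePartition G P) : IsStablePartition H (transfer e P) := by
  intro t ht x hx y hy
  obtain ⟨s, hs, rfl⟩ := Finset.mem_image.1 ht
  obtain ⟨x0, hx0, rfl⟩ := Finset.mem_image.1 hx
  obtain ⟨y0, hy0, rfl⟩ := Finset.mem_image.1 hy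
  exact fun hadj => hP s hs x0 hx0 y0 hy0 ((h x0 y0).2 hadj)

lemma adj_symm_iff (e : V ≃ W) {G : SimpleGraph V} {H : SimpleGraph W}
    (h : ∀ a b, G.Adj a b ↔ H.Adj (e a) (e b)) :
    ∀ a b, H.Adj a b ↔ G.Adj (e.symm a) (e.symm b) := by
  intro a b
  rw [h (e.symm a) (e.symm b), e.apply_symm_apply, e.apply_symm_apply]

lemma colB_iso (e : V ≃ W) {G : SimpleGraph V} {H : SimpleGraph W}
    (h : ∀ a b, G.Adj a b ↔ H.Adj (e a) (e b)) : colB G = colB H := by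
  show (univ.filter (IsStablePartition G)).card = (univ.filter (IsStablePartition H)).card
  refine Finset.card_nbij' (transfer e) (transfer e.symm) ?_ ?_ ?_ ?_
  · intro P hP
    exact mem_filter.2 ⟨mem_univ _, transfer_stable e h (mem_filter.1 hP).2⟩
  · intro P hP
    exact mem_filter.2 ⟨mem_univ _,
      transfer_stable e.symm (adj_symm_iff e h) (mem_filter.1 hP).2⟩
  · intro P _
    exact transfer_transfer e P
  · intro P _
    have := transfer_transfer e.symm P
    rwa [Equiv.symm_symm] at this
  
lemma colT_iso (e : V ≃ W) {G : SimpleGraph V} {H : SimpleGraph W}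
    (h : ∀ a b, G.Adj a b ↔ H.Adj (e a) (e b)) : colT G = colT H := by
  show ∑ P ∈ univ.filter (IsStablePartition G), P.parts.card =
    ∑ P ∈ univ.filter (IsStablePartition H), P.parts.card
  refine Finset.sum_nbij' (transfer e) (transfer e.symm) ?_ ?_ ?_ ?_ ?_
  · intro P hP
    exact mem_filter.2 ⟨mem_univ _, transfer_stable e h (mem_filter.1 hP).2⟩
  · intro P hP
    exact mem_filter.2 ⟨mem_univ _,
      transfer_stable e.symm (adj_symm_iff e h) (mem_filter.1 hP).2⟩
  · intro P _
    exact transfer_transfer e P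
  · intro P _
    have := transfer_transfer e.symm P
    rwa [Equiv.symm_symm] at this
  · intro P _
    exact (transfer_card e P).symm

lemma colA_iso (e : V ≃ W) {G : SimpleGraph V} {H : SimpleGraph W}
    (h : ∀ a b, G.Adj a b ↔ H.Adj (e a) (e b)) : colA G = colA H := by
  show (colT G : ℚ) / (colB G : ℚ) = (colT H : ℚ) / (colB H : ℚ)
  rw [colB_iso e h, colT_iso e h]

end part7

section part8

lemma unionIsolated_adj {V' : Type*} {G : SimpleGraph V'} {q : ℕ} {x y : V' ⊕ Fin q} :
    (unionIsolated G q).Adj x y ↔ ∃ a b, x = Sum.inl a ∧ y = Sum.inl b ∧ G.Adj a b := by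
  rw [unionIsolated, SimpleGraph.fromRel_adj]
  constructor
  · rintro ⟨hne, (⟨a, b, rfl, rfl, h⟩ | ⟨a, b, hy, hx, h⟩)⟩
    · exact ⟨a, b, rfl, rfl, h⟩
    · subst hy; subst hx
      exact ⟨b, a, rfl, rfl, h.symm⟩
  · rintro ⟨a, b, rfl, rfl, h⟩
    refine ⟨?_, Or.inl ⟨a, b, rfl, rfl, h⟩⟩
    simp only [ne_eq, Sum.inl.injEq]
    exact G.ne_of_adj h

lemma unionIsolated_adj_inl_inl {V' : Type*} {G : SimpleGraph V'} {q : ℕ} {a b : V'} :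
    (unionIsolated G q).Adj (Sum.inl a) (Sum.inl b) ↔ G.Adj a b := by
  rw [unionIsolated_adj]
  constructor
  · rintro ⟨a', b', ha, hb, h⟩
    rw [Sum.inl.injEq] at ha hb
    subst ha; subst hb; exact h
  · intro h
    exact ⟨a, b, rfl, rfl, h⟩

lemma unionIsolated_not_adj_inr {V' : Type*} {G : SimpleGraph V'} {q : ℕ} {j : Fin q}
    (x : V' ⊕ Fin q) : ¬ (unionIsolated G q).Adj (Sum.inr j) x := by
  rw [unionIsolated_adj]
  rintro ⟨a, b, h, -, -⟩
  exact Sum.inr_ne_inl h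

end part8

section part9
variable {n p : ℕ}

/-- The vertex equivalence `Fin (n+1) ⊕ Fin p ≃ Fin n ⊕ Fin (p+1)`. -/
def vequiv (n p : ℕ) (hn : 1 ≤ n) : (Fin (n+1) ⊕ Fin p) ≃ (Fin n ⊕ Fin (p+1)) where
  toFun x := match x with
    | Sum.inl i => if h : (i : ℕ) < n then Sum.inl ⟨i, h⟩ else Sum.inr ⟨p, Nat.lt_succ_self p⟩
    | Sum.inr j => Sum.inr ⟨j, Nat.lt_succ_of_lt j.isLt⟩
  invFun x := match x with
    | Sum.inl a => Sum.inl ⟨a, Nat.lt_succ_of_lt a.isLt⟩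
    | Sum.inr b => if h : (b : ℕ) < p then Sum.inr ⟨b, h⟩
        else Sum.inl ⟨n, Nat.lt_succ_self n⟩
  left_inv x := by
    rcases x with i | j
    · by_cases h : (i : ℕ) < n
      · simp [h]
      · have hi : (i : ℕ) = n := by omega
        simp only [dif_neg h]
        rw [dif_neg (by omega : ¬ (p : ℕ) < p)]
        simp only [Sum.inl.injEq]
        exact Fin.ext (by simp [hi])
    · simp only []
      rw [dif_pos j.isLt]
  right_inv x := by
    rcases x with a | b
    · simp only []
      rw [dif_pos a.isLt]
    · by_cases h : (b : ℕ) < p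
      · simp [h]
      · have hb : (b : ℕ) = p := by omega
        simp only [dif_neg h]
        rw [dif_neg (by omega : ¬ (n : ℕ) < n)]
        simp only [Sum.inr.injEq]
        exact Fin.ext (by simp [hb])

end part9

section part10

lemma vequiv_inl_lt {n p : ℕ} (hn : 1 ≤ n) {i : Fin (n+1)} (h : (i : ℕ) < n) :
    vequiv n p hn (Sum.inl i) = Sum.inl ⟨i, h⟩ := by
  simp [vequiv, h]

lemma vequiv_inl_last {n p : ℕ} (hn : 1 ≤ n) {i : Fin (n+1)} (h : ¬ (i : ℕ) < n) :
    vequiv n p hn (Sum.inl i) = Sum.inr ⟨p, Nat.lt_succ_self p⟩ := by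
  simp [vequiv, h]

lemma vequiv_inr {n p : ℕ} (hn : 1 ≤ n) (j : Fin p) :
    vequiv n p hn (Sum.inr j) = Sum.inr ⟨j, Nat.lt_succ_of_lt j.isLt⟩ := by
  simp [vequiv]

lemma adj_compat (n p : ℕ) (hn : 1 ≤ n) (x y : Fin (n+1) ⊕ Fin p) :
    (unionIsolated (pathGraph (n+1)) p).Adj x y ↔
    (unionIsolated (pathGraph n) (p+1) ⊔
      fromEdgeSet {s((Sum.inl ⟨n-1, by omega⟩ : Fin n ⊕ Fin (p+1)),
                     (Sum.inr ⟨p, Nat.lt_succ_self p⟩ : Fin n ⊕ Fin (p+1)))}).Adj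
      (vequiv n p hn x) (vequiv n p hn y) := by
  have huv : (Sum.inl ⟨n-1, by omega⟩ : Fin n ⊕ Fin (p+1)) ≠
      Sum.inr ⟨p, Nat.lt_succ_self p⟩ := by simp
  rcases x with i | j <;> rcases y with i' | j'
  · rw [unionIsolated_adj_inl_inl, pathGraph_adj]
    by_cases h : (i : ℕ) < n <;> by_cases h' : (i' : ℕ) < n
    · rw [vequiv_inl_lt hn h, vequiv_inl_lt hn h', sup_edge_adj huv,
        unionIsolated_adj_inl_inl, pathGraph_adj]
      simp only [Sum.inl.injEq, Sum.inr.injEq, reduceCtorEq, and_false, false_and, or_false]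
    · rw [vequiv_inl_lt hn h, vequiv_inl_last hn h', sup_edge_adj huv]
      have h1 : ¬ (unionIsolated (pathGraph n) (p+1)).Adj (Sum.inl ⟨i, h⟩)
          (Sum.inr ⟨p, Nat.lt_succ_self p⟩) := by
        rw [unionIsolated_adj]
        rintro ⟨a, b, -, hb, -⟩
        exact Sum.inr_ne_inl hb
      simp only [h1, false_or, Sum.inl.injEq, Sum.inr.injEq, reduceCtorEq, false_and, and_false,
        or_false, and_true, Fin.mk.injEq]
      omega
    · rw [vequiv_inl_last hn h, vequiv_inl_lt hn h', sup_edge_adj huv]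
      have h1 : ¬ (unionIsolated (pathGraph n) (p+1)).Adj (Sum.inr ⟨p, Nat.lt_succ_self p⟩)
          (Sum.inl ⟨i', h'⟩) := unionIsolated_not_adj_inr _
      simp only [h1, false_or, Sum.inl.injEq, Sum.inr.injEq, reduceCtorEq, false_and, and_false,
        or_false, true_and, and_true, Fin.mk.injEq]
      omega
    · rw [vequiv_inl_last hn h, vequiv_inl_last hn h', sup_edge_adj huv]
      have h1 : ¬ (unionIsolated (pathGraph n) (p+1)).Adj (Sum.inr ⟨p, Nat.lt_succ_self p⟩)
          (Sum.inr ⟨p, Nat.lt_succ_self p⟩) := unionIsolated_not_adj_inr _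
      simp only [h1, false_or, Sum.inl.injEq, Sum.inr.injEq, reduceCtorEq, false_and, and_false,
        or_false]
      have hi := i.isLt
      have hi' := i'.isLt
      rw [iff_false]
      rintro (h2 | h2) <;> omega
  · have h0 : ¬ (unionIsolated (pathGraph (n+1)) p).Adj (Sum.inl i) (Sum.inr j') := by
      rw [unionIsolated_adj]
      rintro ⟨a, b, -, hb, -⟩
      exact Sum.inr_ne_inl hb
    rw [vequiv_inr hn j']
    by_cases h : (i : ℕ) < n
    · rw [vequiv_inl_lt hn h, sup_edge_adj huv]
      have h1 : ¬ (unionIsolated (pathGraph n) (p+1)).Adj (Sum.inl ⟨i, h⟩)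
          (Sum.inr ⟨(j' : ℕ), Nat.lt_succ_of_lt j'.isLt⟩) := by
        rw [unionIsolated_adj]
        rintro ⟨a, b, -, hb, -⟩
        exact Sum.inr_ne_inl hb
      simp only [h0, h1, false_or, Sum.inl.injEq, Sum.inr.injEq, reduceCtorEq, false_and,
        and_false, or_false, false_iff, Fin.mk.injEq, and_true]
      omega
    · rw [vequiv_inl_last hn h, sup_edge_adj huv]
      have h1 : ¬ (unionIsolated (pathGraph n) (p+1)).Adj (Sum.inr ⟨p, Nat.lt_succ_self p⟩)
          (Sum.inr ⟨(j' : ℕ), Nat.lt_succ_of_lt j'.isLt⟩) := unionIsolated_not_adj_inr _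
      simp only [h0, h1, false_or, Sum.inl.injEq, Sum.inr.injEq, reduceCtorEq, false_and,
        and_false, or_false, false_iff]
  · have h0 : ¬ (unionIsolated (pathGraph (n+1)) p).Adj (Sum.inr j) (Sum.inl i') :=
      unionIsolated_not_adj_inr _
    rw [vequiv_inr hn j]
    by_cases h : (i' : ℕ) < n
    · rw [vequiv_inl_lt hn h, sup_edge_adj huv]
      have h1 : ¬ (unionIsolated (pathGraph n) (p+1)).Adj
          (Sum.inr ⟨(j : ℕ), Nat.lt_succ_of_lt j.isLt⟩) (Sum.inl ⟨i', h⟩) :=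
        unionIsolated_not_adj_inr _
      simp only [h0, h1, false_or, Sum.inl.injEq, Sum.inr.injEq, reduceCtorEq, false_and,
        and_false, or_false, false_iff, Fin.mk.injEq, true_and]
      omega
    · rw [vequiv_inl_last hn h, sup_edge_adj huv]
      have h1 : ¬ (unionIsolated (pathGraph n) (p+1)).Adj
          (Sum.inr ⟨(j : ℕ), Nat.lt_succ_of_lt j.isLt⟩) (Sum.inr ⟨p, Nat.lt_succ_self p⟩) :=
        unionIsolated_not_adj_inr _
      simp only [h0, h1, false_or, Sum.inl.injEq, Sum.inr.injEq, reduceCtorEq, false_and,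
        and_false, or_false, false_iff]
  · have h0 : ¬ (unionIsolated (pathGraph (n+1)) p).Adj (Sum.inr j) (Sum.inr j') :=
      unionIsolated_not_adj_inr _
    rw [vequiv_inr hn j, vequiv_inr hn j', sup_edge_adj huv]
    have h1 : ¬ (unionIsolated (pathGraph n) (p+1)).Adj
        (Sum.inr ⟨(j : ℕ), Nat.lt_succ_of_lt j.isLt⟩)
        (Sum.inr ⟨(j' : ℕ), Nat.lt_succ_of_lt j'.isLt⟩) := unionIsolated_not_adj_inr _
    simp only [h0, h1, false_or, Sum.inl.injEq, Sum.inr.injEq, reduceCtorEq, false_and,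
      and_false, or_false, false_iff]

end part10

end Stmt7

/-- For all `n ≥ 1` and `p ≥ 0`, `A(P_n ∪ (p+1)K₁) < A(P_{n+1} ∪ pK₁)`. -/
theorem stmt_7 (n p : ℕ) (hn : 1 ≤ n) :
    colA (unionIsolated (pathGraph n) (p + 1)) < colA (unionIsolated (pathGraph (n + 1)) p) := by
  have huv : (Sum.inl ⟨n-1, by omega⟩ : Fin n ⊕ Fin (p+1)) ≠
      Sum.inr ⟨p, Nat.lt_succ_self p⟩ := by simp
  have hv : ∀ x, ¬ (unionIsolated (pathGraph n) (p+1)).Adj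
      (Sum.inr ⟨p, Nat.lt_succ_self p⟩ : Fin n ⊕ Fin (p+1)) x := fun x =>
    Stmt7.unionIsolated_not_adj_inr x
  have h2 : colA (unionIsolated (pathGraph (n+1)) p) =
      colA (unionIsolated (pathGraph n) (p+1) ⊔
        SimpleGraph.fromEdgeSet {s((Sum.inl ⟨n-1, by omega⟩ : Fin n ⊕ Fin (p+1)),
          (Sum.inr ⟨p, Nat.lt_succ_self p⟩ : Fin n ⊕ Fin (p+1)))}) :=
    Stmt7.colA_iso (Stmt7.vequiv n p hn) (Stmt7.adj_compat n p hn)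
  rw [h2]
  exact Stmt7.colA_lt_sup_edge _ _ _ huv hv
end
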